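/- arXiv:1409.3973 — 17 statements merged into one kernel-verified Lean document; each statement's English description precedes it below -/
import Mathlib

section
/- Let R be a ring with identity and I an ideal of R. Then I is square stable (i.e., whenever aR + bR = R with a ∈ I, b ∈ R, there exists y ∈ R with a² + by a unit) if and only if for every a ∈ I and every r ∈ R there exists x ∈ R such that a² + (1 - ar)x is a unit of R. -/
def SquareStable {R : Type*} [Ring R] (I : TwoSidedIdeal R) : Prop :=
  ∀ a ∈ I, ∀ b : R, (∃ x y : R, a * x + b * y = 1) → ∃ y : R, IsUnit (a ^ 2 + b * y)

def SquareStableRangeOne (R : Type*) [Ring R] : Prop :=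
  ∀ a b : R, (∃ x y : R, a * x + b * y = 1) → ∃ y : R, IsUnit (a ^ 2 + b * y)

def ExchangeIdeal {R : Type*} [Ring R] (I : TwoSidedIdeal R) : Prop :=
  ∀ a ∈ I, ∃ e : R, IsIdempotentElem e ∧ (∃ x : R, e = a * x) ∧ (∃ y : R, 1 - e = (1 - a) * y)

def RegularIdeal {R : Type*} [Ring R] (I : TwoSidedIdeal R) : Prop :=
  ∀ a ∈ I, ∃ x : R, a = a * x * a

def IsRegularElem {R : Type*} [Ring R] (a : R) : Prop := ∃ x : R, a = a * x * a

def IsStronglyRegularElem {R : Type*} [Ring R] (a : R) : Prop :=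
  (∃ x : R, a = a ^ 2 * x) ∧ (∃ y : R, a = y * a ^ 2)


theorem stmt0 {R : Type*} [Ring R] (I : TwoSidedIdeal R) :
    SquareStable I ↔ ∀ a ∈ I, ∀ r : R, ∃ x : R, IsUnit (a ^ 2 + (1 - a * r) * x) := by
  constructor
  · intro h a ha r
    obtain ⟨y, hy⟩ := h a ha (1 - a * r) ⟨r, 1, by noncomm_ring⟩
    exact ⟨y, hy⟩
  · rintro h a ha b ⟨x, y, hxy⟩
    obtain ⟨x', hx'⟩ := h a ha x
    refine ⟨y * x', ?_⟩
    have : 1 - a * x = b * y := by rw [sub_eq_iff_eq_add, add_comm]; exact hxy.symm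
    rw [this] at hx'
    rwa [mul_assoc] at hx'
end

section
/- The ring ℤ of integers has no nonzero square stable ideal. More precisely, if n ≥ 2 then the ideal nℤ of ℤ is not square stable. -/
lemma key (m : ℤ) (hm : 2 ≤ m) (y : ℤ) : ¬ IsUnit (m ^ 2 + (m ^ 2 + m + 1) * y) := by
  intro hu
  rw [Int.isUnit_iff] at hu
  rcases hu with h | h
  · have h2 : (m ^ 2 + m + 1) * (y + 1) = m + 2 := by linear_combination h
    rcases le_or_gt (y + 1) 0 with hy | hy
    · nlinarith
    · nlinarith
  · have h2 : (m ^ 2 + m + 1) * (y + 1) = m := by linear_combination h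
    rcases le_or_gt (y + 1) 0 with hy | hy
    · nlinarith
    · nlinarith

lemma key2 (m : ℤ) (hm : 2 ≤ m) {I : TwoSidedIdeal ℤ} (hmI : m ∈ I) : ¬ SquareStable I := by
  intro hS
  obtain ⟨y, hy⟩ := hS m hmI (m ^ 2 + m + 1) ⟨-(m + 1), 1, by ring⟩
  exact key m hm y hy

theorem stmt1 : (∀ I : TwoSidedIdeal ℤ, SquareStable I → I = ⊥) ∧
    (∀ n : ℤ, 2 ≤ n → ¬ SquareStable (TwoSidedIdeal.span {n})) := by
  constructor
  · intro I hS
    by_contra hne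
    have : ∃ a ∈ I, a ≠ 0 := by
      by_contra h
      push_neg at h
      exact hne (le_antisymm (fun x hx => (TwoSidedIdeal.mem_bot ℤ).2 (h x hx)) bot_le)
    obtain ⟨a, haI, ha0⟩ := this
    have h4 : (4 * a) * a ∈ I := I.mul_mem_left _ _ haI
    have hge : 2 ≤ 4 * a * a := by nlinarith [sq_nonneg a, Int.one_le_abs ha0, sq_abs a]
    exact key2 _ hge h4 hS
  · intro n hn
    exact key2 n hn (TwoSidedIdeal.subset_span rfl)
end

section
/- The formal power series ring ℤ[[x]] does not have square stable range one. -/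
theorem stmt4 : ¬ SquareStableRangeOne (PowerSeries ℤ) := by
  intro h
  obtain ⟨y, hy⟩ := h 2 7 ⟨4, -1, by ring⟩
  have := hy.map (PowerSeries.constantCoeff (R := ℤ))
  simp only [map_add, map_pow, map_mul, map_ofNat] at this
  rw [Int.isUnit_iff] at this
  omega
end

section
/- Let I be a square stable ideal of a ring R and a ∈ I. If a² ∈ J(R), then a ∈ J(R). -/
/-- Swap lemma: `1 - x*y` unit implies `1 - y*x` unit. -/
lemma isUnit_one_sub_swap {R : Type*} [Ring R] (x y : R) (h : IsUnit (1 - x * y)) :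
    IsUnit (1 - y * x) := by
  refine ⟨⟨1 - y * x, 1 + y * h.unit.inv * x, ?_, ?_⟩, rfl⟩
  · calc
      (1 - y * x) * (1 + y * (IsUnit.unit h).inv * x) =
          1 - y * x + y * ((1 - x * y) * h.unit.inv) * x := by noncomm_ring
      _ = 1 := by simp
  · calc
      (1 + y * (IsUnit.unit h).inv * x) * (1 - y * x) =
          1 - y * x + y * (h.unit.inv * (1 - x * y)) * x := by noncomm_ring
      _ = 1 := by simp

/-- An element of the Jacobson radical: `y * x + 1` is a unit. -/
lemma jac_unit {R : Type*} [Ring R] {x : R} (hx : x ∈ (⊥ : TwoSidedIdeal R).jacobson)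
    (y : R) : IsUnit (y * x + 1) := by
  rw [TwoSidedIdeal.mem_jacobson_iff] at hx
  obtain ⟨z, hz⟩ := hx y
  rw [TwoSidedIdeal.mem_bot, sub_eq_zero] at hz
  have hz' : z * (y * x + 1) = 1 := by rw [mul_add, mul_one, ← mul_assoc, hz]
  have h1 : z = 1 - z * y * x := eq_sub_of_add_eq' hz
  have hz2 : (-(z * y)) * x + 1 = z := by
    conv_rhs => rw [h1]
    noncomm_ring
  obtain ⟨w, hw⟩ := hx (-(z * y))
  rw [TwoSidedIdeal.mem_bot, sub_eq_zero] at hw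
  have hw' : w * z = 1 := by
    rw [← hz2, mul_add, mul_one, ← mul_assoc, hw]
  have hweq : w = y * x + 1 := by
    calc w = w * (z * (y * x + 1)) := by rw [hz', mul_one]
    _ = (w * z) * (y * x + 1) := by rw [mul_assoc]
    _ = y * x + 1 := by rw [hw', one_mul]
  exact ⟨⟨y * x + 1, z, by rw [← hweq, hw'], hz'⟩, rfl⟩

theorem stmt6 {R : Type*} [Ring R] (I : TwoSidedIdeal R) (hI : SquareStable I)
    (a : R) (ha : a ∈ I) (h : a ^ 2 ∈ (⊥ : TwoSidedIdeal R).jacobson) :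
    a ∈ (⊥ : TwoSidedIdeal R).jacobson := by
  -- Step 1: for every r, 1 - a * r has a right inverse.
  have H : ∀ r : R, ∃ t : R, (1 - a * r) * t = 1 := by
    intro r
    obtain ⟨y, hy⟩ := hI a ha (1 - a * r) ⟨r, 1, by noncomm_ring⟩
    obtain ⟨u, hu⟩ := hy
    have huv : (↑u⁻¹ : R) * (a ^ 2 + (1 - a * r) * y) = 1 := by
      rw [← hu]; exact u.inv_mul
    have k1 : IsUnit (1 - (↑u⁻¹ : R) * a ^ 2) := by
      have := jac_unit h (-(↑u⁻¹ : R))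
      rwa [show (-(↑u⁻¹ : R)) * a ^ 2 + 1 = 1 - (↑u⁻¹ : R) * a ^ 2 by noncomm_ring] at this
    have k2 : IsUnit (1 - a ^ 2 * (↑u⁻¹ : R)) := isUnit_one_sub_swap _ _ k1
    have key : IsUnit ((1 - a * r) * y) := by
      have heq : (1 - a ^ 2 * (↑u⁻¹ : R)) * (a ^ 2 + (1 - a * r) * y) = (1 - a * r) * y := by
        calc (1 - a ^ 2 * (↑u⁻¹ : R)) * (a ^ 2 + (1 - a * r) * y)
            = (a ^ 2 + (1 - a * r) * y) - a ^ 2 * ((↑u⁻¹ : R) * (a ^ 2 + (1 - a * r) * y)) := by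
              noncomm_ring
        _ = (1 - a * r) * y := by rw [huv]; noncomm_ring
      rw [← heq]
      exact k2.mul ⟨u, hu⟩
    obtain ⟨v, hv⟩ := key
    refine ⟨y * (↑v⁻¹ : R), ?_⟩
    rw [← mul_assoc, ← hv]
    exact v.mul_inv
  -- Step 2: upgrade to units.
  have HU : ∀ r : R, IsUnit (1 - a * r) := by
    intro r
    obtain ⟨t, ht⟩ := H r
    have h0 : t - a * r * t = 1 := by rw [← ht]; noncomm_ring
    have h0' : t = 1 + a * r * t := sub_eq_iff_eq_add.mp h0
    have ht2 : t = 1 - a * (-(r * t)) := by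
      conv_lhs => rw [h0']
      noncomm_ring
    obtain ⟨s, hs⟩ := H (-(r * t))
    rw [← ht2] at hs
    have hteq : 1 - a * r = s := by
      calc 1 - a * r = (1 - a * r) * (t * s) := by rw [hs, mul_one]
      _ = ((1 - a * r) * t) * s := by rw [mul_assoc]
      _ = s := by rw [ht, one_mul]
    exact ⟨⟨1 - a * r, t, ht, by rw [hteq]; exact hs⟩, rfl⟩
  -- Step 3: conclude membership in the Jacobson radical.
  rw [TwoSidedIdeal.mem_jacobson_iff]
  intro y
  have hu : IsUnit (y * a + 1) := by
    have h2 : IsUnit (1 - a * (-y)) := HU (-y)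
    have h3 : IsUnit (1 - (-y) * a) := isUnit_one_sub_swap a (-y) h2
    rwa [show (1 : R) - (-y) * a = y * a + 1 by noncomm_ring] at h3
  obtain ⟨v, hv⟩ := hu
  refine ⟨(↑v⁻¹ : R), ?_⟩
  rw [TwoSidedIdeal.mem_bot, sub_eq_zero]
  calc (↑v⁻¹ : R) * y * a + (↑v⁻¹ : R) = (↑v⁻¹ : R) * (y * a + 1) := by noncomm_ring
  _ = 1 := by rw [← hv]; exact v.inv_mul
end

section
/- Let R be a ring and suppose ax + b = 1 with a, x, b ∈ R. If a is unit-regular (i.e., a = aua for some unit u), then there exists y ∈ R such that a + by is a unit of R. -/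
theorem stmt7 {R : Type*} [Ring R] (a x b : R) (h : a * x + b = 1)
    (hu : ∃ u : Rˣ, a = a * u * a) : ∃ y : R, IsUnit (a + b * y) := by
  obtain ⟨u, hu⟩ := hu
  have hb : b = 1 - a * x := by rw [← h]; abel
  refine ⟨(↑u⁻¹ : R) * (1 - ↑u * a), ?_⟩
  set n : R := ↑u * a * (x * ↑u⁻¹ - 1) * (1 - ↑u * a) with hn
  have key : (1 - (u:R) * a) * ((u:R) * a) = 0 := by
    have h1 : (u:R) * a * ((u:R) * a) = (u:R) * (a * ↑u * a) := by noncomm_ring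
    rw [sub_mul, one_mul, h1, ← hu, sub_self]
  have hnn : n * n = 0 := by
    have : n * n = (↑u * a * (x * ↑u⁻¹ - 1)) * ((1 - ↑u * a) * (↑u * a)) *
        ((x * ↑u⁻¹ - 1) * (1 - ↑u * a)) := by rw [hn]; noncomm_ring
    rw [this, key, mul_zero, zero_mul]
  have hun : IsUnit (1 - n) :=
    ⟨⟨1 - n, 1 + n, by rw [show (1-n)*(1+n) = 1 - n*n by noncomm_ring, hnn, sub_zero],
      by rw [show (1+n)*(1-n) = 1 - n*n by noncomm_ring, hnn, sub_zero]⟩, rfl⟩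
  have heq : (u:R) * (a + b * ((↑u⁻¹ : R) * (1 - ↑u * a))) = 1 - n := by
    have huu : (u:R) * ↑u⁻¹ = 1 := u.mul_inv
    have haua : a * ↑u * a = a := hu.symm
    rw [hb, hn]
    calc (u:R) * (a + (1 - a * x) * (↑u⁻¹ * (1 - ↑u * a)))
        = ↑u * a + (↑u * ↑u⁻¹) * (1 - ↑u * a) - ↑u * (a * x * (↑u⁻¹ * (1 - ↑u * a))) := by
          noncomm_ring
      _ = 1 - ↑u * a * (x * ↑u⁻¹ - 1) * (1 - ↑u * a) := by
          rw [huu, one_mul]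
          have : (↑u : R) * a * (x * ↑u⁻¹ - 1) * (1 - ↑u * a)
              = ↑u * (a * x * (↑u⁻¹ * (1 - ↑u * a))) - (↑u * a) * (1 - ↑u * a) := by noncomm_ring
          rw [this]
          have h2 : ((u:R) * a) * (1 - ↑u * a) = ↑u * a - ↑u * (a * ↑u * a) := by noncomm_ring
          rw [h2, haua]
          abel
  have : a + b * ((↑u⁻¹ : R) * (1 - ↑u * a)) = ↑u⁻¹ * (1 - n) := by
    rw [← heq, ← mul_assoc (↑u⁻¹ : R) (↑u : R), u.inv_mul, one_mul]
  rw [this]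
  exact (u⁻¹.isUnit).mul hun
end

section
/- Let I be an exchange ideal of a ring R. Then I is square stable if and only if for every a ∈ I, a² ∈ J(R) implies a ∈ J(R). -/
section Aux

variable {R : Type*} [Ring R]

private lemma ss8_mem_jac_iff (x : R) :
    x ∈ (⊥ : TwoSidedIdeal R).jacobson ↔ ∀ y : R, ∃ z : R, z * (1 + y * x) = 1 := by
  rw [TwoSidedIdeal.mem_jacobson_iff]
  constructor
  · intro h y
    obtain ⟨z, hz⟩ := h y
    rw [TwoSidedIdeal.mem_bot, sub_eq_zero] at hz
    refine ⟨z, ?_⟩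
    rw [mul_add, mul_one, ← mul_assoc, add_comm]
    exact hz
  · intro h y
    obtain ⟨z, hz⟩ := h y
    refine ⟨z, ?_⟩
    rw [TwoSidedIdeal.mem_bot, sub_eq_zero]
    rw [mul_add, mul_one, ← mul_assoc, add_comm] at hz
    exact hz

private lemma ss8_one_add_unit (j : R) (hj : j ∈ (⊥ : TwoSidedIdeal R).jacobson) :
    IsUnit (1 + j) := by
  obtain ⟨z, hz⟩ := (ss8_mem_jac_iff j).1 hj 1
  rw [one_mul] at hz
  have hz0 : z = 1 - z * j := by
    have h : z + z * j = 1 := by rw [← mul_one z, mul_assoc, one_mul, ← mul_add]; exact hz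
    rw [eq_sub_iff_add_eq]; exact h
  have hz' : z = 1 + -(z * j) := by rw [← sub_eq_add_neg]; exact hz0
  obtain ⟨w, hw⟩ := (ss8_mem_jac_iff (-(z * j))).1
    ((⊥ : TwoSidedIdeal R).jacobson.neg_mem ((⊥ : TwoSidedIdeal R).jacobson.mul_mem_left z j hj)) 1
  rw [one_mul, ← hz'] at hw
  have h1j : 1 + j = w := by
    calc 1 + j = (w * z) * (1 + j) := by rw [hw, one_mul]
    _ = w * (z * (1 + j)) := by rw [mul_assoc]
    _ = w := by rw [hz, mul_one]
  exact ⟨⟨1 + j, z, by rw [h1j]; exact hw, hz⟩, rfl⟩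

private lemma ss8_unit_add (u j : R) (hu : IsUnit u) (hj : j ∈ (⊥ : TwoSidedIdeal R).jacobson) :
    IsUnit (u + j) := by
  obtain ⟨v, hv⟩ := hu
  have h : u + j = ↑v * (1 + ↑v⁻¹ * j) := by
    rw [mul_add, mul_one, ← mul_assoc, Units.mul_inv, one_mul, hv]
  rw [h]
  exact v.isUnit.mul (ss8_one_add_unit _ ((⊥ : TwoSidedIdeal R).jacobson.mul_mem_left _ j hj))

private lemma ss8_unit_of_sub_one (a v : R)
    (h1 : a * v - 1 ∈ (⊥ : TwoSidedIdeal R).jacobson)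
    (h2 : v * a - 1 ∈ (⊥ : TwoSidedIdeal R).jacobson) : IsUnit a := by
  have hu1 : IsUnit (a * v) := by
    have h := ss8_unit_add 1 (a * v - 1) isUnit_one h1
    rwa [add_comm, sub_add_cancel] at h
  have hu2 : IsUnit (v * a) := by
    have h := ss8_unit_add 1 (v * a - 1) isUnit_one h2
    rwa [add_comm, sub_add_cancel] at h
  obtain ⟨u1, hu1e⟩ := hu1
  obtain ⟨u2, hu2e⟩ := hu2
  have hr : a * (v * ↑u1⁻¹) = 1 := by rw [← mul_assoc, ← hu1e, Units.mul_inv]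
  have hl : (↑u2⁻¹ * v) * a = 1 := by rw [mul_assoc, ← hu2e, Units.inv_mul]
  have heq : (↑u2⁻¹ * v : R) = v * ↑u1⁻¹ := by
    calc (↑u2⁻¹ * v : R) = (↑u2⁻¹ * v) * (a * (v * ↑u1⁻¹)) := by rw [hr, mul_one]
    _ = ((↑u2⁻¹ * v) * a) * (v * ↑u1⁻¹) := by rw [← mul_assoc]
    _ = v * ↑u1⁻¹ := by rw [hl, one_mul]
  exact ⟨⟨a, v * ↑u1⁻¹, hr, by rw [← heq]; exact hl⟩, rfl⟩

private lemma ss8_swap_unit (a b : R) (h : IsUnit (1 - a * b)) : IsUnit (1 - b * a) := by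
  obtain ⟨u, hu⟩ := h
  set v := (↑u⁻¹ : R) with hvdef
  have h1 : (1 - a * b) * v = 1 := by rw [← hu]; exact u.mul_inv
  have h2 : v * (1 - a * b) = 1 := by rw [← hu]; exact u.inv_mul
  have hv1 : (a * b) * v = v - 1 := by
    have h' : v - (a * b) * v = 1 := by
      rw [← h1, sub_mul, one_mul]
    rw [sub_eq_iff_eq_add] at h'
    rw [eq_sub_iff_add_eq]
    conv_rhs => rw [h']
    rw [add_comm]
  have hv2 : v * (a * b) = v - 1 := by
    have h' : v - v * (a * b) = 1 := by
      rw [← h2, mul_sub, mul_one]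
    rw [sub_eq_iff_eq_add] at h'
    rw [eq_sub_iff_add_eq]
    conv_rhs => rw [h']
    rw [add_comm]
  refine ⟨⟨1 - b * a, 1 + b * v * a, ?_, ?_⟩, rfl⟩
  · calc (1 - b * a) * (1 + b * v * a)
        = 1 + b * v * a - b * a - b * ((a * b) * v) * a := by noncomm_ring
    _ = 1 + b * v * a - b * a - b * (v - 1) * a := by rw [hv1]
    _ = 1 := by noncomm_ring
  · calc (1 + b * v * a) * (1 - b * a)
        = 1 + b * v * a - b * a - b * (v * (a * b)) * a := by noncomm_ring
    _ = 1 + b * v * a - b * a - b * (v - 1) * a := by rw [hv2]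
    _ = 1 := by noncomm_ring

private lemma ss8_mem_of_right_inv (a : R)
    (h : ∀ x : R, ∃ u : R, (1 - a * x) * u = 1) :
    a ∈ (⊥ : TwoSidedIdeal R).jacobson := by
  have hunit : ∀ x : R, IsUnit (1 - a * x) := by
    intro x
    obtain ⟨u, hu⟩ := h x
    have h' : u - a * x * u = 1 := by
      rw [← hu, sub_mul, one_mul, mul_assoc]
    rw [sub_eq_iff_eq_add] at h'
    have hu' : u = 1 - a * (-(x * u)) := by
      rw [mul_neg, sub_neg_eq_add, ← mul_assoc]; exact h'
    obtain ⟨w, hw⟩ := h (-(x * u))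
    rw [← hu'] at hw
    have hw' : w = 1 - a * x := by
      calc w = ((1 - a * x) * u) * w := by rw [hu, one_mul]
      _ = (1 - a * x) * (u * w) := by rw [mul_assoc]
      _ = 1 - a * x := by rw [hw, mul_one]
    exact ⟨⟨1 - a * x, u, hu, by rw [← hw']; exact hw⟩, rfl⟩
  rw [ss8_mem_jac_iff]
  intro y
  have h2 : IsUnit (1 - (-y) * a) := ss8_swap_unit a (-y) (hunit (-y))
  rw [neg_mul, sub_neg_eq_add] at h2
  obtain ⟨u, hu⟩ := h2
  exact ⟨↑u⁻¹, by rw [← hu]; exact u.inv_mul⟩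

private lemma ss8_central (I : TwoSidedIdeal R)
    (hP : ∀ a ∈ I, a ^ 2 ∈ (⊥ : TwoSidedIdeal R).jacobson → a ∈ (⊥ : TwoSidedIdeal R).jacobson)
    (z : R) (hz : z ∈ I) (hzz : z * z - z ∈ (⊥ : TwoSidedIdeal R).jacobson) (r : R) :
    z * r - r * z ∈ (⊥ : TwoSidedIdeal R).jacobson := by
  set Jc := (⊥ : TwoSidedIdeal R).jacobson with hJc
  have hmid : z - z * z ∈ Jc := by
    rw [← neg_sub]; exact Jc.neg_mem hzz
  have hp : z * r - z * r * z ∈ Jc := by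
    apply hP _ (I.sub_mem (I.mul_mem_right z r hz) (I.mul_mem_right (z * r) z (I.mul_mem_right z r hz)))
    have hsq : (z * r - z * r * z) ^ 2 = (z * r) * (z - z * z) * (r - r * z) := by noncomm_ring
    rw [hsq]
    exact Jc.mul_mem_right _ _ (Jc.mul_mem_left _ _ hmid)
  have hq : r * z - z * r * z ∈ Jc := by
    apply hP _ (I.sub_mem (I.mul_mem_left r z hz) (I.mul_mem_right (z * r) z (I.mul_mem_right z r hz)))
    have hsq : (r * z - z * r * z) ^ 2 = (r - z * r) * (z - z * z) * (r * z) := by noncomm_ring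
    rw [hsq]
    exact Jc.mul_mem_right _ _ (Jc.mul_mem_left _ _ hmid)
  have hd : z * r - r * z = (z * r - z * r * z) - (r * z - z * r * z) := by abel
  rw [hd]
  exact Jc.sub_mem hp hq

end Aux

theorem stmt8 {R : Type*} [Ring R] (I : TwoSidedIdeal R) (hI : ExchangeIdeal I) :
    SquareStable I ↔
      ∀ a ∈ I, a ^ 2 ∈ (⊥ : TwoSidedIdeal R).jacobson → a ∈ (⊥ : TwoSidedIdeal R).jacobson := by
  constructor
  · intro hSS a ha h2
    apply ss8_mem_of_right_inv
    intro x
    obtain ⟨y, hy⟩ := hSS a ha (1 - a * x) ⟨x, 1, by noncomm_ring⟩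
    have hun : IsUnit ((1 - a * x) * y) := by
      have h := ss8_unit_add _ (-(a ^ 2)) hy ((⊥ : TwoSidedIdeal R).jacobson.neg_mem h2)
      rwa [add_comm (a ^ 2) _, add_neg_cancel_right] at h
    obtain ⟨u, hu⟩ := hun
    exact ⟨y * ↑u⁻¹, by rw [← mul_assoc, ← hu]; exact u.mul_inv⟩
  · rintro hP a ha b ⟨x, y, hxy⟩
    set Jc := (⊥ : TwoSidedIdeal R).jacobson with hJc
    obtain ⟨e, heId, ⟨s, hs⟩, ⟨t, ht⟩⟩ := hI (a * x) (I.mul_mem_right a x ha)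
    have he : e * e = e := heId
    have hbax : b * y = 1 - a * x := by
      rw [eq_sub_iff_add_eq, add_comm]; exact hxy
    have hbyt : b * y * t = 1 - e := by rw [ht, ← hbax]
    have heI : e ∈ I := by
      rw [hs]; exact I.mul_mem_right _ s (I.mul_mem_right a x ha)
    have hcen : ∀ r : R, e * r - r * e ∈ Jc :=
      ss8_central I hP e heI (by rw [he, sub_self]; exact Jc.zero_mem)
    -- quotient setup
    set π : R →+* Jc.ringCon.Quotient := RingCon.mk' Jc.ringCon with hπdef
    have hker : ∀ r : R, π r = 0 ↔ r ∈ Jc := by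
      intro r
      rw [show (0 : Jc.ringCon.Quotient) = π 0 from (map_zero _).symm]
      rw [show (π r = π 0) ↔ Jc.ringCon r 0 from RingCon.eq _]
      exact (TwoSidedIdeal.mem_iff Jc r).symm
    have hlift : ∀ r : R, IsUnit (π r) → IsUnit r := by
      intro r hr
      obtain ⟨u, hu⟩ := hr
      obtain ⟨v, hv⟩ : ∃ v : R, π v = ↑u⁻¹ := Quot.exists_rep _
      apply ss8_unit_of_sub_one r v
      · apply (hker _).1
        rw [map_sub, map_mul, map_one, hv, ← hu, Units.mul_inv, sub_self]
      · apply (hker _).1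
        rw [map_sub, map_mul, map_one, hv, ← hu, Units.inv_mul, sub_self]
    obtain ⟨E, hE⟩ : ∃ E, π e = E := ⟨_, rfl⟩
    obtain ⟨A, hA⟩ : ∃ A, π a = A := ⟨_, rfl⟩
    obtain ⟨X, hX⟩ : ∃ X, π (x * s) = X := ⟨_, rfl⟩
    obtain ⟨B, hB⟩ : ∃ B, π b = B := ⟨_, rfl⟩
    obtain ⟨Y, hY⟩ : ∃ Y, π y = Y := ⟨_, rfl⟩
    obtain ⟨T, hT⟩ : ∃ T, π t = T := ⟨_, rfl⟩
    have h1 : E * E = E := by rw [← hE, ← map_mul, he]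
    have hAX : A * X = E := by
      rw [← hA, ← hX, ← hE, ← map_mul, ← mul_assoc, ← hs]
    have hEA : E * A = A * E := by
      have h := (hker _).2 (hcen a)
      rwa [map_sub, sub_eq_zero, map_mul, map_mul, hE, hA] at h
    have hEX : E * X = X * E := by
      have h := (hker _).2 (hcen (x * s))
      rwa [map_sub, sub_eq_zero, map_mul π e (x * s), map_mul π (x * s) e, hE, hX] at h
    obtain ⟨c, hcdef⟩ : ∃ c : R, e * a * e = c := ⟨_, rfl⟩
    obtain ⟨d, hddef⟩ : ∃ d : R, e * (x * s) * e = d := ⟨_, rfl⟩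
    obtain ⟨C, hC0⟩ : ∃ C, π c = C := ⟨_, rfl⟩
    obtain ⟨D, hD0⟩ : ∃ D, π d = D := ⟨_, rfl⟩
    have hCAE : C = A * E := by
      calc C = (E * A) * E := by rw [← hC0, ← hcdef, map_mul, map_mul, hE, hA]
      _ = (A * E) * E := by rw [hEA]
      _ = A * (E * E) := by rw [mul_assoc]
      _ = A * E := by rw [h1]
    have hDXE : D = X * E := by
      calc D = (E * X) * E := by rw [← hD0, ← hddef, map_mul, map_mul, hE, hX]
      _ = (X * E) * E := by rw [hEX]
      _ = X * (E * E) := by rw [mul_assoc]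
      _ = X * E := by rw [h1]
    have hCE : C * E = C := by rw [hCAE, mul_assoc, h1]
    have hEC : E * C = C := by rw [hCAE, ← mul_assoc, hEA, mul_assoc, h1]
    have hDE : D * E = D := by rw [hDXE, mul_assoc, h1]
    have hED : E * D = D := by rw [hDXE, ← mul_assoc, hEX, mul_assoc, h1]
    have hCD : C * D = E := by
      calc C * D = (A * E) * (X * E) := by rw [hCAE, hDXE]
      _ = A * ((E * X) * E) := by noncomm_ring
      _ = A * ((X * E) * E) := by rw [hEX]
      _ = (A * X) * (E * E) := by noncomm_ring
      _ = E := by rw [h1, hAX, h1]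
    obtain ⟨f, hfdef⟩ : ∃ f : R, e - d * c = f := ⟨_, rfl⟩
    have hF : π f = E - D * C := by rw [← hfdef, map_sub, map_mul, hE, hD0, hC0]
    have hCF : C * (E - D * C) = 0 := by
      calc C * (E - D * C) = C * E - (C * D) * C := by noncomm_ring
      _ = C - E * C := by rw [hCE, hCD]
      _ = 0 := by rw [hEC, sub_self]
    have hcI : c ∈ I := by
      rw [← hcdef]; exact I.mul_mem_right _ e (I.mul_mem_left e a ha)
    have hfI : f ∈ I := by
      rw [← hfdef]; exact I.sub_mem heI (I.mul_mem_left d c hcI)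
    have hffJ : f * f - f ∈ Jc := by
      apply (hker _).1
      rw [map_sub, map_mul, hF]
      calc (E - D * C) * (E - D * C) - (E - D * C)
          = (E * E - (E * D) * C - D * (C * E) + D * ((C * D) * C)) - (E - D * C) := by
            noncomm_ring
      _ = (E - D * C - D * C + D * (E * C)) - (E - D * C) := by rw [h1, hED, hCE, hCD]
      _ = 0 := by rw [hEC]; abel
    have hfcen : ∀ r : R, f * r - r * f ∈ Jc := ss8_central I hP f hfI hffJ
    have hFC : (E - D * C) * C = 0 := by
      have h := (hker _).2 (hfcen c)
      rw [map_sub, sub_eq_zero, map_mul, map_mul, hF, hC0] at h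
      rw [h, hCF]
    have hDC : D * C = E := by
      have step1 : (E - D * C) * E = E - D * C := by
        calc (E - D * C) * E = E * E - D * (C * E) := by noncomm_ring
        _ = E - D * C := by rw [h1, hCE]
      have hFv : E - D * C = 0 := by
        calc E - D * C = (E - D * C) * E := step1.symm
        _ = (E - D * C) * (C * D) := by rw [hCD]
        _ = ((E - D * C) * C) * D := by rw [← mul_assoc]
        _ = 0 * D := by rw [hFC]
        _ = 0 := by rw [zero_mul]
      exact (sub_eq_zero.1 hFv).symm
    -- the final unit
    have hBYT : (B * Y) * T = 1 - E := by
      rw [← hB, ← hY, ← hT, ← map_mul, ← map_mul, hbyt, map_sub, map_one, hE]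
    have h1E : (1 - E) * (1 - E) = 1 - E := by
      calc (1 - E) * (1 - E) = 1 - E - E + E * E := by noncomm_ring
      _ = 1 - E := by rw [h1]; abel
    have hEAA : E * (A * A) = (A * A) * E := by
      rw [← mul_assoc, hEA, mul_assoc, hEA, ← mul_assoc]
    have hCC : C * C = (A * A) * E := by
      calc C * C = A * ((E * A) * E) := by rw [hCAE]; noncomm_ring
      _ = A * ((A * E) * E) := by rw [hEA]
      _ = (A * A) * (E * E) := by noncomm_ring
      _ = (A * A) * E := by rw [h1]
    have hval : π (a ^ 2 + b * (y * (t * ((1 - e) * (1 - a * a))))) = 1 - E + (A * A) * E := by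
      calc π (a ^ 2 + b * (y * (t * ((1 - e) * (1 - a * a)))))
          = A ^ 2 + B * (Y * (T * ((1 - E) * (1 - A * A)))) := by
            simp only [map_add, map_mul, map_pow, map_sub, map_one, hA, hB, hY, hT, hE]
      _ = A * A + ((B * Y) * T) * ((1 - E) * (1 - A * A)) := by noncomm_ring
      _ = A * A + ((1 - E) * (1 - E)) * (1 - A * A) := by rw [hBYT, ← mul_assoc]
      _ = A * A + (1 - E) * (1 - A * A) := by rw [h1E]
      _ = 1 - E + E * (A * A) := by noncomm_ring
      _ = 1 - E + (A * A) * E := by rw [hEAA]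
    have hVW : (1 - E + C * C) * (1 - E + D * D) = 1 := by
      calc (1 - E + C * C) * (1 - E + D * D)
          = (1 - E - E + E * E) + (D * D - (E * D) * D) + (C * C - C * (C * E))
              + C * ((C * D) * D) := by noncomm_ring
      _ = 1 := by rw [h1, hED, hCE, hCD, hED, hCD]; abel
    have hWV : (1 - E + D * D) * (1 - E + C * C) = 1 := by
      calc (1 - E + D * D) * (1 - E + C * C)
          = (1 - E - E + E * E) + (C * C - (E * C) * C) + (D * D - D * (D * E))
              + D * ((D * C) * C) := by noncomm_ring
      _ = 1 := by rw [h1, hEC, hDE, hDC, hEC, hDC]; abel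
    refine ⟨y * (t * ((1 - e) * (1 - a * a))), hlift _ ?_⟩
    rw [hval, ← hCC]
    exact ⟨⟨1 - E + C * C, 1 - E + D * D, hVW, hWV⟩, rfl⟩
end

section
/- Let I be an exchange ideal of a ring R. Then I is square stable if and only if for every a ∈ I and every idempotent e ∈ R, ae - ea ∈ J(R). -/
section JacobsonTools
variable {R : Type*} [Ring R]

private lemma swap_unit {x y : R} (h : IsUnit (1 + x * y)) : IsUnit (1 + y * x) := by
  obtain ⟨u, hu⟩ := h
  have hv1 : (1 + x * y) * ↑u⁻¹ = 1 := by rw [← hu]; exact u.mul_inv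
  have hv2 : (↑u⁻¹ : R) * (1 + x * y) = 1 := by rw [← hu]; exact u.inv_mul
  refine ⟨⟨1 + y * x, 1 - y * ↑u⁻¹ * x, ?_, ?_⟩, rfl⟩
  · have h1 : (1 + y * x) * (1 - y * ↑u⁻¹ * x)
        = 1 + y * x - y * ((1 + x * y) * ↑u⁻¹) * x := by noncomm_ring
    rw [h1, hv1]; noncomm_ring
  · have h1 : (1 - y * ↑u⁻¹ * x) * (1 + y * x)
        = 1 + y * x - y * (↑u⁻¹ * (1 + x * y)) * x := by noncomm_ring
    rw [h1, hv2]; noncomm_ring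

private lemma mem_jac_iff {x : R} :
    x ∈ (⊥ : TwoSidedIdeal R).jacobson ↔ ∀ y : R, IsUnit (1 + y * x) := by
  rw [TwoSidedIdeal.mem_jacobson_iff]
  constructor
  · intro h
    have hL : ∀ y : R, ∃ z : R, z * (1 + y * x) = 1 := by
      intro y
      obtain ⟨z, hz⟩ := h y
      rw [TwoSidedIdeal.mem_bot] at hz
      refine ⟨z, ?_⟩
      have h2 : z * y * x + z = 1 := sub_eq_zero.mp hz
      calc z * (1 + y * x) = z * y * x + z := by noncomm_ring
        _ = 1 := h2
    intro y
    obtain ⟨z, hz⟩ := hL y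
    have hz' : z = 1 + -(z * y) * x := by
      have h1 : z = z * (1 + y * x) - z * y * x := by noncomm_ring
      rw [hz] at h1
      exact h1.trans (by noncomm_ring)
    obtain ⟨z₂, hz₂⟩ := hL (-(z * y))
    rw [← hz'] at hz₂
    have hfin : 1 + y * x = z₂ := by
      calc 1 + y * x = z₂ * z * (1 + y * x) := by rw [hz₂, one_mul]
        _ = z₂ * (z * (1 + y * x)) := by rw [mul_assoc]
        _ = z₂ := by rw [hz, mul_one]
    exact ⟨⟨1 + y * x, z, by rw [hfin, hz₂], hz⟩, rfl⟩
  · intro h y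
    obtain ⟨u, hu⟩ := h y
    refine ⟨↑u⁻¹, ?_⟩
    rw [TwoSidedIdeal.mem_bot]
    have h2 : (↑u⁻¹ : R) * (1 + y * x) = 1 := by rw [← hu]; exact u.inv_mul
    calc ↑u⁻¹ * y * x + ↑u⁻¹ - 1 = ↑u⁻¹ * (1 + y * x) - 1 := by noncomm_ring
      _ = 0 := by rw [h2, sub_self]

private lemma mem_jac_of_right {x : R} (h : ∀ y : R, IsUnit (1 + x * y)) :
    x ∈ (⊥ : TwoSidedIdeal R).jacobson :=
  mem_jac_iff.mpr fun y => swap_unit (h y)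

private lemma unit_add_mem {u j : R} (hu : IsUnit u)
    (hj : j ∈ (⊥ : TwoSidedIdeal R).jacobson) : IsUnit (u + j) := by
  obtain ⟨v, hv⟩ := hu
  have h1 : IsUnit (1 + ↑v⁻¹ * j) := mem_jac_iff.mp hj _
  have huv : u * ↑v⁻¹ = 1 := by rw [← hv]; exact v.mul_inv
  have h2 : u + j = u * (1 + ↑v⁻¹ * j) := by
    rw [mul_add, mul_one, ← mul_assoc, huv, one_mul]
  rw [h2]
  exact (hv ▸ v.isUnit).mul h1

private lemma isUnit_of_mul_both {M N : R} (h1 : IsUnit (M * N)) (h2 : IsUnit (N * M)) :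
    IsUnit M := by
  obtain ⟨p, hp⟩ := h1
  obtain ⟨q, hq⟩ := h2
  have hr : M * (N * ↑p⁻¹) = 1 := by rw [← mul_assoc, ← hp]; exact p.mul_inv
  have hl : ↑q⁻¹ * N * M = 1 := by rw [mul_assoc, ← hq]; exact q.inv_mul
  have heq : (↑q⁻¹ * N : R) = N * ↑p⁻¹ := by
    calc (↑q⁻¹ * N : R) = ↑q⁻¹ * N * (M * (N * ↑p⁻¹)) := by rw [hr, mul_one]
      _ = ↑q⁻¹ * N * M * (N * ↑p⁻¹) := by noncomm_ring
      _ = N * ↑p⁻¹ := by rw [hl, one_mul]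
  exact ⟨⟨M, N * ↑p⁻¹, hr, by rw [← heq]; exact hl⟩, rfl⟩

end JacobsonTools

section JCSection
variable {R : Type*} [Ring R]

private def JC (u v : R) : Prop := u - v ∈ (⊥ : TwoSidedIdeal R).jacobson

infixl:50 " ≋ " => JC

private lemma jc_refl (u : R) : JC u u := by
  simp only [JC, sub_self]
  exact TwoSidedIdeal.zero_mem _

private lemma jc_symm {u v : R} (h : JC u v) : JC v u := by
  have h2 := ((⊥ : TwoSidedIdeal R).jacobson).mul_mem_left (-1) _ h
  simpa only [JC, neg_one_mul, neg_sub] using h2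

private lemma jc_trans {u v w : R} (h1 : JC u v) (h2 : JC v w) : JC u w := by
  have h3 := ((⊥ : TwoSidedIdeal R).jacobson).add_mem h1 h2
  simpa only [JC, sub_add_sub_cancel] using h3

private instance : @Trans R R R JC JC JC := ⟨jc_trans⟩
private instance : @Trans R R R JC Eq JC := ⟨fun h e => e ▸ h⟩
private instance : @Trans R R R Eq JC JC := ⟨fun e h => e ▸ h⟩

private lemma jc_mem {u v : R} (h : JC u v) : u - v ∈ (⊥ : TwoSidedIdeal R).jacobson := h

private lemma jc_mull (w : R) {u v : R} (h : JC u v) : JC (w * u) (w * v) := by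
  have h2 := ((⊥ : TwoSidedIdeal R).jacobson).mul_mem_left w _ h
  simpa only [JC, mul_sub] using h2

private lemma jc_mulr (w : R) {u v : R} (h : JC u v) : JC (u * w) (v * w) := by
  have h2 := ((⊥ : TwoSidedIdeal R).jacobson).mul_mem_right _ w h
  simpa only [JC, sub_mul] using h2

private lemma jc_add {u v u' v' : R} (h1 : JC u v) (h2 : JC u' v') :
    JC (u + u') (v + v') := by
  have h3 := ((⊥ : TwoSidedIdeal R).jacobson).add_mem h1 h2
  simpa only [JC, sub_add_sub_comm] using h3

private lemma jc_unit {u v : R} (h : JC u v) (hv : IsUnit v) : IsUnit u := by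
  have h2 := unit_add_mem hv (jc_mem h)
  simpa only [add_sub_cancel] using h2

private lemma corner_mem_jac {I : TwoSidedIdeal R} (hs : SquareStable I)
    {a e : R} (ha : a ∈ I) (he : IsIdempotentElem e) :
    (1 - e) * a * e ∈ (⊥ : TwoSidedIdeal R).jacobson := by
  have hee : e * e = e := he
  obtain ⟨x, hx⟩ : ∃ t : R, t = (1 - e) * a * e := ⟨_, rfl⟩
  rw [← hx]
  have hxI : x ∈ I := by rw [hx]; exact I.mul_mem_right _ _ (I.mul_mem_left _ _ ha)
  have hx2 : x * x = 0 := by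
    have h0 : e * (1 - e) = 0 := by rw [mul_sub, mul_one, hee, sub_self]
    have h1 : x * x = (1 - e) * a * (e * (1 - e)) * a * e := by rw [hx]; noncomm_ring
    rw [h1, h0]; noncomm_ring
  have hri : ∀ s : R, ∃ v : R, (1 - x * s) * v = 1 := by
    intro s
    obtain ⟨w, hw⟩ := hs x hxI (1 - x * s) ⟨s, 1, by noncomm_ring⟩
    have h1 : x ^ 2 + (1 - x * s) * w = (1 - x * s) * w := by
      rw [pow_two, hx2, zero_add]
    rw [h1] at hw
    obtain ⟨u, hu⟩ := hw
    refine ⟨w * ↑u⁻¹, ?_⟩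
    rw [← mul_assoc, ← hu]
    exact u.mul_inv
  have hunit : ∀ s : R, IsUnit (1 - x * s) := by
    intro s
    obtain ⟨v, hv⟩ := hri s
    have hv' : v = 1 - x * -(s * v) := by
      have h1 : v = (1 - x * s) * v + x * (s * v) := by noncomm_ring
      rw [hv] at h1
      exact h1.trans (by noncomm_ring)
    obtain ⟨v₂, hv₂⟩ := hri (-(s * v))
    rw [← hv'] at hv₂
    have hfin : 1 - x * s = v₂ := by
      calc 1 - x * s = (1 - x * s) * (v * v₂) := by rw [hv₂, mul_one]
        _ = (1 - x * s) * v * v₂ := by noncomm_ring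
        _ = v₂ := by rw [hv, one_mul]
    exact ⟨⟨1 - x * s, v, hv, by rw [hfin]; exact hv₂⟩, rfl⟩
  apply mem_jac_of_right
  intro y
  have h := hunit (-y)
  simpa only [mul_neg, sub_neg_eq_add] using h

end JCSection

theorem stmt9 {R : Type*} [Ring R] (I : TwoSidedIdeal R) (hI : ExchangeIdeal I) :
    SquareStable I ↔
      ∀ a ∈ I, ∀ e : R, IsIdempotentElem e → a * e - e * a ∈ (⊥ : TwoSidedIdeal R).jacobson := by
  constructor
  · intro hs a ha e he
    have h1 := corner_mem_jac hs ha he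
    have h2 := corner_mem_jac hs ha he.one_sub
    have key : a * e - e * a = (1 - e) * a * e - (1 - (1 - e)) * a * (1 - e) := by noncomm_ring
    rw [key]
    exact ((⊥ : TwoSidedIdeal R).jacobson).sub_mem h1 h2
  · intro hcm a ha b hab
    obtain ⟨x, y, hxy⟩ := hab
    obtain ⟨e, he, ⟨r, her⟩, s, hes⟩ := hI (a * x) (I.mul_mem_right _ _ ha)
    have hee : e * e = e := he
    have hc1 : JC (a * e) (e * a) := hcm a ha e he
    obtain ⟨α, hα⟩ : ∃ t : R, t = e * a * e := ⟨_, rfl⟩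
    obtain ⟨γ, hγ⟩ : ∃ t : R, t = e * (x * r) * e := ⟨_, rfl⟩
    have hαI : α ∈ I := by rw [hα]; exact I.mul_mem_right _ _ (I.mul_mem_left _ _ ha)
    have heα : e * α = α := by
      have h : e * α = e * e * a * e := by rw [hα]; noncomm_ring
      rw [h, hee, ← hα]
    have hαe : α * e = α := by
      have h : α * e = e * a * (e * e) := by rw [hα]; noncomm_ring
      rw [h, hee, ← hα]
    have heγ : e * γ = γ := by
      have h : e * γ = e * e * (x * r) * e := by rw [hγ]; noncomm_ring
      rw [h, hee, ← hγ]
    have hγe : γ * e = γ := by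
      have h : γ * e = e * (x * r) * (e * e) := by rw [hγ]; noncomm_ring
      rw [h, hee, ← hγ]
    have He1 : JC α (e * a) := by
      have h1 := jc_mull e hc1
      have e1 : e * (a * e) = α := by rw [hα]; noncomm_ring
      have e2 : e * (e * a) = e * a := by rw [← mul_assoc, hee]
      rw [e1, e2] at h1
      exact h1
    have hC1 : JC (α * γ) e := by
      have e1 : α * γ = α * e * (x * r * e) := by rw [hγ]; noncomm_ring
      calc α * γ = α * (x * r * e) := by rw [e1, hαe]
        _ ≋ e * a * (x * r * e) := jc_mulr (x * r * e) He1
        _ = e * (a * x * r) * e := by noncomm_ring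
        _ = e * e * e := by rw [← her]
        _ = e := by rw [hee, hee]
    have haaI : a * a ∈ I := I.mul_mem_right _ _ ha
    have hc2 : JC (a * a * e) (e * (a * a)) := hcm _ haaI _ he
    have hB : JC (α * α) (e * (a * a)) := by
      have e1 : α * α = α * (a * e) := by
        have h : α * α = α * e * (a * e) := by rw [hα]; noncomm_ring
        rw [h, hαe]
      have h2 : JC (α * (a * e)) (α * a) := by
        have h := jc_mull α hc1
        have e2 : α * (e * a) = α * a := by rw [← mul_assoc, hαe]
        rw [e2] at h
        exact h
      have h3 : JC (e * a * (e * a)) (e * a * (a * e)) := jc_mull (e * a) (jc_symm hc1)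
      have h4 : JC (e * (a * a) * e) (e * (a * a)) := by
        have h := jc_mull e hc2
        have e3 : e * (a * a * e) = e * (a * a) * e := by noncomm_ring
        have e4 : e * (e * (a * a)) = e * (a * a) := by rw [← mul_assoc, hee]
        rw [e3, e4] at h
        exact h
      calc α * α = α * (a * e) := e1
        _ ≋ α * a := h2
        _ = e * a * (e * a) := by rw [hα]; noncomm_ring
        _ ≋ e * a * (a * e) := h3
        _ = e * (a * a) * e := by noncomm_ring
        _ ≋ e * (a * a) := h4
    obtain ⟨f, hf⟩ : ∃ t : R, t = γ * α := ⟨_, rfl⟩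
    have hfI : f ∈ I := by rw [hf]; exact I.mul_mem_left _ _ hαI
    have d1 : JC (f * f) f := by
      have h1 : JC (α * γ * α) (e * α) := jc_mulr α hC1
      rw [heα] at h1
      have h2 := jc_mull γ h1
      have e1 : γ * (α * γ * α) = f * f := by rw [hf]; noncomm_ring
      rw [e1, ← hf] at h2
      exact h2
    have d1' : JC f (f * f) := jc_symm d1
    obtain ⟨g, hg, ⟨p, hgp⟩, q, hgq⟩ := hI f hfI
    have d2 : JC g f := by
      have m1 : g - f * g ∈ (⊥ : TwoSidedIdeal R).jacobson := by
        have h := ((⊥ : TwoSidedIdeal R).jacobson).mul_mem_right _ p (jc_mem d1')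
        have e1 : g - f * g = (f - f * f) * p := by rw [hgp]; noncomm_ring
        rw [e1]; exact h
      have m2 : f - f * g ∈ (⊥ : TwoSidedIdeal R).jacobson := by
        have h := ((⊥ : TwoSidedIdeal R).jacobson).mul_mem_right _ q (jc_mem d1')
        have e1 : f - f * g = (f - f * f) * q := by
          calc f - f * g = f * (1 - g) := by noncomm_ring
            _ = f * ((1 - f) * q) := by rw [hgq]
            _ = (f - f * f) * q := by noncomm_ring
        rw [e1]; exact h
      have h := ((⊥ : TwoSidedIdeal R).jacobson).sub_mem m1 m2
      have e1 : g - f * g - (f - f * g) = g - f := by noncomm_ring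
      rw [e1] at h
      exact h
    have d3 : JC (α * g) (g * α) := hcm α hαI g hg
    have d4 : JC (f * α) α := by
      calc f * α ≋ g * α := jc_mulr α (jc_symm d2)
        _ ≋ α * g := jc_symm d3
        _ ≋ α * f := jc_mull α d2
        _ = α * γ * α := by rw [hf]; noncomm_ring
        _ ≋ e * α := jc_mulr α hC1
        _ = α := heα
    have d5 : JC f e := by
      have e1 : f = f * e := by rw [hf, mul_assoc, hαe]
      calc f = f * e := e1
        _ ≋ f * (α * γ) := jc_mull f (jc_symm hC1)
        _ = f * α * γ := by noncomm_ring
        _ ≋ α * γ := jc_mulr γ d4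
        _ ≋ e := hC1
    have d5' : JC (γ * α) e := by rw [← hf]; exact d5
    obtain ⟨M, hM⟩ : ∃ t : R, t = α * α + (1 - e) := ⟨_, rfl⟩
    obtain ⟨N, hN⟩ : ∃ t : R, t = γ * γ + (1 - e) := ⟨_, rfl⟩
    have z1 : α * (1 - e) = 0 := by rw [mul_sub, mul_one, hαe, sub_self]
    have z2 : (1 - e) * γ = 0 := by rw [sub_mul, one_mul, heγ, sub_self]
    have z1' : γ * (1 - e) = 0 := by rw [mul_sub, mul_one, hγe, sub_self]
    have z2' : (1 - e) * α = 0 := by rw [sub_mul, one_mul, heα, sub_self]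
    have z3 : (1 - e) * (1 - e) = 1 - e := he.one_sub
    have eMN : M * N = α * α * (γ * γ) + (1 - e) := by
      calc M * N = α * α * (γ * γ) + α * (α * (1 - e)) + (1 - e) * γ * γ + (1 - e) * (1 - e) := by
            rw [hM, hN]; noncomm_ring
        _ = α * α * (γ * γ) + (1 - e) := by rw [z1, z2, z3]; noncomm_ring
    have eNM : N * M = γ * γ * (α * α) + (1 - e) := by
      calc N * M = γ * γ * (α * α) + γ * (γ * (1 - e)) + (1 - e) * α * α + (1 - e) * (1 - e) := by
            rw [hM, hN]; noncomm_ring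
        _ = γ * γ * (α * α) + (1 - e) := by rw [z1', z2', z3]; noncomm_ring
    have uMN : IsUnit (M * N) := by
      have h1 : JC (α * α * (γ * γ)) e := by
        calc α * α * (γ * γ) = α * (α * γ * γ) := by noncomm_ring
          _ ≋ α * (e * γ) := jc_mull α (jc_mulr γ hC1)
          _ = α * γ := by rw [heγ]
          _ ≋ e := hC1
      have h2 : JC (M * N) 1 := by
        rw [eMN]
        calc α * α * (γ * γ) + (1 - e) ≋ e + (1 - e) := jc_add h1 (jc_refl (1 - e))
          _ = 1 := by noncomm_ring
      exact jc_unit h2 isUnit_one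
    have uNM : IsUnit (N * M) := by
      have h1 : JC (γ * γ * (α * α)) e := by
        calc γ * γ * (α * α) = γ * (γ * α * α) := by noncomm_ring
          _ ≋ γ * (e * α) := jc_mull γ (jc_mulr α d5')
          _ = γ * α := by rw [heα]
          _ ≋ e := d5'
      have h2 : JC (N * M) 1 := by
        rw [eNM]
        calc γ * γ * (α * α) + (1 - e) ≋ e + (1 - e) := jc_add h1 (jc_refl (1 - e))
          _ = 1 := by noncomm_ring
      exact jc_unit h2 isUnit_one
    have uM : IsUnit M := isUnit_of_mul_both uMN uNM
    refine ⟨y * (s * (1 - a * a)), ?_⟩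
    have hby : b * y = 1 - a * x := eq_sub_iff_add_eq.mpr (by rw [add_comm]; exact hxy)
    have hw : a ^ 2 + b * (y * (s * (1 - a * a))) = e * (a * a) + (1 - e) := by
      calc a ^ 2 + b * (y * (s * (1 - a * a)))
          = a * a + b * y * (s * (1 - a * a)) := by rw [pow_two]; noncomm_ring
        _ = a * a + (1 - a * x) * s * (1 - a * a) := by rw [hby]; noncomm_ring
        _ = a * a + (1 - e) * (1 - a * a) := by rw [← hes]
        _ = e * (a * a) + (1 - e) := by noncomm_ring
    rw [hw]
    have hfinal : JC (e * (a * a) + (1 - e)) M := by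
      rw [hM]
      exact jc_add (jc_symm hB) (jc_refl (1 - e))
    exact jc_unit hfinal uM
end

section
/- Let I be an exchange ideal of a ring R. Then I is square stable if and only if for every regular element a ∈ I, the image of a in R/J(R) is strongly regular. -/
section Helpers

variable {R : Type*} [Ring R]

/-- surjectivity of the quotient map of a RingCon -/
private lemma coe_surj (c : RingCon R) (q : c.Quotient) : ∃ r : R, (r : c.Quotient) = q :=
  Quotient.inductionOn q (fun r => ⟨r, rfl⟩)

private lemma mem_jac_left_inv {x : R} (hx : x ∈ (⊥ : TwoSidedIdeal R).jacobson) :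
    ∃ z : R, z * (1 - x) = 1 := by
  obtain ⟨z, hz⟩ := TwoSidedIdeal.mem_jacobson_iff.mp hx (-1)
  rw [TwoSidedIdeal.mem_bot] at hz
  refine ⟨z, ?_⟩
  have h2 : z * (1 - x) - 1 = z * -1 * x + z - 1 := by noncomm_ring
  rw [hz] at h2
  exact sub_eq_zero.mp h2

private lemma isUnit_one_sub_of_mem_jac {x : R} (hx : x ∈ (⊥ : TwoSidedIdeal R).jacobson) :
    IsUnit (1 - x) := by
  obtain ⟨z, hz⟩ := mem_jac_left_inv hx
  have hzx : z * x ∈ (⊥ : TwoSidedIdeal R).jacobson :=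
    ((⊥ : TwoSidedIdeal R).jacobson).mul_mem_left z x hx
  have hz2 : z = 1 - (-(z * x)) := by
    have h4 : z - z * x = 1 := by rw [show z - z * x = z * (1 - x) from by noncomm_ring]; exact hz
    rw [sub_neg_eq_add]
    exact sub_eq_iff_eq_add.mp h4
  obtain ⟨z₂, hz₂⟩ := mem_jac_left_inv (((⊥ : TwoSidedIdeal R).jacobson).neg_mem hzx)
  rw [← hz2] at hz₂
  -- hz₂ : z₂ * z = 1, hz : z * (1 - x) = 1
  have hzb : (1 - x) * z = 1 := by
    have h3 : z₂ = 1 - x := by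
      calc z₂ = z₂ * (z * (1 - x)) := by rw [hz, mul_one]
        _ = (z₂ * z) * (1 - x) := by rw [mul_assoc]
        _ = 1 - x := by rw [hz₂, one_mul]
    rw [← h3]; exact hz₂
  exact ⟨⟨1 - x, z, hzb, hz⟩, rfl⟩


private lemma jac_coe_eq_iff {x y : R} :
    ((x : ((⊥ : TwoSidedIdeal R).jacobson).ringCon.Quotient) = (y : _)) ↔
      x - y ∈ (⊥ : TwoSidedIdeal R).jacobson := by
  rw [RingCon.eq, TwoSidedIdeal.rel_iff]

private lemma isUnit_of_left_right {a b c : R} (h1 : a * b = 1) (h2 : c * a = 1) : IsUnit a := by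
  have hcb : c = b := by rw [← mul_one c, ← h1, ← mul_assoc, h2, one_mul]
  exact ⟨⟨a, b, h1, by rw [← hcb]; exact h2⟩, rfl⟩

private lemma isUnit_of_coe {x : R}
    (h : IsUnit (x : ((⊥ : TwoSidedIdeal R).jacobson).ringCon.Quotient)) : IsUnit x := by
  obtain ⟨u, hu⟩ := h
  obtain ⟨v, hv⟩ := coe_surj _ ((u⁻¹ : _ˣ) : ((⊥ : TwoSidedIdeal R).jacobson).ringCon.Quotient)
  have h1 : ((x * v : R) : ((⊥ : TwoSidedIdeal R).jacobson).ringCon.Quotient) = ((1 : R) : _) := by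
    rw [RingCon.coe_mul, hv, ← hu, RingCon.coe_one, Units.mul_inv]
  have h2 : ((v * x : R) : ((⊥ : TwoSidedIdeal R).jacobson).ringCon.Quotient) = ((1 : R) : _) := by
    rw [RingCon.coe_mul, hv, ← hu, RingCon.coe_one, Units.inv_mul]
  have hj1 : x * v - 1 ∈ (⊥ : TwoSidedIdeal R).jacobson := jac_coe_eq_iff.mp h1
  have hj2 : v * x - 1 ∈ (⊥ : TwoSidedIdeal R).jacobson := jac_coe_eq_iff.mp h2
  have hu1 : IsUnit (x * v) := by
    have := isUnit_one_sub_of_mem_jac (((⊥ : TwoSidedIdeal R).jacobson).neg_mem hj1)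
    rwa [show (1 : R) - -(x * v - 1) = x * v from by noncomm_ring] at this
  have hu2 : IsUnit (v * x) := by
    have := isUnit_one_sub_of_mem_jac (((⊥ : TwoSidedIdeal R).jacobson).neg_mem hj2)
    rwa [show (1 : R) - -(v * x - 1) = v * x from by noncomm_ring] at this
  obtain ⟨u1, hu1e⟩ := hu1
  obtain ⟨u2, hu2e⟩ := hu2
  refine isUnit_of_left_right (b := v * (u1⁻¹ : _ˣ)) (c := ((u2⁻¹ : _ˣ) : R) * v) ?_ ?_
  · calc x * (v * ((u1⁻¹ : _ˣ) : R)) = (x * v) * ((u1⁻¹ : _ˣ) : R) := by rw [mul_assoc]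
      _ = (u1 : R) * ((u1⁻¹ : _ˣ) : R) := by rw [hu1e]
      _ = 1 := u1.mul_inv
  · calc (((u2⁻¹ : _ˣ) : R) * v) * x = ((u2⁻¹ : _ˣ) : R) * (v * x) := by rw [mul_assoc]
      _ = ((u2⁻¹ : _ˣ) : R) * (u2 : R) := by rw [hu2e]
      _ = 1 := u2.inv_mul

/-- The key unit: if `W` is strongly regular, `E` idempotent with `E*W = W` and `W*P = E`,
then `W + 1 - E` is a unit. -/
private lemma key_unit {S : Type*} [Ring S] {W E P s t : S}
    (hE : E * E = E) (hEW : E * W = W) (hWP : W * P = E)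
    (hA0 : W = W ^ 2 * s) (hB0 : W = t * W ^ 2) :
    IsUnit (W + 1 - E) := by
  have hA : W = W * W * s := by rw [pow_two] at hA0; exact hA0
  have hB : W = t * (W * W) := by rw [pow_two, ← mul_assoc] at hB0; rw [← mul_assoc]; exact hB0
  set g := W * s with hgdef
  have hg' : g = t * W := by
    calc g = (t * (W * W)) * s := by rw [hgdef, ← hB]
      _ = t * (W * W * s) := by noncomm_ring
      _ = t * W := by rw [← hA]
  have hgw : g * W = W := by
    calc g * W = t * (W * W) := by rw [hg']; noncomm_ring
      _ = W := hB.symm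
  have hwg : W * g = W := by
    calc W * g = W * W * s := by rw [hgdef]; noncomm_ring
      _ = W := hA.symm
  set c := g * s with hcdef
  have hc' : c = t * g := by
    calc c = (t * W) * s := by rw [hcdef, hg']
      _ = t * (W * s) := by noncomm_ring
      _ = t * g := by rw [← hgdef]
  have hwc : W * c = g := by
    calc W * c = (W * g) * s := by rw [hcdef]; noncomm_ring
      _ = W * s := by rw [hwg]
      _ = g := hgdef.symm
  have hcw : c * W = g := by
    calc c * W = t * (g * W) := by rw [hc']; noncomm_ring
      _ = t * W := by rw [hgw]
      _ = g := hg'.symm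
  have hEg : E * g = g := by
    calc E * g = (E * W) * s := by rw [hgdef]; noncomm_ring
      _ = W * s := by rw [hEW]
      _ = g := hgdef.symm
  have hgE : g * E = E := by
    calc g * E = (g * W) * P := by rw [← hWP]; noncomm_ring
      _ = W * P := by rw [hgw]
      _ = E := hWP
  have hEc : E * c = c := by
    calc E * c = (E * g) * s := by rw [hcdef]; noncomm_ring
      _ = g * s := by rw [hEg]
      _ = c := hcdef.symm
  refine isUnit_of_left_right (b := 1 - g + c * E) (c := 1 - g + c * E) ?_ ?_
  · calc (W + 1 - E) * (1 - g + c * E)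
        = (W - W * g + (W * c) * E) + ((1 - g + c * E) - (E - E * g + (E * c) * E)) := by
          noncomm_ring
      _ = (W - W + g * E) + ((1 - g + c * E) - (E - g + c * E)) := by rw [hwg, hwc, hEg, hEc]
      _ = (W - W + E) + ((1 - g + c * E) - (E - g + c * E)) := by rw [hgE]
      _ = 1 := by noncomm_ring
  · calc (1 - g + c * E) * (W + 1 - E)
        = (W - g * W + c * (E * W)) + ((1 - g + c * E) - (E - g * E + c * (E * E))) := by
          noncomm_ring
      _ = (W - W + c * W) + ((1 - g + c * E) - (E - E + c * E)) := by rw [hgw, hEW, hgE, hE]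
      _ = (W - W + g) + ((1 - g + c * E) - (E - E + c * E)) := by rw [hcw]
      _ = 1 := by noncomm_ring


private lemma forward_strong {R : Type*} [Ring R] {I : TwoSidedIdeal R} (hSS : SquareStable I)
    {a : R} (ha : a ∈ I) (hreg : IsRegularElem a) :
    (∃ s : R, a = a ^ 2 * s) ∧ (∃ t : R, a = t * a ^ 2) := by
  obtain ⟨x, hx⟩ := hreg
  have haxa : a * x * a = a := hx.symm
  obtain ⟨y₁, hy₁⟩ := hSS a ha (1 - a * x) ⟨x, 1, by noncomm_ring⟩
  obtain ⟨U, hU⟩ := hy₁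
  have huv : (a ^ 2 + (1 - a * x) * y₁) * ((U⁻¹ : _ˣ) : R) = 1 := by
    rw [← hU]; exact U.mul_inv
  have heu : a * x * (a ^ 2 + (1 - a * x) * y₁) = a ^ 2 := by
    calc a * x * (a ^ 2 + (1 - a * x) * y₁)
        = (a * x * a) * a + (a * x - (a * x * a) * x) * y₁ := by noncomm_ring
      _ = a * a + (a * x - a * x) * y₁ := by rw [haxa]
      _ = a ^ 2 := by noncomm_ring
  have he : a ^ 2 * ((U⁻¹ : _ˣ) : R) = a * x := by
    calc a ^ 2 * ((U⁻¹ : _ˣ) : R)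
        = (a * x * (a ^ 2 + (1 - a * x) * y₁)) * ((U⁻¹ : _ˣ) : R) := by rw [heu]
      _ = a * x * ((a ^ 2 + (1 - a * x) * y₁) * ((U⁻¹ : _ˣ) : R)) := mul_assoc _ _ _
      _ = a * x := by rw [huv, mul_one]
  obtain ⟨σ, hσ⟩ : ∃ z : R, z = ((U⁻¹ : _ˣ) : R) * a := ⟨_, rfl⟩
  have hra : a = a ^ 2 * σ := by
    rw [hσ, ← mul_assoc, he]; exact hx
  obtain ⟨f, hf⟩ : ∃ z : R, z = x * a := ⟨_, rfl⟩
  have haf : a * f = a := by rw [hf, ← mul_assoc]; exact haxa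
  have hff : f * f = f := by
    rw [hf]
    calc x * a * (x * a) = x * (a * x * a) := by noncomm_ring
      _ = x * a := by rw [haxa]
  have haaσ : a * (a * σ) = a := by
    calc a * (a * σ) = a ^ 2 * σ := by noncomm_ring
      _ = a := hra.symm
  have hfaσ : f * (a * σ) = f := by
    rw [hf]
    calc x * a * (a * σ) = x * (a * (a * σ)) := by noncomm_ring
      _ = x * a := by rw [haaσ]
  obtain ⟨c, hc⟩ : ∃ z : R, z = f * σ * f := ⟨_, rfl⟩
  obtain ⟨d, hd⟩ : ∃ z : R, z = f * a := ⟨_, rfl⟩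
  have hfI : f ∈ I := by rw [hf]; exact I.mul_mem_left x a ha
  have hcI : c ∈ I := by rw [hc]; exact I.mul_mem_right _ f (I.mul_mem_right f σ hfI)
  have hdc : d * c = f := by
    rw [hc, hd]
    calc f * a * (f * σ * f) = f * ((a * f) * (σ * f)) := by noncomm_ring
      _ = f * (a * (σ * f)) := by rw [haf]
      _ = (f * (a * σ)) * f := by noncomm_ring
      _ = f * f := by rw [hfaσ]
      _ = f := hff
  obtain ⟨g, hg⟩ : ∃ z : R, z = c * d := ⟨_, rfl⟩
  have hcf : c * f = c := by
    rw [hc]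
    calc f * σ * f * f = f * σ * (f * f) := by noncomm_ring
      _ = f * σ * f := by rw [hff]
  have hfc : f * c = c := by
    rw [hc]
    calc f * (f * σ * f) = (f * f) * (σ * f) := by noncomm_ring
      _ = f * (σ * f) := by rw [hff]
      _ = f * σ * f := by noncomm_ring
  obtain ⟨y₂, hy₂⟩ := hSS c hcI (1 - g) ⟨d, 1, by rw [hg]; noncomm_ring⟩
  obtain ⟨V, hV⟩ := hy₂
  have hVv : (c ^ 2 + (1 - g) * y₂) * ((V⁻¹ : _ˣ) : R) = 1 := by
    rw [← hV]; exact V.mul_inv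
  have hgc : g * c = c := by
    rw [hg]
    calc c * d * c = c * (d * c) := by noncomm_ring
      _ = c * f := by rw [hdc]
      _ = c := hcf
  have hgg : g * g = g := by
    rw [hg]
    calc c * d * (c * d) = c * (d * c) * d := by noncomm_ring
      _ = c * f * d := by rw [hdc]
      _ = c * d := by rw [hcf]
  have hgV : g * (c ^ 2 + (1 - g) * y₂) = c ^ 2 := by
    calc g * (c ^ 2 + (1 - g) * y₂) = (g * c) * c + (g - g * g) * y₂ := by noncomm_ring
      _ = c * c + (g - g) * y₂ := by rw [hgc, hgg]
      _ = c ^ 2 := by noncomm_ring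
  have hgeq : g = c ^ 2 * ((V⁻¹ : _ˣ) : R) := by
    calc g = g * ((c ^ 2 + (1 - g) * y₂) * ((V⁻¹ : _ˣ) : R)) := by rw [hVv, mul_one]
      _ = (g * (c ^ 2 + (1 - g) * y₂)) * ((V⁻¹ : _ˣ) : R) := (mul_assoc _ _ _).symm
      _ = c ^ 2 * ((V⁻¹ : _ˣ) : R) := by rw [hgV]
  have hceq : c = c ^ 2 * ((V⁻¹ : _ˣ) : R) * c := by
    conv_lhs => rw [← hgc, hgeq]
  have hfeq : f = c * ((V⁻¹ : _ˣ) : R) * c := by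
    calc f = d * c := hdc.symm
      _ = d * (c ^ 2 * ((V⁻¹ : _ˣ) : R) * c) := by rw [← hceq]
      _ = (d * c) * (c * (((V⁻¹ : _ˣ) : R) * c)) := by noncomm_ring
      _ = f * (c * (((V⁻¹ : _ˣ) : R) * c)) := by rw [hdc]
      _ = (f * c) * (((V⁻¹ : _ˣ) : R) * c) := (mul_assoc _ _ _).symm
      _ = c * (((V⁻¹ : _ˣ) : R) * c) := by rw [hfc]
      _ = c * ((V⁻¹ : _ˣ) : R) * c := (mul_assoc _ _ _).symm
  have hdf : d * f = d := by
    rw [hd]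
    calc f * a * f = f * (a * f) := by noncomm_ring
      _ = f * a := by rw [haf]
  have hdeq : d = f * ((V⁻¹ : _ˣ) : R) * c := by
    calc d = d * f := hdf.symm
      _ = d * (c * ((V⁻¹ : _ˣ) : R) * c) := by rw [← hfeq]
      _ = (d * c) * (((V⁻¹ : _ˣ) : R) * c) := by noncomm_ring
      _ = f * (((V⁻¹ : _ˣ) : R) * c) := by rw [hdc]
      _ = f * ((V⁻¹ : _ˣ) : R) * c := (mul_assoc _ _ _).symm
  have hcd : c * d = f := by
    calc c * d = c * (f * ((V⁻¹ : _ˣ) : R) * c) := by rw [← hdeq]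
      _ = (c * f) * (((V⁻¹ : _ˣ) : R) * c) := by noncomm_ring
      _ = c * (((V⁻¹ : _ˣ) : R) * c) := by rw [hcf]
      _ = c * ((V⁻¹ : _ˣ) : R) * c := (mul_assoc _ _ _).symm
      _ = f := hfeq.symm
  have hleft : a = (a * σ * x) * a ^ 2 := by
    calc a = a * f := haf.symm
      _ = a * (c * d) := by rw [hcd]
      _ = a * (f * σ * f * (f * a)) := by rw [hc, hd]
      _ = (a * f) * (σ * ((f * f) * a)) := by noncomm_ring
      _ = (a * f) * (σ * (f * a)) := by rw [hff]
      _ = a * (σ * (f * a)) := by rw [haf]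
      _ = a * (σ * (x * a * a)) := by rw [hf]
      _ = (a * σ * x) * a ^ 2 := by noncomm_ring
  exact ⟨⟨σ, hra⟩, ⟨a * σ * x, hleft⟩⟩

private lemma backward_sq {R : Type*} [Ring R] {I : TwoSidedIdeal R} (hI : ExchangeIdeal I)
    (H : ∀ a ∈ I, IsRegularElem a →
      IsStronglyRegularElem ((a : ((⊥ : TwoSidedIdeal R).jacobson).ringCon.Quotient))) :
    SquareStable I := by
  intro a ha b hpair
  obtain ⟨x, y, hxy⟩ := hpair
  have stepA : ∃ X Y : R, a ^ 2 * X + b * Y = 1 := by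
    by_contra hcon
    push_neg at hcon
    have hKtop : (Ideal.span {MulOpposite.op (a ^ 2), MulOpposite.op b} : Ideal Rᵐᵒᵖ) ≠ ⊤ := by
      intro htop
      have h1 : (1 : Rᵐᵒᵖ) ∈
          (Ideal.span {MulOpposite.op (a ^ 2), MulOpposite.op b} : Ideal Rᵐᵒᵖ) := by
        rw [htop]; exact Submodule.mem_top
      obtain ⟨u, w, huw⟩ := Ideal.mem_span_pair.mp h1
      refine hcon u.unop w.unop ?_
      have h2 := congrArg MulOpposite.unop huw
      simpa using h2
    obtain ⟨Mop, hMmax, hKM⟩ := Ideal.exists_le_maximal _ hKtop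
    have hbM : MulOpposite.op b ∈ Mop := hKM (Ideal.subset_span (by simp))
    have ha2M : MulOpposite.op (a ^ 2) ∈ Mop := hKM (Ideal.subset_span (by simp))
    have hMr : ∀ r s : R, MulOpposite.op r ∈ Mop → MulOpposite.op (r * s) ∈ Mop := by
      intro r s hr
      rw [MulOpposite.op_mul]
      exact Mop.mul_mem_left _ hr
    have h1nM : MulOpposite.op (1 : R) ∉ Mop := by
      rw [MulOpposite.op_one]
      exact (Ideal.ne_top_iff_one Mop).mp hMmax.ne_top
    have haM : MulOpposite.op a ∉ Mop := by
      intro hmem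
      apply h1nM
      have h3 := Mop.add_mem (hMr a x hmem) (hMr b y hbM)
      rw [← MulOpposite.op_add, hxy] at h3
      exact h3
    have keylem : ∀ r : R, MulOpposite.op r ∉ Mop →
        ∃ m c : R, MulOpposite.op m ∈ Mop ∧ m + r * c = 1 := by
      intro r hr
      have hlt : Mop < Mop ⊔ Ideal.span {MulOpposite.op r} := by
        refine lt_of_le_of_ne le_sup_left ?_
        intro heq
        apply hr
        rw [heq]
        exact Submodule.mem_sup_right (Ideal.subset_span rfl)
      have htop : Mop ⊔ Ideal.span {MulOpposite.op r} = ⊤ :=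
        (Ideal.isMaximal_def.mp hMmax).2 _ hlt
      have h1m : (1 : Rᵐᵒᵖ) ∈ Mop ⊔ Ideal.span {MulOpposite.op r} := by
        rw [htop]; exact Submodule.mem_top
      obtain ⟨mm, hmm, z, hz, hmz⟩ := Submodule.mem_sup.mp h1m
      obtain ⟨uu, huu⟩ := Ideal.mem_span_singleton'.mp hz
      refine ⟨mm.unop, uu.unop, by rwa [MulOpposite.op_unop], ?_⟩
      have h4 := congrArg MulOpposite.unop hmz
      rw [← huu] at h4
      simpa using h4
    obtain ⟨m₀, cc, hm₀M, hm₀⟩ := keylem a haM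
    have hJM : ∀ j ∈ (⊥ : TwoSidedIdeal R).jacobson, MulOpposite.op j ∈ Mop := by
      intro j hj
      by_contra hjM
      obtain ⟨m₁, r₁, hm₁M, hm₁⟩ := keylem j hjM
      have hm₁u : IsUnit m₁ := by
        have hjr : j * r₁ ∈ (⊥ : TwoSidedIdeal R).jacobson :=
          ((⊥ : TwoSidedIdeal R).jacobson).mul_mem_right j r₁ hj
        have h5 : m₁ = 1 - j * r₁ := eq_sub_of_add_eq hm₁
        rw [h5]; exact isUnit_one_sub_of_mem_jac hjr
      obtain ⟨w₁, hw₁⟩ := hm₁u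
      apply h1nM
      have h6 : (1 : R) = m₁ * ((w₁⁻¹ : _ˣ) : R) := by
        rw [← hw₁]; exact (w₁.mul_inv).symm
      rw [h6]
      exact hMr _ _ hm₁M
    obtain ⟨ε, hεid, ⟨r', hr'⟩, ⟨s', hs'⟩⟩ := hI (a * cc) (I.mul_mem_right a cc ha)
    have hεπ : a * (cc * r' * ε) = ε := by
      calc a * (cc * r' * ε) = (a * cc * r') * ε := by noncomm_ring
        _ = ε * ε := by rw [← hr']
        _ = ε := hεid
    have hwI : ε * a ∈ I := I.mul_mem_left ε a ha
    have h7 : (ε * a) * (cc * r' * ε) = ε := by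
      calc (ε * a) * (cc * r' * ε) = ε * (a * (cc * r' * ε)) := by rw [mul_assoc]
        _ = ε * ε := by rw [hεπ]
        _ = ε := hεid
    have hwreg : IsRegularElem (ε * a) := by
      refine ⟨cc * r' * ε, ?_⟩
      calc ε * a = ε * (ε * a) := by rw [← mul_assoc, hεid]
        _ = (ε * a) * (cc * r' * ε) * (ε * a) := by rw [h7]
    obtain ⟨⟨sQ, hsQ⟩, -⟩ := H (ε * a) hwI hwreg
    obtain ⟨s₂, hs₂⟩ := coe_surj _ sQ
    have hJ0 : (ε * a) - (ε * a) ^ 2 * s₂ ∈ (⊥ : TwoSidedIdeal R).jacobson := by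
      apply jac_coe_eq_iff.mp
      calc ((ε * a : R) : ((⊥ : TwoSidedIdeal R).jacobson).ringCon.Quotient)
          = ((ε * a : R) : _) ^ 2 * sQ := hsQ
        _ = (((ε * a) ^ 2 * s₂ : R) : _) := by
            rw [← hs₂, ← RingCon.coe_pow, ← RingCon.coe_mul]
    have h1εM : MulOpposite.op (1 - ε) ∈ Mop := by
      have h8 : 1 - ε = m₀ * s' := by
        have hm0' : 1 - a * cc = m₀ := (eq_sub_of_add_eq hm₀).symm
        rw [hs', hm0']
      rw [h8]; exact hMr _ _ hm₀M
    have hεmul : ∀ z : R, MulOpposite.op z ∈ Mop → MulOpposite.op (ε * z) ∈ Mop := by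
      intro z hz
      have h9 : ε * z = z - (1 - ε) * z := by noncomm_ring
      rw [h9, MulOpposite.op_sub]
      exact Submodule.sub_mem _ hz (hMr _ _ h1εM)
    have hwaM : MulOpposite.op ((ε * a) * a) ∈ Mop := by
      have h10 : (ε * a) * a = ε * a ^ 2 := by noncomm_ring
      rw [h10]
      exact hεmul _ ha2M
    have hwM : MulOpposite.op (ε * a) ∈ Mop := by
      have h12 : ε * a = a * ((cc * r' * ε) * a) := by
        conv_lhs => rw [← hεπ]
        noncomm_ring
      have h11 : (ε * a) * (ε * a) = (ε * a) * (a * ((cc * r' * ε) * a)) :=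
        congrArg (fun z => (ε * a) * z) h12
      have h13 : (ε * a) ^ 2 * s₂ = ((ε * a) * a) * ((cc * r' * ε) * (a * s₂)) := by
        rw [pow_two]
        calc (ε * a) * (ε * a) * s₂
            = ((ε * a) * (a * ((cc * r' * ε) * a))) * s₂ := by rw [h11]
          _ = ((ε * a) * a) * ((cc * r' * ε) * (a * s₂)) := by noncomm_ring
      have h14 : ε * a = ((ε * a) * a) * ((cc * r' * ε) * (a * s₂)) +
          ((ε * a) - (ε * a) ^ 2 * s₂) := by
        rw [← h13]; noncomm_ring
      rw [h14, MulOpposite.op_add]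
      exact Submodule.add_mem _ (hMr _ _ hwaM) (hJM _ hJ0)
    apply haM
    have h15 : a = ε * a + (1 - ε) * a := by noncomm_ring
    rw [h15, MulOpposite.op_add]
    exact Submodule.add_mem _ hwM (hMr _ _ h1εM)
  obtain ⟨X, Y, hXY⟩ := stepA
  have ha2 : a ^ 2 ∈ I := by rw [pow_two]; exact I.mul_mem_left a a ha
  obtain ⟨ε, hεid, ⟨r₁, hr₁⟩, ⟨s₁, hs₁⟩⟩ := hI (a ^ 2 * X) (I.mul_mem_right _ X ha2)
  have hεπ : a ^ 2 * (X * r₁ * ε) = ε := by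
    calc a ^ 2 * (X * r₁ * ε) = (a ^ 2 * X * r₁) * ε := by noncomm_ring
      _ = ε * ε := by rw [← hr₁]
      _ = ε := hεid
  have hwI : ε * a ^ 2 ∈ I := I.mul_mem_left ε _ ha2
  have h7 : (ε * a ^ 2) * (X * r₁ * ε) = ε := by
    calc (ε * a ^ 2) * (X * r₁ * ε) = ε * (a ^ 2 * (X * r₁ * ε)) := by rw [mul_assoc]
      _ = ε * ε := by rw [hεπ]
      _ = ε := hεid
  have hwreg : IsRegularElem (ε * a ^ 2) := by
    refine ⟨X * r₁ * ε, ?_⟩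
    calc ε * a ^ 2 = ε * (ε * a ^ 2) := by rw [← mul_assoc, hεid]
      _ = (ε * a ^ 2) * (X * r₁ * ε) * (ε * a ^ 2) := by rw [h7]
  obtain ⟨⟨sQ, hsQ⟩, ⟨tQ, htQ⟩⟩ := H (ε * a ^ 2) hwI hwreg
  have hEE : ((ε : R) : ((⊥ : TwoSidedIdeal R).jacobson).ringCon.Quotient) * ((ε : R) : _) =
      ((ε : R) : _) := by
    rw [← RingCon.coe_mul, hεid]
  have hEW : ((ε : R) : ((⊥ : TwoSidedIdeal R).jacobson).ringCon.Quotient) *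
      ((ε * a ^ 2 : R) : _) = ((ε * a ^ 2 : R) : _) := by
    rw [← RingCon.coe_mul]
    have h16 : ε * (ε * a ^ 2) = ε * a ^ 2 := by rw [← mul_assoc, hεid]
    rw [h16]
  have hWP : ((ε * a ^ 2 : R) : ((⊥ : TwoSidedIdeal R).jacobson).ringCon.Quotient) *
      ((X * r₁ * ε : R) : _) = ((ε : R) : _) := by
    rw [← RingCon.coe_mul, h7]
  have hkeyQ := key_unit hEE hEW hWP hsQ htQ
  have hunitR : IsUnit (ε * a ^ 2 + 1 - ε) := by
    apply isUnit_of_coe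
    have hcast : ((ε * a ^ 2 + 1 - ε : R) : ((⊥ : TwoSidedIdeal R).jacobson).ringCon.Quotient) =
        ((ε * a ^ 2 : R) : _) + 1 - ((ε : R) : _) := by
      rw [RingCon.coe_sub, RingCon.coe_add, RingCon.coe_one]
    rw [hcast]; exact hkeyQ
  refine ⟨Y * s₁ * (1 - a ^ 2), ?_⟩
  have hb1 : b * (Y * s₁) = 1 - ε := by
    calc b * (Y * s₁) = (b * Y) * s₁ := by rw [mul_assoc]
      _ = (1 - a ^ 2 * X) * s₁ := by
        rw [show b * Y = 1 - a ^ 2 * X from by rw [← hXY]; noncomm_ring]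
      _ = 1 - ε := hs₁.symm
  have hfinal : a ^ 2 + b * (Y * s₁ * (1 - a ^ 2)) = ε * a ^ 2 + 1 - ε := by
    calc a ^ 2 + b * (Y * s₁ * (1 - a ^ 2))
        = a ^ 2 + (b * (Y * s₁)) * (1 - a ^ 2) := by noncomm_ring
      _ = a ^ 2 + (1 - ε) * (1 - a ^ 2) := by rw [hb1]
      _ = ε * a ^ 2 + 1 - ε := by noncomm_ring
  rw [hfinal]; exact hunitR

end Helpers

theorem stmt10 {R : Type*} [Ring R] (I : TwoSidedIdeal R) (hI : ExchangeIdeal I) :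
    SquareStable I ↔
      ∀ a ∈ I, IsRegularElem a →
        IsStronglyRegularElem ((a : ((⊥ : TwoSidedIdeal R).jacobson).ringCon.Quotient)) := by
  constructor
  · intro hSS a ha hreg
    obtain ⟨⟨s, hs⟩, ⟨t, ht⟩⟩ := forward_strong hSS ha hreg
    constructor
    · refine ⟨((s : R) : _), ?_⟩
      rw [← RingCon.coe_pow, ← RingCon.coe_mul, ← hs]
    · refine ⟨((t : R) : _), ?_⟩
      rw [← RingCon.coe_pow, ← RingCon.coe_mul, ← ht]
  · intro H
    exact backward_sq hI H
end

section
/- An exchange ring R has square stable range one if and only if for every regular element a ∈ R, the image of a in R/J(R) is strongly regular. -/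
section Stmt11Helpers

variable {R : Type*} [Ring R]

/-- From strong regularity data for `v`, produce the group idempotent `g`
and the inverse `u'` of the unit `v + 1 - g`. -/
private lemma stmt11_sreg_unit {v σ τ : R} (h1 : v = v * v * σ) (h2 : v = τ * (v * v)) :
    ∃ g u' : R, g * g = g ∧ g * v = v ∧ v * g = v ∧
      (v + 1 - g) * u' = 1 ∧ u' * (v + 1 - g) = 1 ∧ v * u' = g ∧ u' * v = g := by
  obtain ⟨g, hg⟩ : ∃ t : R, t = τ * v := ⟨_, rfl⟩
  have hgσ : g = v * σ := by
    calc g = τ * v := hg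
    _ = τ * (v * v * σ) := by rw [← h1]
    _ = (τ * (v * v)) * σ := by simp only [mul_assoc]
    _ = v * σ := by rw [← h2]
  have hgv : g * v = v := by rw [hg, mul_assoc, ← h2]
  have hvg : v * g = v := by rw [hgσ, ← mul_assoc, ← h1]
  have hgg : g * g = g := by
    calc g * g = g * (v * σ) := by rw [← hgσ]
    _ = (g * v) * σ := by simp only [mul_assoc]
    _ = v * σ := by rw [hgv]
    _ = g := hgσ.symm
  obtain ⟨uR, huR⟩ : ∃ t : R, t = g * (σ * g) + (1 - g) := ⟨_, rfl⟩
  obtain ⟨uL, huL⟩ : ∃ t : R, t = g * (τ * g) + (1 - g) := ⟨_, rfl⟩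
  have piece1 : v * (g * (σ * g)) = g := by
    calc v * (g * (σ * g)) = ((v * g) * σ) * g := by simp only [mul_assoc]
    _ = (v * σ) * g := by rw [hvg]
    _ = g * g := by rw [← hgσ]
    _ = g := hgg
  have piece2 : g * (g * (σ * g)) = g * (σ * g) := by
    calc g * (g * (σ * g)) = (g * g) * (σ * g) := by simp only [mul_assoc]
    _ = g * (σ * g) := by rw [hgg]
  have h_ur : (v + 1 - g) * uR = 1 := by
    have E : (v + 1 - g) * (g * (σ * g) + (1 - g)) =
        v * (g * (σ * g)) + (v - v * g) + (g * (σ * g) - g * (g * (σ * g)))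
          + (1 - g - g + g * g) := by noncomm_ring
    rw [huR, E, piece1, piece2, hvg, hgg]; abel
  have piece3 : (g * (τ * g)) * v = g := by
    calc (g * (τ * g)) * v = g * (τ * (g * v)) := by simp only [mul_assoc]
    _ = g * (τ * v) := by rw [hgv]
    _ = g * g := by rw [← hg]
    _ = g := hgg
  have piece4 : (g * (τ * g)) * g = g * (τ * g) := by
    calc (g * (τ * g)) * g = g * (τ * (g * g)) := by simp only [mul_assoc]
    _ = g * (τ * g) := by rw [hgg]
  have h_ul : uL * (v + 1 - g) = 1 := by
    have E : (g * (τ * g) + (1 - g)) * (v + 1 - g) =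
        (g * (τ * g)) * v + (g * (τ * g) - (g * (τ * g)) * g) + (v - g * v)
          + (1 - g - g + g * g) := by noncomm_ring
    rw [huL, E, piece3, piece4, hgv, hgg]; abel
  have hLR : uL = uR := by
    calc uL = uL * ((v + 1 - g) * uR) := by rw [h_ur, mul_one]
    _ = (uL * (v + 1 - g)) * uR := by simp only [mul_assoc]
    _ = uR := by rw [h_ul, one_mul]
  refine ⟨g, uR, hgg, hgv, hvg, h_ur, by rw [← hLR]; exact h_ul, ?_, ?_⟩
  · have E : v * (g * (σ * g) + (1 - g)) = v * (g * (σ * g)) + (v - v * g) := by noncomm_ring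
    rw [huR, E, piece1, hvg]; abel
  · rw [← hLR]
    have E : (g * (τ * g) + (1 - g)) * v = (g * (τ * g)) * v + (v - g * v) := by noncomm_ring
    rw [huL, E, piece3, hgv]; abel

/-- Camillo–Yu style completion: if `v` is strongly regular (with group idempotent `g` and
unit `v + 1 - g`), `f * v = v` and `f ∈ vR`, then `v + 1 - f` is a unit. -/
private lemma stmt11_CY {f v g u' ρ : R}
    (hfv : f * v = v) (hρ : v * ρ = f)
    (hgg : g * g = g) (hgv : g * v = v) (hvg : v * g = v)
    (huu' : (v + 1 - g) * u' = 1) (hu'u : u' * (v + 1 - g) = 1)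
    (hvu' : v * u' = g) (hu'v : u' * v = g) :
    ∃ W' : R, (v + 1 - f) * W' = 1 ∧ W' * (v + 1 - f) = 1 := by
  obtain ⟨u, hu⟩ : ∃ t : R, t = v + 1 - g := ⟨_, rfl⟩
  rw [← hu] at huu' hu'u
  have hfg : f * g = g := by
    calc f * g = f * (v * u') := by rw [hvu']
    _ = (f * v) * u' := by simp only [mul_assoc]
    _ = g := by rw [hfv, hvu']
  have hug : u * g = v := by
    have E : (v + 1 - g) * g = v * g + (g - g * g) := by noncomm_ring
    rw [hu, E, hvg, hgg]; abel
  have hgu : g * u = v := by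
    have E : g * (v + 1 - g) = g * v + (g - g * g) := by noncomm_ring
    rw [hu, E, hgv, hgg]; abel
  have hu'g : u' * g = g * u' := by
    calc u' * g = u' * (g * (u * u')) := by rw [huu', mul_one]
    _ = u' * ((g * u) * u') := by simp only [mul_assoc]
    _ = u' * ((u * g) * u') := by rw [hgu, hug]
    _ = (u' * u) * (g * u') := by simp only [mul_assoc]
    _ = g * u' := by rw [hu'u, one_mul]
  have hu'f : u' * f = g * ρ := by
    calc u' * f = u' * (v * ρ) := by rw [hρ]
    _ = (u' * v) * ρ := by simp only [mul_assoc]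
    _ = g * ρ := by rw [hu'v]
  obtain ⟨κ, hκ⟩ : ∃ t : R, t = g - f := ⟨_, rfl⟩
  have hκg : κ * g = 0 := by rw [hκ, sub_mul, hgg, hfg, sub_self]
  have hu'κ : u' * κ = g * u' - g * ρ := by rw [hκ, mul_sub, hu'f, hu'g]
  have hmm : (u' * κ) * (u' * κ) = 0 := by
    have h1 : κ * (u' * κ) = 0 := by
      rw [hu'κ, mul_sub, ← mul_assoc, ← mul_assoc, hκg, zero_mul, zero_mul, sub_zero]
    calc (u' * κ) * (u' * κ) = u' * (κ * (u' * κ)) := by simp only [mul_assoc]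
    _ = 0 := by rw [h1, mul_zero]
  have hW : v + 1 - f = u * (1 + u' * κ) := by
    rw [mul_add, mul_one, ← mul_assoc, huu', one_mul, hu, hκ]; abel
  have hsq1 : (1 + u' * κ) * (1 - u' * κ) = 1 := by
    have E : (1 + u' * κ) * (1 - u' * κ) = 1 - (u' * κ) * (u' * κ) := by noncomm_ring
    rw [E, hmm, sub_zero]
  have hsq2 : (1 - u' * κ) * (1 + u' * κ) = 1 := by
    have E : (1 - u' * κ) * (1 + u' * κ) = 1 - (u' * κ) * (u' * κ) := by noncomm_ring
    rw [E, hmm, sub_zero]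
  refine ⟨(1 - u' * κ) * u', ?_, ?_⟩
  · calc (v + 1 - f) * ((1 - u' * κ) * u')
        = u * (((1 + u' * κ) * (1 - u' * κ)) * u') := by rw [hW]; simp only [mul_assoc]
    _ = u * u' := by rw [hsq1, one_mul]
    _ = 1 := huu'
  · calc ((1 - u' * κ) * u') * (v + 1 - f)
        = ((1 - u' * κ) * u') * (u * (1 + u' * κ)) := by rw [hW]
    _ = (1 - u' * κ) * ((u' * u) * (1 + u' * κ)) := by simp only [mul_assoc]
    _ = (1 - u' * κ) * (1 + u' * κ) := by rw [hu'u, one_mul]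
    _ = 1 := hsq2

/-- The Dedekind-finiteness argument inside the corner `fRf`. -/
private lemma stmt11_corner_df (hS : SquareStableRangeOne R) {f α β ρ : R}
    (hff : f * f = f) (hfα : f * α = α) (hαf : α * f = α) (hfβ : f * β = β) (hβf : β * f = β)
    (hβα : β * α = f) (hαβ : α * β = ρ) (hβρ : β * ρ = β) (hfρ : f * ρ = ρ) :
    ρ = f := by
  have cop : ∃ X Y : R, (α + 1 - f) * X + (f - ρ) * Y = 1 := by
    refine ⟨β + 1 - f, 1, ?_⟩
    have e1 : (α + 1 - f) * (β + 1 - f) =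
        α * β + (α - α * f) + (β - f * β) + (1 - f - f + f * f) := by noncomm_ring
    rw [mul_one, e1, hαβ, hαf, hfβ, hff]; abel
  obtain ⟨z, hz⟩ := hS (α + 1 - f) (f - ρ) cop
  rw [pow_two] at hz
  obtain ⟨U, hU⟩ := hz
  have hA2 : (α + 1 - f) * (α + 1 - f) =
      α * α + (α - α * f) + (α - f * α) + (1 - f - f + f * f) := by noncomm_ring
  have hU' : (U : R) = α * α + 1 - f + (f - ρ) * z := by
    rw [hU, hA2, hαf, hfα, hff]; abel
  have c1 : (1 - f) * (α * α) = 0 := by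
    rw [sub_mul, one_mul, ← mul_assoc, hfα, sub_self]
  have c2 : (1 - f) * (f - ρ) = 0 := by
    rw [sub_mul, one_mul, mul_sub, hff, hfρ]; abel
  have c3 : (1 - f) * (1 - f) = 1 - f := by
    rw [mul_sub, mul_one, sub_mul, one_mul, hff]; abel
  have hfU : (1 - f) * (U : R) = 1 - f := by
    rw [hU']
    calc (1 - f) * (α * α + 1 - f + (f - ρ) * z)
        = (1 - f) * (α * α) + (1 - f) * (1 - f) + ((1 - f) * (f - ρ)) * z := by noncomm_ring
    _ = 1 - f := by rw [c1, c2, c3, zero_mul]; abel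
  have hfUinv : (1 - f) * (↑U⁻¹ : R) = 1 - f := by
    calc (1 - f) * (↑U⁻¹ : R) = ((1 - f) * (U : R)) * (↑U⁻¹ : R) := by rw [hfU]
    _ = (1 - f) * ((U : R) * (↑U⁻¹ : R)) := by simp only [mul_assoc]
    _ = 1 - f := by rw [U.mul_inv, mul_one]
  have c4 : β * (f - ρ) = 0 := by rw [mul_sub, hβf, hβρ, sub_self]
  have c5 : β * (1 - f) = 0 := by rw [mul_sub, mul_one, hβf, sub_self]
  have hβU : β * (U : R) = α := by
    calc β * (U : R) = β * (α * α) + β * (1 - f) + (β * (f - ρ)) * z := by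
          rw [hU']; noncomm_ring
    _ = (β * α) * α := by rw [c4, c5, zero_mul]; simp only [mul_assoc]; abel
    _ = α := by rw [hβα, hfα]
  have hfP : f * (↑U⁻¹ : R) = ↑U⁻¹ - 1 + f := by
    have h' : (↑U⁻¹ : R) - f * ↑U⁻¹ = 1 - f := by
      have := hfUinv; rw [sub_mul, one_mul] at this; exact this
    have e : f * (↑U⁻¹ : R) = ↑U⁻¹ - (↑U⁻¹ - f * ↑U⁻¹) := by abel
    rw [e, h']; abel
  have e1 : ((↑U⁻¹ : R) - 1 + f) * f = ↑U⁻¹ * f := by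
    rw [add_mul, sub_mul, one_mul, hff]; abel
  have hVV' : (f * ((U : R) * f)) * ((↑U⁻¹ : R) * f) = f := by
    calc (f * ((U : R) * f)) * ((↑U⁻¹ : R) * f)
        = (f * (U : R)) * ((f * ↑U⁻¹) * f) := by simp only [mul_assoc]
    _ = (f * (U : R)) * (((↑U⁻¹ : R) - 1 + f) * f) := by rw [hfP]
    _ = (f * (U : R)) * (↑U⁻¹ * f) := by rw [e1]
    _ = f * (((U : R) * ↑U⁻¹) * f) := by simp only [mul_assoc]
    _ = f := by rw [U.mul_inv, one_mul, hff]
  have hfU2 : f * (U : R) = (U : R) - 1 + f := by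
    have h' : (U : R) - f * (U : R) = 1 - f := by
      have := hfU; rw [sub_mul, one_mul] at this; exact this
    have e : f * (U : R) = (U : R) - ((U : R) - f * (U : R)) := by abel
    rw [e, h']; abel
  have e2 : ((U : R) - 1 + f) * f = (U : R) * f := by
    rw [add_mul, sub_mul, one_mul, hff]; abel
  have hV'V : ((↑U⁻¹ : R) * f) * (f * ((U : R) * f)) = f := by
    calc ((↑U⁻¹ : R) * f) * (f * ((U : R) * f))
        = (↑U⁻¹ : R) * (((f * f) * (U : R)) * f) := by simp only [mul_assoc]
    _ = (↑U⁻¹ : R) * ((f * (U : R)) * f) := by rw [hff]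
    _ = (↑U⁻¹ : R) * (((U : R) - 1 + f) * f) := by rw [hfU2]
    _ = (↑U⁻¹ : R) * ((U : R) * f) := by rw [e2]
    _ = ((↑U⁻¹ : R) * (U : R)) * f := by simp only [mul_assoc]
    _ = f := by rw [U.inv_mul, one_mul]
  obtain ⟨V, hV⟩ : ∃ t : R, t = f * ((U : R) * f) := ⟨_, rfl⟩
  obtain ⟨V', hV'⟩ : ∃ t : R, t = (↑U⁻¹ : R) * f := ⟨_, rfl⟩
  rw [← hV, ← hV'] at hVV' hV'V
  have hβV : β * V = α := by
    calc β * V = ((β * f) * (U : R)) * f := by rw [hV]; simp only [mul_assoc]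
    _ = (β * (U : R)) * f := by rw [hβf]
    _ = α * f := by rw [hβU]
    _ = α := hαf
  have hβ' : β = α * V' := by
    calc β = β * f := hβf.symm
    _ = β * (V * V') := by rw [hVV']
    _ = (β * V) * V' := by simp only [mul_assoc]
    _ = α * V' := by rw [hβV]
  have key : α * (V' * α) = f := by
    calc α * (V' * α) = (α * V') * α := by simp only [mul_assoc]
    _ = β * α := by rw [← hβ']
    _ = f := hβα
  have hfV' : f * V' = V' := by
    calc f * V' = (f * ↑U⁻¹) * f := by rw [hV']; simp only [mul_assoc]
    _ = ((↑U⁻¹ : R) - 1 + f) * f := by rw [hfP]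
    _ = (↑U⁻¹ : R) * f := e1
    _ = V' := hV'.symm
  have hβ'' : β = V' * α := by
    calc β = β * f := hβf.symm
    _ = β * (α * (V' * α)) := by rw [key]
    _ = (β * α) * (V' * α) := by simp only [mul_assoc]
    _ = f * (V' * α) := by rw [hβα]
    _ = (f * V') * α := by simp only [mul_assoc]
    _ = V' * α := by rw [hfV']
  calc ρ = α * β := hαβ.symm
  _ = α * (V' * α) := by rw [hβ'']
  _ = f := key

/-- Forward direction, at the level of the ring: in a ring with square stable range one,
every regular element is strongly regular. -/
private lemma stmt11_fwd (hS : SquareStableRangeOne R) {a x₀ : R} (h : a = a * x₀ * a) :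
    (∃ t, a = a * a * t) ∧ (∃ w, a = w * (a * a)) := by
  have hp : ∀ c : R, a * (x₀ * (a * c)) = a * c := fun c => by
    rw [← mul_assoc, ← mul_assoc, ← h]
  obtain ⟨x, hx⟩ : ∃ t : R, t = x₀ * (a * x₀) := ⟨_, rfl⟩
  have X1 : ∀ c : R, a * (x * (a * c)) = a * c := fun c => by
    simp only [hx, mul_assoc, hp]
  have X1b : a * (x * a) = a := by simpa using X1 1
  have X2 : ∀ c : R, x * (a * (x * c)) = x * c := fun c => by
    simp only [hx, mul_assoc, hp]
  obtain ⟨y, hy⟩ := hS a (1 - a * x) ⟨x, 1, by noncomm_ring⟩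
  rw [pow_two] at hy
  obtain ⟨u, hu⟩ := hy
  have k1 : a * (x * (u : R)) = a * a := by
    rw [hu]
    calc a * (x * (a * a + (1 - a * x) * y))
        = a * (x * (a * a)) + (a * (x * y) - a * (x * (a * (x * y)))) := by noncomm_ring
    _ = a * a := by rw [X1, X1]; abel
  have kB : a * (a * (↑u⁻¹ : R)) = a * x := by
    calc a * (a * (↑u⁻¹ : R)) = (a * a) * ↑u⁻¹ := by simp only [mul_assoc]
    _ = (a * (x * (u : R))) * ↑u⁻¹ := by rw [k1]
    _ = a * (x * ((u : R) * ↑u⁻¹)) := by simp only [mul_assoc]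
    _ = a * x := by rw [u.mul_inv, mul_one]
  obtain ⟨t, ht⟩ : ∃ s : R, s = (↑u⁻¹ : R) * a := ⟨_, rfl⟩
  have T1p : ∀ c : R, a * (a * (t * c)) = a * c := fun c => by
    calc a * (a * (t * c)) = (a * (a * (↑u⁻¹ : R))) * (a * c) := by
          rw [ht]; simp only [mul_assoc]
    _ = (a * x) * (a * c) := by rw [kB]
    _ = a * c := by simp only [mul_assoc]; rw [X1]
  have T1b : a * (a * t) = a := by simpa using T1p 1
  have T2p : ∀ c : R, t * (a * (t * c)) = t * c := fun c => by
    calc t * (a * (t * c)) = (↑u⁻¹ : R) * (a * (a * (t * c))) := by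
          rw [ht]; simp only [mul_assoc]
    _ = (↑u⁻¹ : R) * (a * c) := by rw [T1p]
    _ = t * c := by rw [ht]; simp only [mul_assoc]
  obtain ⟨z, hz⟩ := hS t (1 - t * a) ⟨a, 1, by noncomm_ring⟩
  rw [pow_two] at hz
  obtain ⟨w, hw⟩ := hz
  have k5 : a * (a * (w : R)) = a * t := by
    rw [hw]
    calc a * (a * (t * t + (1 - t * a) * z))
        = a * (a * (t * t)) + (a * (a * z) - a * (a * (t * (a * z)))) := by noncomm_ring
    _ = a * t := by rw [T1p, T1p]; abel
  have kC : a * (t * (↑w⁻¹ : R)) = a * a := by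
    calc a * (t * (↑w⁻¹ : R)) = (a * t) * ↑w⁻¹ := by simp only [mul_assoc]
    _ = (a * (a * (w : R))) * ↑w⁻¹ := by rw [k5]
    _ = a * (a * ((w : R) * ↑w⁻¹)) := by simp only [mul_assoc]
    _ = a * a := by rw [w.mul_inv, mul_one]
  have kD : a = a * (t * ((↑w⁻¹ : R) * t)) := by
    calc a = a * (a * t) := T1b.symm
    _ = (a * a) * t := by simp only [mul_assoc]
    _ = (a * (t * (↑w⁻¹ : R))) * t := by rw [kC]
    _ = a * (t * ((↑w⁻¹ : R) * t)) := by simp only [mul_assoc]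
  have K7 : a * (t * a) = a := by
    calc a * (t * a) = a * (t * (a * (t * ((↑w⁻¹ : R) * t)))) :=
          congrArg (fun r => a * (t * r)) kD
    _ = a * (t * ((↑w⁻¹ : R) * t)) := by rw [T2p]
    _ = a := kD.symm
  have K7p : ∀ c : R, a * (t * (a * c)) = a * c := fun c => by
    calc a * (t * (a * c)) = (a * (t * a)) * c := by simp only [mul_assoc]
    _ = a * c := by rw [K7]
  have P8p : ∀ c : R, a * (a * ((w : R) * c)) = a * (t * c) := fun c => by
    calc a * (a * ((w : R) * c)) = (a * (a * (w : R))) * c := by simp only [mul_assoc]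
    _ = (a * t) * c := by rw [k5]
    _ = a * (t * c) := by simp only [mul_assoc]
  have hff : (x * a) * (x * a) = x * a := by
    simp only [mul_assoc, X1b]
  have hfα : (x * a) * (x * (a * ((w : R) * a))) = x * (a * ((w : R) * a)) := by
    simp only [mul_assoc, X2]
  have hαf : (x * (a * ((w : R) * a))) * (x * a) = x * (a * ((w : R) * a)) := by
    simp only [mul_assoc, X1b]
  have hfβ : (x * a) * (x * (a * a)) = x * (a * a) := by
    simp only [mul_assoc, X2]
  have hβf : (x * (a * a)) * (x * a) = x * (a * a) := by
    simp only [mul_assoc, X1b]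
  have hβα : (x * (a * a)) * (x * (a * ((w : R) * a))) = x * a := by
    simp only [mul_assoc, X1, P8p, K7]
  have hαβ : (x * (a * ((w : R) * a))) * (x * (a * a)) = x * (a * ((w : R) * (a * a))) := by
    simp only [mul_assoc, X1]
  have hβρ : (x * (a * a)) * (x * (a * ((w : R) * (a * a)))) = x * (a * a) := by
    simp only [mul_assoc, X1, P8p, K7p]
  have hfρ : (x * a) * (x * (a * ((w : R) * (a * a)))) = x * (a * ((w : R) * (a * a))) := by
    simp only [mul_assoc, X2]
  have hfin := stmt11_corner_df hS hff hfα hαf hfβ hβf hβα hαβ hβρ hfρ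
  constructor
  · exact ⟨t, by rw [mul_assoc]; exact T1b.symm⟩
  · refine ⟨a * (w : R), ?_⟩
    calc a = a * (x * a) := X1b.symm
    _ = a * (x * (a * ((w : R) * (a * a)))) := by rw [← hfin]
    _ = a * ((w : R) * (a * a)) := by rw [X1]
    _ = (a * (w : R)) * (a * a) := by simp only [mul_assoc]

/-- Backward direction core: from the exchange idempotent and strong regularity
(of all regular elements) one gets the square stable range one condition. -/
private lemma stmt11_bwd {e a r₁ s₁ b : R}
    (he : e * e = e) (her : e = a * r₁) (hes : 1 - e = b * s₁)
    (hreg : ∀ z : R, (∃ m, z = z * m * z) →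
      ((∃ σ, z = z * z * σ) ∧ (∃ τ, z = τ * (z * z)))) :
    ∃ Y W' : R, (a * a + b * Y) * W' = 1 ∧ W' * (a * a + b * Y) = 1 := by
  obtain ⟨v, hv⟩ : ∃ t : R, t = e * a := ⟨_, rfl⟩
  have hva_reg : v = v * r₁ * v := by
    symm
    calc v * r₁ * v = (e * (a * r₁)) * (e * a) := by rw [hv]; simp only [mul_assoc]
    _ = (e * e) * (e * a) := by rw [← her]
    _ = e * (e * a) := by rw [he]
    _ = (e * e) * a := by simp only [mul_assoc]
    _ = e * a := by rw [he]
    _ = v := hv.symm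
  obtain ⟨⟨σ, hσ⟩, ⟨τ, hτ⟩⟩ := hreg v ⟨r₁, hva_reg⟩
  obtain ⟨g, u', hgg, hgv, hvg, huu', hu'u, hvu', hu'v⟩ := stmt11_sreg_unit hσ hτ
  have hev : e * v = v := by rw [hv, ← mul_assoc, he]
  have hvr : v * r₁ = e := by rw [hv, mul_assoc, ← her, he]
  have heg : e * g = g := by rw [← hvu', ← mul_assoc, hev]
  have hge : g * e = e := by rw [← hvr, ← mul_assoc, hgv]
  obtain ⟨Ω', hΩ1, hΩ2⟩ := stmt11_CY hev hvr hgg hgv hvg huu' hu'u hvu' hu'v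
  obtain ⟨δ, hδ⟩ : ∃ t : R, t = e - g := ⟨_, rfl⟩
  have hδδ : δ * δ = 0 := by
    rw [hδ]
    calc (e - g) * (e - g) = (e * e - e * g) - (g * e - g * g) := by noncomm_ring
    _ = 0 := by rw [he, heg, hge, hgg]; abel
  obtain ⟨c, hc⟩ : ∃ t : R, t = r₁ * ((1 - δ) * r₁) := ⟨_, rfl⟩
  have hvac : v * (a * c) = e := by
    have h1 : v * e = v * (1 + δ) := by
      rw [hδ]
      calc v * e = v + (v * e - v * g) := by rw [hvg]; abel
      _ = v * (1 + (e - g)) := by noncomm_ring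
    calc v * (a * c) = (v * (a * r₁)) * ((1 - δ) * r₁) := by
          rw [hc]; simp only [mul_assoc]
    _ = (v * e) * ((1 - δ) * r₁) := by rw [← her]
    _ = (v * (1 + δ)) * ((1 - δ) * r₁) := by rw [h1]
    _ = v * (((1 + δ) * (1 - δ)) * r₁) := by simp only [mul_assoc]
    _ = v * ((1 - δ * δ) * r₁) := by
          rw [show (1 + δ) * (1 - δ) = 1 - δ * δ from by noncomm_ring]
    _ = v * r₁ := by rw [hδδ, sub_zero, one_mul]
    _ = e := hvr
  obtain ⟨v₂, hv₂⟩ : ∃ t : R, t = g * a := ⟨_, rfl⟩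
  have hu'va : u' * (v * a) = v₂ := by rw [← mul_assoc, hu'v, hv₂]
  have hm : (v * a) * c * (v * a) = v * a := by
    calc (v * a) * c * (v * a) = (v * (a * c)) * (v * a) := by simp only [mul_assoc]
    _ = e * (v * a) := by rw [hvac]
    _ = (e * v) * a := by simp only [mul_assoc]
    _ = v * a := by rw [hev]
  have hv₂reg : v₂ = v₂ * (c * (v + 1 - g)) * v₂ := by
    have h2 : (v + 1 - g) * (u' * (v * a)) = v * a := by rw [← mul_assoc, huu', one_mul]
    symm
    calc v₂ * (c * (v + 1 - g)) * v₂
        = (u' * (v * a)) * (c * ((v + 1 - g) * (u' * (v * a)))) := by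
          rw [← hu'va]; simp only [mul_assoc]
    _ = (u' * (v * a)) * (c * (v * a)) := by rw [h2]
    _ = u' * ((v * a) * c * (v * a)) := by simp only [mul_assoc]
    _ = u' * (v * a) := by rw [hm]
    _ = v₂ := hu'va
  obtain ⟨⟨σ₂, hσ₂⟩, ⟨τ₂, hτ₂⟩⟩ := hreg v₂ ⟨c * (v + 1 - g), hv₂reg⟩
  obtain ⟨g₂, u₂', hgg₂, hg₂v₂, hv₂g₂, huu₂, hu₂u, hv₂u₂, hu₂v₂⟩ := stmt11_sreg_unit hσ₂ hτ₂
  have hgv₂ : g * v₂ = v₂ := by rw [hv₂, ← mul_assoc, hgg]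
  have hρ₂ : v₂ * (r₁ * g) = g := by
    calc v₂ * (r₁ * g) = g * ((a * r₁) * g) := by rw [hv₂]; simp only [mul_assoc]
    _ = g * (e * g) := by rw [← her]
    _ = g * g := by rw [heg]
    _ = g := hgg
  obtain ⟨Λ', hΛ1, hΛ2⟩ := stmt11_CY hgv₂ hρ₂ hgg₂ hg₂v₂ hv₂g₂ huu₂ hu₂u hv₂u₂ hu₂v₂
  have hev₂ : e * v₂ = v₂ := by rw [hv₂, ← mul_assoc, heg]
  have hea : e * (a * a) = v * a := by rw [hv]; simp only [mul_assoc]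
  have hvv₂ : v * v₂ = v * a := by rw [hv₂, ← mul_assoc, hvg]
  have hkey : a * a + b * (s₁ * ((v₂ + 1 - g) - a * a)) = (v + 1 - e) * (v₂ + 1 - g) := by
    have hb : b * (s₁ * ((v₂ + 1 - g) - a * a)) = (1 - e) * ((v₂ + 1 - g) - a * a) := by
      rw [← mul_assoc, ← hes]
    have L : a * a + b * (s₁ * ((v₂ + 1 - g) - a * a)) = v * a + 1 - e := by
      rw [hb]
      calc a * a + (1 - e) * ((v₂ + 1 - g) - a * a)
          = ((v₂ + 1 - g) - (e * v₂ + e - e * g)) + e * (a * a) := by noncomm_ring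
      _ = v * a + 1 - e := by rw [hev₂, heg, hea]; abel
    have Rt : (v + 1 - e) * (v₂ + 1 - g) = v * a + 1 - e := by
      calc (v + 1 - e) * (v₂ + 1 - g)
          = v * v₂ + (v - v * g) + (v₂ - e * v₂) + (1 - g - e + e * g) := by noncomm_ring
      _ = v * a + 1 - e := by rw [hvv₂, hvg, hev₂, heg]; abel
    rw [L, ← Rt]
  refine ⟨s₁ * ((v₂ + 1 - g) - a * a), Λ' * Ω', ?_, ?_⟩
  · rw [hkey]
    calc (v + 1 - e) * (v₂ + 1 - g) * (Λ' * Ω')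
        = (v + 1 - e) * (((v₂ + 1 - g) * Λ') * Ω') := by simp only [mul_assoc]
    _ = (v + 1 - e) * Ω' := by rw [hΛ1, one_mul]
    _ = 1 := hΩ1
  · rw [hkey]
    calc (Λ' * Ω') * ((v + 1 - e) * (v₂ + 1 - g))
        = Λ' * ((Ω' * (v + 1 - e)) * (v₂ + 1 - g)) := by simp only [mul_assoc]
    _ = Λ' * (v₂ + 1 - g) := by rw [hΩ2, one_mul]
    _ = 1 := hΛ2

private lemma stmt11_coe_rep (q : ((⊥ : TwoSidedIdeal R).jacobson).ringCon.Quotient) :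
    ∃ r : R, (r : ((⊥ : TwoSidedIdeal R).jacobson).ringCon.Quotient) = q := by
  obtain ⟨r, hr⟩ := Quot.exists_rep q
  exact ⟨r, hr⟩

private lemma stmt11_jac_unit {j : R} (hj : j ∈ (⊥ : TwoSidedIdeal R).jacobson) :
    ∃ z : R, (1 + j) * z = 1 ∧ z * (1 + j) = 1 := by
  obtain ⟨z, hz⟩ := TwoSidedIdeal.mem_jacobson_iff.1 hj 1
  rw [TwoSidedIdeal.mem_bot, mul_one] at hz
  have h' : z * j + z = 1 := sub_eq_zero.1 hz
  have hz1 : z * (1 + j) = 1 := by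
    rw [mul_add, mul_one, add_comm]; exact h'
  have hmem : -(z * j) ∈ (⊥ : TwoSidedIdeal R).jacobson :=
    TwoSidedIdeal.neg_mem _ (TwoSidedIdeal.mul_mem_left _ z j hj)
  obtain ⟨z', hz'⟩ := TwoSidedIdeal.mem_jacobson_iff.1 hmem 1
  rw [TwoSidedIdeal.mem_bot, mul_one] at hz'
  have h'' : z' * -(z * j) + z' = 1 := sub_eq_zero.1 hz'
  have hz'1 : z' * z = 1 := by
    have h1 : z' * (1 + -(z * j)) = 1 := by
      rw [mul_add, mul_one, add_comm]; exact h''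
    have h2 : 1 + -(z * j) = z := by rw [← h']; abel
    rwa [h2] at h1
  have hfin : 1 + j = z' := by
    calc 1 + j = (z' * z) * (1 + j) := by rw [hz'1, one_mul]
    _ = z' * (z * (1 + j)) := by simp only [mul_assoc]
    _ = z' := by rw [hz1, mul_one]
  exact ⟨z, by rw [hfin]; exact hz'1, hz1⟩

private lemma stmt11_unit_lift {u : R}
    (h : ∃ W : ((⊥ : TwoSidedIdeal R).jacobson).ringCon.Quotient,
      (u : ((⊥ : TwoSidedIdeal R).jacobson).ringCon.Quotient) * W = 1 ∧
      W * (u : ((⊥ : TwoSidedIdeal R).jacobson).ringCon.Quotient) = 1) :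
    IsUnit u := by
  obtain ⟨W, hW1, hW2⟩ := h
  obtain ⟨V, rfl⟩ := stmt11_coe_rep W
  have key : ∀ p : R, ((p : ((⊥ : TwoSidedIdeal R).jacobson).ringCon.Quotient) = 1) →
      ∃ z : R, p * z = 1 ∧ z * p = 1 := by
    intro p hp
    have h1 : p - 1 ∈ (⊥ : TwoSidedIdeal R).jacobson := by
      rw [← TwoSidedIdeal.rel_iff]
      exact (RingCon.eq _).1 (by rw [hp]; exact (RingCon.coe_one _).symm)
    obtain ⟨z, hz1, hz2⟩ := stmt11_jac_unit h1
    rw [show (1 : R) + (p - 1) = p from by abel] at hz1 hz2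
    exact ⟨z, hz1, hz2⟩
  obtain ⟨z₁, hz₁a, hz₁b⟩ := key (u * V) (by rw [RingCon.coe_mul]; exact hW1)
  obtain ⟨z₂, hz₂a, hz₂b⟩ := key (V * u) (by rw [RingCon.coe_mul]; exact hW2)
  have hub : u * (V * z₁) = 1 := by rw [← mul_assoc]; exact hz₁a
  have hcu : (z₂ * V) * u = 1 := by rw [mul_assoc]; exact hz₂b
  have hcb : z₂ * V = V * z₁ := by
    calc z₂ * V = (z₂ * V) * (u * (V * z₁)) := by rw [hub, mul_one]
    _ = ((z₂ * V) * u) * (V * z₁) := by simp only [mul_assoc]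
    _ = V * z₁ := by rw [hcu, one_mul]
  exact ⟨⟨u, V * z₁, hub, by rw [← hcb]; exact hcu⟩, rfl⟩

end Stmt11Helpers

theorem stmt11 {R : Type*} [Ring R] (hR : ∀ a : R, ∃ e : R, IsIdempotentElem e ∧
      (∃ x : R, e = a * x) ∧ (∃ y : R, 1 - e = (1 - a) * y)) :
    SquareStableRangeOne R ↔
      ∀ a : R, IsRegularElem a →
        IsStronglyRegularElem ((a : ((⊥ : TwoSidedIdeal R).jacobson).ringCon.Quotient)) := by
  constructor
  · intro hS a ha
    obtain ⟨x₀, hx₀⟩ := ha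
    obtain ⟨⟨t, ht⟩, ⟨w, hw⟩⟩ := stmt11_fwd hS hx₀
    constructor
    · refine ⟨(t : ((⊥ : TwoSidedIdeal R).jacobson).ringCon.Quotient), ?_⟩
      rw [pow_two, ← RingCon.coe_mul, ← RingCon.coe_mul, ← ht]
    · refine ⟨(w : ((⊥ : TwoSidedIdeal R).jacobson).ringCon.Quotient), ?_⟩
      rw [pow_two, ← RingCon.coe_mul, ← RingCon.coe_mul, ← hw]
  · intro H a b hab
    obtain ⟨x, y, hxy⟩ := hab
    obtain ⟨e, he, ⟨r, hr⟩, ⟨s, hs⟩⟩ := hR (a * x)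
    have her : e = a * (x * r) := by rw [hr, mul_assoc]
    have hes : 1 - e = b * (y * s) := by
      have hby : b * y = 1 - a * x := by
        rw [← hxy]; abel
      rw [hs, ← hby, mul_assoc]
    -- strong regularity of all regular elements of the quotient
    have hreg : ∀ z : ((⊥ : TwoSidedIdeal R).jacobson).ringCon.Quotient,
        (∃ m, z = z * m * z) →
        ((∃ σ, z = z * z * σ) ∧ (∃ τ, z = τ * (z * z))) := by
      intro z hz
      obtain ⟨m, hm⟩ := hz
      obtain ⟨Z, rfl⟩ := stmt11_coe_rep z
      obtain ⟨M, rfl⟩ := stmt11_coe_rep m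
      obtain ⟨E, hE, ⟨r', hr'⟩, ⟨s', hs'⟩⟩ := hR (Z * M)
      have hr'p : ∀ c : R, Z * (M * (r' * c)) = E * c := fun c => by
        rw [← mul_assoc, ← mul_assoc, ← hr']
      have hEZreg : IsRegularElem (E * Z) := by
        refine ⟨M * r', ?_⟩
        symm
        calc (E * Z) * (M * r') * (E * Z)
            = E * (Z * (M * (r' * (E * Z)))) := by simp only [mul_assoc]
        _ = E * (E * (E * Z)) := by rw [hr'p]
        _ = ((E * E) * E) * Z := by simp only [mul_assoc]
        _ = E * Z := by rw [hE.eq, hE.eq]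
      have hSR := H (E * Z) hEZreg
      -- identify the image of E * Z with z
      have hQE : (E : ((⊥ : TwoSidedIdeal R).jacobson).ringCon.Quotient)
          = (Z : ((⊥ : TwoSidedIdeal R).jacobson).ringCon.Quotient) * M := by
        have h1 : (E : ((⊥ : TwoSidedIdeal R).jacobson).ringCon.Quotient)
            = ((Z : ((⊥ : TwoSidedIdeal R).jacobson).ringCon.Quotient) * M) * r' := by
          rw [← RingCon.coe_mul, ← RingCon.coe_mul, ← hr']
        have h2 : 1 - (E : ((⊥ : TwoSidedIdeal R).jacobson).ringCon.Quotient)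
            = (1 - (Z : ((⊥ : TwoSidedIdeal R).jacobson).ringCon.Quotient) * M) * s' := by
          have := congrArg
            (fun r : R => (r : ((⊥ : TwoSidedIdeal R).jacobson).ringCon.Quotient)) hs'
          simpa only [RingCon.coe_sub, RingCon.coe_one, RingCon.coe_mul] using this
        obtain ⟨ZQ, hZQ⟩ : ∃ tq, tq = (Z : ((⊥ : TwoSidedIdeal R).jacobson).ringCon.Quotient) :=
          ⟨_, rfl⟩
        obtain ⟨MQ, hMQ⟩ : ∃ tq, tq = (M : ((⊥ : TwoSidedIdeal R).jacobson).ringCon.Quotient) :=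
          ⟨_, rfl⟩
        obtain ⟨EQ, hEQ⟩ : ∃ tq, tq = (E : ((⊥ : TwoSidedIdeal R).jacobson).ringCon.Quotient) :=
          ⟨_, rfl⟩
        rw [← hZQ, ← hMQ, ← hEQ] at h1 h2 ⊢
        have hmm' : ZQ = ZQ * MQ * ZQ := by rw [hZQ, hMQ]; exact hm
        have hcc : (ZQ * MQ) * (ZQ * MQ) = ZQ * MQ := by
          calc (ZQ * MQ) * (ZQ * MQ) = ((ZQ * MQ) * ZQ) * MQ := by simp only [mul_assoc]
          _ = ZQ * MQ := by rw [← hmm']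
        have hcE : (ZQ * MQ) * EQ = EQ := by
          calc (ZQ * MQ) * EQ = (ZQ * MQ) * ((ZQ * MQ) * r') := by rw [← h1]
          _ = ((ZQ * MQ) * (ZQ * MQ)) * r' := by simp only [mul_assoc]
          _ = (ZQ * MQ) * r' := by rw [hcc]
          _ = EQ := h1.symm
        have hcE2 : (ZQ * MQ) * (1 - EQ) = 0 := by
          rw [h2, ← mul_assoc]
          calc ((ZQ * MQ) * (1 - ZQ * MQ)) * s'
              = ((ZQ * MQ) - (ZQ * MQ) * (ZQ * MQ)) * s' := by noncomm_ring
          _ = 0 := by rw [hcc, sub_self, zero_mul]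
        calc EQ = (ZQ * MQ) * EQ := hcE.symm
        _ = (ZQ * MQ) * EQ + (ZQ * MQ) * (1 - EQ) := by rw [hcE2, add_zero]
        _ = ZQ * MQ := by noncomm_ring
      have hQEZ : ((E * Z : R) : ((⊥ : TwoSidedIdeal R).jacobson).ringCon.Quotient)
          = (Z : ((⊥ : TwoSidedIdeal R).jacobson).ringCon.Quotient) := by
        rw [RingCon.coe_mul, hQE]
        exact hm.symm
      obtain ⟨⟨σ, hσ⟩, ⟨τ, hτ⟩⟩ := hSR
      rw [pow_two, hQEZ] at hσ hτ
      exact ⟨⟨σ, hσ⟩, ⟨τ, hτ⟩⟩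
    -- push the data to the quotient and apply the core lemma
    have heQ : ((e : R) : ((⊥ : TwoSidedIdeal R).jacobson).ringCon.Quotient) *
        ((e : R) : ((⊥ : TwoSidedIdeal R).jacobson).ringCon.Quotient) = (e : R) := by
      rw [← RingCon.coe_mul, he.eq]
    have herQ : ((e : R) : ((⊥ : TwoSidedIdeal R).jacobson).ringCon.Quotient)
        = (a : ((⊥ : TwoSidedIdeal R).jacobson).ringCon.Quotient) * ((x * r : R)) := by
      rw [← RingCon.coe_mul, ← her]
    have hesQ : 1 - ((e : R) : ((⊥ : TwoSidedIdeal R).jacobson).ringCon.Quotient)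
        = (b : ((⊥ : TwoSidedIdeal R).jacobson).ringCon.Quotient) * ((y * s : R)) := by
      have := congrArg
        (fun t : R => (t : ((⊥ : TwoSidedIdeal R).jacobson).ringCon.Quotient)) hes
      simpa only [RingCon.coe_sub, RingCon.coe_one, RingCon.coe_mul] using this
    obtain ⟨Y, W', hW1, hW2⟩ := stmt11_bwd heQ herQ hesQ hreg
    obtain ⟨Y₀, rfl⟩ := stmt11_coe_rep Y
    refine ⟨Y₀, ?_⟩
    rw [pow_two]
    apply stmt11_unit_lift
    refine ⟨W', ?_, ?_⟩
    · rw [RingCon.coe_add, RingCon.coe_mul, RingCon.coe_mul]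
      exact hW1
    · rw [RingCon.coe_add, RingCon.coe_mul, RingCon.coe_mul]
      exact hW2
end

section
/- Let I be an exchange ideal of a ring R. Then I is square stable if and only if every regular element of I is strongly regular. -/
/-- From square stability: a regular element of `I` lies in `a²R`. -/
private lemma sq_left {R : Type*} [Ring R] {I : TwoSidedIdeal R} (hs : SquareStable I)
    {m : R} (hm : m ∈ I) {x : R} (hx : m = m * x * m) : ∃ s : R, m = m ^ 2 * s := by
  obtain ⟨y, hy⟩ := hs m hm (1 - m * x) ⟨x, 1, by noncomm_ring⟩
  have hu := hy.unit_spec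
  have key : (m * x) * (hy.unit : R) = m ^ 2 := by
    rw [hu]
    have e : (m * x) * (m ^ 2 + (1 - m * x) * y)
        = (m * x * m) * m + ((m * x) * y - ((m * x * m) * x) * y) := by noncomm_ring
    rw [e, ← hx]; noncomm_ring
  refine ⟨(↑hy.unit⁻¹ : R) * m, ?_⟩
  calc m = m * x * m := hx
    _ = (m * x) * ((hy.unit : R) * (↑hy.unit⁻¹ : R)) * m := by rw [Units.mul_inv, mul_one]
    _ = ((m * x) * (hy.unit : R)) * ((↑hy.unit⁻¹ : R) * m) := by noncomm_ring
    _ = m ^ 2 * ((↑hy.unit⁻¹ : R) * m) := by rw [key]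

/-- Packaging of strongly regular data: a commuting idempotent `π` and a unit `v`. -/
private lemma sreg_pack {R : Type*} [Ring R] {h : R}
    (h1 : ∃ z : R, h = h ^ 2 * z) (h2 : ∃ t : R, h = t * h ^ 2) :
    ∃ π v w : R, π * π = π ∧ π * h = h ∧ h * π = h ∧ π = h * w ∧ IsUnit v ∧
      v * π = h ∧ π * v = h ∧ v * (1 - π) = 1 - π := by
  obtain ⟨z, hz⟩ := h1
  obtain ⟨t, ht⟩ := h2
  have hzt : h * z = t * h := by
    conv_lhs => rw [ht]
    conv_rhs => rw [hz]
    noncomm_ring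
  have hπh : (h * z) * h = h := by
    rw [hzt]
    have e : (t * h) * h = t * h ^ 2 := by noncomm_ring
    rw [e, ← ht]
  have hhπ : h * (h * z) = h := by
    have e : h * (h * z) = h ^ 2 * z := by noncomm_ring
    rw [e, ← hz]
  have hππ : (h * z) * (h * z) = h * z := by
    have e : (h * z) * (h * z) = ((h * z) * h) * z := by noncomm_ring
    rw [e, hπh]
  have hwz : t * (h * z) = (h * z) * z := by
    have e : t * (h * z) = (t * h) * z := by noncomm_ring
    rw [e, ← hzt]
  have hhw : h * (t * (h * z)) = h * z := by
    rw [hwz, ← mul_assoc, hhπ]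
  have hwh : (t * (h * z)) * h = h * z := by
    have e : (t * (h * z)) * h = t * ((h * z) * h) := by noncomm_ring
    rw [e, hπh, hzt]
  have hπw : (h * z) * (t * (h * z)) = t * (h * z) := by
    rw [hwz, ← mul_assoc, hππ]
  have hwπ : (t * (h * z)) * (h * z) = t * (h * z) := by
    have e : (t * (h * z)) * (h * z) = t * ((h * z) * (h * z)) := by noncomm_ring
    rw [e, hππ]
  refine ⟨h * z, h + (1 - h * z), t * (h * z), hππ, hπh, hhπ, hhw.symm, ?_, ?_, ?_, ?_⟩
  · refine ⟨⟨h + (1 - h * z), t * (h * z) + (1 - h * z), ?_, ?_⟩, rfl⟩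
    · have e : (h + (1 - h * z)) * (t * (h * z) + (1 - h * z))
          = h * (t * (h * z)) + (h - h * (h * z)) + ((t * (h * z)) - (h * z) * (t * (h * z)))
            + (1 - (h * z)) - ((h * z) - (h * z) * (h * z)) := by noncomm_ring
      rw [e, hhw, hhπ, hπw, hππ]; noncomm_ring
    · have e : (t * (h * z) + (1 - h * z)) * (h + (1 - h * z))
          = (t * (h * z)) * h + ((t * (h * z)) - (t * (h * z)) * (h * z))
            + (h - (h * z) * h) + (1 - (h * z)) - ((h * z) - (h * z) * (h * z)) := by noncomm_ring
      rw [e, hwh, hwπ, hπh, hππ]; noncomm_ring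
  · have e : (h + (1 - h * z)) * (h * z) = h * (h * z) + ((h * z) - (h * z) * (h * z)) := by
      noncomm_ring
    rw [e, hhπ, hππ]; noncomm_ring
  · have e : (h * z) * (h + (1 - h * z)) = (h * z) * h + ((h * z) - (h * z) * (h * z)) := by
      noncomm_ring
    rw [e, hπh, hππ]; noncomm_ring
  · have e : (h + (1 - h * z)) * (1 - (h * z))
        = (h - h * (h * z)) + (1 - (h * z)) - ((h * z) - (h * z) * (h * z)) := by noncomm_ring
    rw [e, hhπ, hππ]; noncomm_ring

private lemma sq_zero_unit {R : Type*} [Ring R] {n : R} (hn : n * n = 0) : IsUnit (1 - n) := by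
  refine ⟨⟨1 - n, 1 + n, ?_, ?_⟩, rfl⟩
  · have e : (1 - n) * (1 + n) = 1 - n * n := by noncomm_ring
    rw [e, hn, sub_zero]
  · have e : (1 + n) * (1 - n) = 1 - n * n := by noncomm_ring
    rw [e, hn, sub_zero]

theorem stmt12 {R : Type*} [Ring R] (I : TwoSidedIdeal R) (hI : ExchangeIdeal I) :
    SquareStable I ↔ ∀ a ∈ I, IsRegularElem a → IsStronglyRegularElem a := by
  constructor
  · -- square stable ⇒ regular elements are strongly regular
    intro hsq a ha hreg
    obtain ⟨x, hx⟩ := hreg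
    obtain ⟨s, hs1⟩ := sq_left hsq ha hx
    refine ⟨⟨s, hs1⟩, ?_⟩
    have hee : (a * x) * (a * x) = a * x := by
      have e : (a * x) * (a * x) = (a * x * a) * x := by noncomm_ring
      rw [e, ← hx]
    have hea : (a * x) * a = a := hx.symm
    set e := a * x with he
    set g := a * e with hg
    have hge : g * e = g := by rw [hg, mul_assoc, hee]
    have heg : e * g = g := by rw [hg, ← mul_assoc, hea]
    have hgd : g * (a * (s * x)) = e := by
      have e1 : g * (a * (s * x)) = a * ((e * a) * (s * x)) := by rw [hg]; noncomm_ring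
      rw [e1, hea]
      have e2 : a * (a * (s * x)) = (a ^ 2 * s) * x := by noncomm_ring
      rw [e2, ← hs1, ← he]
    set δ := (e * (a * (s * x))) * e with hδ
    have heδ : e * δ = δ := by
      rw [hδ]
      have e1 : e * ((e * (a * (s * x))) * e) = ((e * e) * (a * (s * x))) * e := by noncomm_ring
      rw [e1, hee]
    have hδe : δ * e = δ := by
      rw [hδ]
      have e1 : ((e * (a * (s * x))) * e) * e = (e * (a * (s * x))) * (e * e) := by noncomm_ring
      rw [e1, hee]
    have hgδ : g * δ = e := by
      rw [hδ]
      have e1 : g * ((e * (a * (s * x))) * e) = ((g * e) * (a * (s * x))) * e := by noncomm_ring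
      rw [e1, hge, hgd, hee]
    have hq1 : (e - δ * g) * (e - δ * g) = e - δ * g := by
      have e1 : (e - δ * g) * (e - δ * g)
          = e * e - (e * δ) * g - δ * (g * e) + ((δ * (g * δ)) * g) := by noncomm_ring
      rw [e1, hee, heδ, hge, hgδ, hδe]
      noncomm_ring
    have hgq : g * (e - δ * g) = 0 := by
      have e1 : g * (e - δ * g) = g * e - (g * δ) * g := by noncomm_ring
      rw [e1, hge, hgδ, heg]
      noncomm_ring
    have hqδ : (e - δ * g) * δ = 0 := by
      have e1 : (e - δ * g) * δ = e * δ - δ * (g * δ) := by noncomm_ring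
      rw [e1, heδ, hgδ, hδe]
      noncomm_ring
    have hqe : (e - δ * g) * e = e - δ * g := by
      have e1 : (e - δ * g) * e = e * e - δ * (g * e) := by noncomm_ring
      rw [e1, hee, hge]
    set q := e - δ * g with hqdef
    have hmreg : δ * q = (δ * q) * (q * g) * (δ * q) := by
      have e1 : (δ * q) * (q * g) * (δ * q) = δ * ((((q * q) * g) * δ) * q) := by noncomm_ring
      rw [e1, hq1]
      have e2 : ((q * g) * δ) * q = (q * (g * δ)) * q := by noncomm_ring
      rw [e2, hgδ, hqe, hq1]
    have heI : e ∈ I := by rw [he]; exact I.mul_mem_right _ _ ha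
    have hδI : δ ∈ I := by
      rw [hδ]; exact I.mul_mem_right _ _ (I.mul_mem_right _ _ heI)
    have hqI : q ∈ I := by
      rw [hqdef]; exact I.sub_mem heI (I.mul_mem_right _ _ hδI)
    have hmI : δ * q ∈ I := I.mul_mem_right _ _ hδI
    obtain ⟨c, hc⟩ := sq_left hsq hmI hmreg
    have hm2 : (δ * q) ^ 2 = 0 := by
      have e1 : (δ * q) ^ 2 = δ * (((q * δ)) * q) := by noncomm_ring
      rw [e1, hqδ]
      noncomm_ring
    rw [hm2, zero_mul] at hc
    have hq0 : q = 0 := by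
      have e1 : q = (q * g) * (δ * q) := by
        have e2 : (q * g) * (δ * q) = (q * (g * δ)) * q := by noncomm_ring
        rw [e2, hgδ, hqe, hq1]
      rw [e1, hc, mul_zero]
    have heδg : e = δ * g := by
      have h0 : e - δ * g = 0 := by rw [← hqdef, hq0]
      exact sub_eq_zero.mp h0
    refine ⟨δ, ?_⟩
    calc a = e * a := hx
      _ = (δ * g) * a := by rw [← heδg]
      _ = δ * (a * (e * a)) := by rw [hg]; noncomm_ring
      _ = δ * (a * a) := by rw [← hx]
      _ = δ * a ^ 2 := by noncomm_ring
  · -- regular ⇒ strongly regular implies square stable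
    intro hS a ha b hab
    obtain ⟨x, y, hxy⟩ := hab
    have hax : a * x ∈ I := I.mul_mem_right _ _ ha
    obtain ⟨ee, hee, ⟨c, hc⟩, ⟨d, hd⟩⟩ := hI (a * x) hax
    have heeI : ee ∈ I := by rw [hc]; exact I.mul_mem_right _ _ hax
    set h := ee * a with hh
    have hhI : h ∈ I := I.mul_mem_right _ _ heeI
    have heeh : ee * h = h := by rw [hh, ← mul_assoc, hee.eq]
    have hhk : h * (x * c) = ee := by
      rw [hh]
      have e1 : (ee * a) * (x * c) = ee * (a * x * c) := by noncomm_ring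
      rw [e1, ← hc, hee.eq]
    have hreg : h = h * (x * c) * h := by
      conv_rhs => rw [hhk, heeh]
    obtain ⟨⟨z, hz⟩, ⟨t, ht⟩⟩ := hS h hhI ⟨x * c, hreg⟩
    obtain ⟨π, v, w, hππ, hπh, hhπ, hπw, hvu, hvπ, hπv, hv1⟩ := sreg_pack ⟨z, hz⟩ ⟨t, ht⟩
    have hπI : π ∈ I := by rw [hπw]; exact I.mul_mem_right _ _ hhI
    have hπee : π * ee = ee := by
      conv_lhs => rw [← hhk, ← mul_assoc, hπh]
      rw [hhk]
    have heeπ : ee * π = π := by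
      conv_lhs => rw [hπw, ← mul_assoc, heeh]
      rw [← hπw]
    set g := (x * c) * (a * w) with hg
    have hag : a * g = π := by
      rw [hg, hπw, hh, hc]; noncomm_ring
    set h' := π * a with hh'
    have hh'I : h' ∈ I := I.mul_mem_right _ _ hπI
    have hπh' : π * h' = h' := by rw [hh', ← mul_assoc, hππ]
    have hπg : h' * g = π := by rw [hh', mul_assoc, hag, hππ]
    have hreg' : h' = h' * g * h' := by
      conv_rhs => rw [hπg, hπh']
    obtain ⟨⟨z₂, hz₂⟩, ⟨t₂, ht₂⟩⟩ := hS h' hh'I ⟨g, hreg'⟩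
    obtain ⟨π₂, v₂, w₂, hπ₂π₂, hπ₂h', hh'π₂, hπ₂w₂, hv₂u, hv₂π₂, hπ₂v₂, hv₂1⟩ :=
      sreg_pack ⟨z₂, hz₂⟩ ⟨t₂, ht₂⟩
    have hππ₂ : π * π₂ = π₂ := by
      conv_lhs => rw [hπ₂w₂, ← mul_assoc, hπh']
      rw [← hπ₂w₂]
    have hπ₂π : π₂ * π = π := by
      conv_lhs => rw [← hπg, ← mul_assoc, hπ₂h']
      rw [hπg]
    have hn₂ : (π - π₂) * (π - π₂) = 0 := by
      have e1 : (π - π₂) * (π - π₂) = π * π - π * π₂ - π₂ * π + π₂ * π₂ := by noncomm_ring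
      rw [e1, hππ, hππ₂, hπ₂π, hπ₂π₂]
      noncomm_ring
    set s := (1 - π₂) * v₂ with hsdef
    have key10 : (1 - (π - π₂)) * v₂ = h' + (1 - π) * s := by
      have h0 : (1 - (π - π₂)) * v₂ = v₂ - π * v₂ + π₂ * v₂ := by noncomm_ring
      have h1 : (1 - π) * s = v₂ - π₂ * v₂ - π * v₂ + (π * π₂) * v₂ := by
        rw [hsdef]; noncomm_ring
      rw [h0, h1, hππ₂, hπ₂v₂]
      noncomm_ring
    have hU' : IsUnit (h' + (1 - π) * s) := by
      rw [← key10]; exact (sq_zero_unit hn₂).mul hv₂u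
    have hn : (ee - π) * (ee - π) = 0 := by
      have e1 : (ee - π) * (ee - π) = ee * ee - ee * π - π * ee + π * π := by noncomm_ring
      rw [e1, hee.eq, heeπ, hπee, hππ]
      noncomm_ring
    have hnh : (ee - π) * h = 0 := by
      have e1 : (ee - π) * h = ee * h - π * h := by noncomm_ring
      rw [e1, heeh, hπh]
      noncomm_ring
    have hvh' : v * h' = h * a := by rw [hh', ← mul_assoc, hvπ]
    have hVal : v * (h' + (1 - π) * s) = h * a + (1 - π) * s := by
      rw [mul_add, hvh', ← mul_assoc, hv1]
    have hWal : (1 - (ee - π)) * (h * a + (1 - π) * s) = ee * a ^ 2 + (1 - ee) * s := by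
      have e1 : (1 - (ee - π)) * (h * a + (1 - π) * s)
          = h * a - ((ee - π) * h) * a + ((1 - (ee - π)) * (1 - π)) * s := by noncomm_ring
      have e2 : (1 - (ee - π)) * (1 - π) = 1 - ee := by
        have e3 : (1 - (ee - π)) * (1 - π) = 1 - π - ee + ee * π + π - π * π := by noncomm_ring
        rw [e3, heeπ, hππ]
        noncomm_ring
      rw [e1, hnh, e2]
      have e4 : h * a = ee * a ^ 2 := by rw [hh]; noncomm_ring
      rw [e4]
      noncomm_ring
    have hW : IsUnit (ee * a ^ 2 + (1 - ee) * s) := by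
      have hU : IsUnit ((1 - (ee - π)) * (v * (h' + (1 - π) * s))) :=
        (sq_zero_unit hn).mul (hvu.mul hU')
      rw [hVal, hWal] at hU
      exact hU
    refine ⟨y * (d * (s - a ^ 2)), ?_⟩
    have hby : (1 : R) - a * x = b * y := by rw [← hxy]; noncomm_ring
    have hbd : (1 : R) - ee = b * (y * d) := by
      rw [hd, hby]
      noncomm_ring
    have final : a ^ 2 + b * (y * (d * (s - a ^ 2))) = ee * a ^ 2 + (1 - ee) * s := by
      have e1 : a ^ 2 + b * (y * (d * (s - a ^ 2))) = a ^ 2 + (b * (y * d)) * (s - a ^ 2) := by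
        noncomm_ring
      rw [e1, ← hbd]
      noncomm_ring
    rw [final]
    exact hW
end

section
/- If I is a square stable ideal of a ring R and a ∈ I is regular, then a ∈ a²R. -/
theorem stmt13 {R : Type*} [Ring R] (I : TwoSidedIdeal R) (hI : SquareStable I)
    (a : R) (ha : a ∈ I) (hr : IsRegularElem a) : ∃ x : R, a = a ^ 2 * x := by
  obtain ⟨c, hc⟩ := hr
  obtain ⟨t, hu⟩ := hI a ha (1 - a * c) ⟨c, 1, by noncomm_ring⟩
  obtain ⟨u, hu⟩ := hu
  -- key: (a*c) * u = a^2
  have key : (a * c) * (u : R) = a ^ 2 := by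
    rw [hu]
    have h1 : a * c * a ^ 2 = a ^ 2 := by
      have : a * c * a = a := hc.symm
      calc a * c * a ^ 2 = (a * c * a) * a := by noncomm_ring
        _ = a * a := by rw [this]
        _ = a ^ 2 := by noncomm_ring
    have h2 : a * c * (1 - a * c) = 0 := by
      have : a * c * (a * c) = a * c := by
        calc a * c * (a * c) = (a * c * a) * c := by noncomm_ring
          _ = a * c := by rw [← hc]
      rw [mul_sub, mul_one, this, sub_self]
    calc a * c * (a ^ 2 + (1 - a * c) * t)
        = a * c * a ^ 2 + (a * c * (1 - a * c)) * t := by noncomm_ring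
      _ = a ^ 2 := by rw [h1, h2, zero_mul, add_zero]
  refine ⟨(↑u⁻¹ : R) * a, ?_⟩
  have h3 : a ^ 2 * (↑u⁻¹ : R) = a * c := by
    rw [← key, mul_assoc, u.mul_inv, mul_one]
  calc a = a * c * a := hc
    _ = a ^ 2 * (↑u⁻¹ : R) * a := by rw [h3]
    _ = a ^ 2 * ((↑u⁻¹ : R) * a) := by rw [mul_assoc]
end

section
/- Every exchange ideal of an abelian ring (a ring in which all idempotents are central) is square stable. -/
theorem stmt14 {R : Type*} [Ring R]
    (habel : ∀ e : R, IsIdempotentElem e → ∀ r : R, e * r = r * e)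
    (I : TwoSidedIdeal R) (hI : ExchangeIdeal I) : SquareStable I := by
  rintro a ha b ⟨x, y, hxy⟩
  have hax : a * x ∈ I := I.mul_mem_right _ _ ha
  obtain ⟨e, he, ⟨c, hec⟩, ⟨d, hd⟩⟩ := hI _ hax
  have hc : ∀ r : R, e * r = r * e := habel e he
  obtain ⟨w, hw⟩ : ∃ w : R, w = x * c * e := ⟨_, rfl⟩
  -- a * w = e
  have haw : a * w = e := by
    have h : a * (x * c * e) = (a * x * c) * e := by noncomm_ring
    rw [hw, h, ← hec]; exact he
  -- w * e = w and e * w = w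
  have hwe : w * e = w := by rw [hw, mul_assoc, he.eq]
  have hew : e * w = w := by rw [hc w, hwe]
  -- w * a is idempotent
  have ht : IsIdempotentElem (w * a) := by
    unfold IsIdempotentElem
    calc (w * a) * (w * a) = w * (a * w) * a := by noncomm_ring
      _ = w * a := by rw [haw, hwe]
  have hct : ∀ r : R, (w * a) * r = r * (w * a) := habel _ ht
  -- w * a = e
  have hwa : w * a = e := by
    calc w * a = (w * a) * e := by
          rw [mul_assoc, ← hc a, ← mul_assoc, hwe]
      _ = (w * a) * (a * w) := by rw [haw]
      _ = a * (w * a) * w := by rw [← hct a]; noncomm_ring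
      _ = (a * w) * (a * w) := by noncomm_ring
      _ = e := by rw [haw]; exact he
  -- squares
  have haww : a ^ 2 * w ^ 2 = e := by
    calc a ^ 2 * w ^ 2 = a * (a * w) * w := by noncomm_ring
      _ = e := by rw [haw, mul_assoc, hew, haw]
  have hwwa : w ^ 2 * a ^ 2 = e := by
    calc w ^ 2 * a ^ 2 = w * (w * a) * a := by noncomm_ring
      _ = e := by rw [hwa, hwe, hwa]
  -- b * y = 1 - a * x
  have hby : b * y = 1 - a * x := by
    rw [eq_sub_iff_add_eq, add_comm]; exact hxy
  refine ⟨y * d * (1 - a ^ 2), ?_⟩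
  have hkey : a ^ 2 + b * (y * d * (1 - a ^ 2)) = e * a ^ 2 + (1 - e) := by
    have h1 : b * (y * d * (1 - a ^ 2)) = (1 - e) * (1 - a ^ 2) := by
      have h2 : b * (y * d * (1 - a ^ 2)) = (b * y) * d * (1 - a ^ 2) := by noncomm_ring
      rw [h2, hby, hd]
    have h3 : (1 - e) * (1 - a ^ 2) = 1 - a ^ 2 - e + e * a ^ 2 := by noncomm_ring
    rw [h1, h3, hc (a ^ 2)]
    noncomm_ring
  rw [hkey]
  have hone : (1 - e) * (1 - e) = 1 - e := he.one_sub
  have hw2e : w ^ 2 * e = w ^ 2 := by rw [sq, mul_assoc, hwe]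
  have hew2 : e * w ^ 2 = w ^ 2 := by rw [sq, ← mul_assoc, hew]
  have hB : (e * a ^ 2) * (1 - e) = 0 := by
    rw [hc (a ^ 2), mul_assoc, mul_sub, mul_one, he.eq, sub_self, mul_zero]
  have hC : (1 - e) * w ^ 2 = 0 := by rw [sub_mul, one_mul, hew2, sub_self]
  have hB' : w ^ 2 * (1 - e) = 0 := by rw [mul_sub, mul_one, hw2e, sub_self]
  have hC' : (1 - e) * (e * a ^ 2) = 0 := by
    rw [← mul_assoc, sub_mul, one_mul, he.eq, sub_self, zero_mul]
  refine ⟨⟨e * a ^ 2 + (1 - e), w ^ 2 + (1 - e), ?_, ?_⟩, rfl⟩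
  · calc (e * a ^ 2 + (1 - e)) * (w ^ 2 + (1 - e))
        = e * (a ^ 2 * w ^ 2) + (e * a ^ 2) * (1 - e) + (1 - e) * w ^ 2
            + (1 - e) * (1 - e) := by noncomm_ring
      _ = 1 := by rw [haww, he.eq, hB, hC, hone]; noncomm_ring
  · calc (w ^ 2 + (1 - e)) * (e * a ^ 2 + (1 - e))
        = (w ^ 2 * e) * a ^ 2 + w ^ 2 * (1 - e) + (1 - e) * (e * a ^ 2)
            + (1 - e) * (1 - e) := by noncomm_ring
      _ = 1 := by rw [hw2e, hwwa, hB', hC', hone]; noncomm_ring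
end

section
/- Let I be a regular ideal of a ring R and x₁, ..., xₘ ∈ I. Then there exists an idempotent e ∈ I such that xᵢ ∈ eRe for all i = 1, ..., m. -/
private lemma idem_aux_left {R : Type*} [Ring R] (f g : R) (hf : f*f = f) (hg : g*g = g)
    (hfg : f*g = 0) : (f+g-g*f)*(f+g-g*f) = f+g-g*f := by
  have hf' : ∀ x : R, f*(f*x) = f*x := fun x => by rw [← mul_assoc, hf]
  have hg' : ∀ x : R, g*(g*x) = g*x := fun x => by rw [← mul_assoc, hg]
  have hfg' : ∀ x : R, f*(g*x) = 0 := fun x => by rw [← mul_assoc, hfg, zero_mul]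
  simp [mul_add, add_mul, sub_mul, mul_sub, mul_assoc, hf, hg, hfg, hf', hg', hfg']

private lemma idem_aux_right {R : Type*} [Ring R] (f g : R) (hf : f*f = f) (hg : g*g = g)
    (hgf : g*f = 0) : (f+g-f*g)*(f+g-f*g) = f+g-f*g := by
  have hf' : ∀ x : R, f*(f*x) = f*x := fun x => by rw [← mul_assoc, hf]
  have hg' : ∀ x : R, g*(g*x) = g*x := fun x => by rw [← mul_assoc, hg]
  have hgf' : ∀ x : R, g*(f*x) = 0 := fun x => by rw [← mul_assoc, hgf, zero_mul]
  simp [mul_add, add_mul, sub_mul, mul_sub, mul_assoc, hf, hg, hgf, hf', hg', hgf']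

/-- Right-sided lemma: a common left identity idempotent in `I`. -/
private lemma left_unit_lem {R : Type*} [Ring R] (I : TwoSidedIdeal R) (hI : RegularIdeal I) :
    ∀ (n : ℕ) (a : Fin n → R), (∀ i, a i ∈ I) →
      ∃ f, f ∈ I ∧ f * f = f ∧ ∀ i, f * a i = a i := by
  intro n
  induction n with
  | zero => exact fun a _ => ⟨0, I.zero_mem, by simp, fun i => i.elim0⟩
  | succ n ih =>
    intro a ha
    obtain ⟨f, hfI, hff, hfa⟩ := ih (fun i => a i.castSucc) (fun i => ha _)
    set b := a (Fin.last n) with hb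
    have hcI : (1 - f) * b ∈ I := I.mul_mem_left _ _ (ha (Fin.last n))
    obtain ⟨y, hy⟩ := hI _ hcI
    set c := (1 - f) * b with hc
    set g := c * y with hgdef
    have hgc : g * c = c := hy.symm
    have hgg : g * g = g := by
      nth_rewrite 2 [hgdef]
      rw [← mul_assoc, hgc, ← hgdef]
    have hfg : f * g = 0 := by
      have : f * c = 0 := by
        rw [hc, ← mul_assoc, mul_sub, mul_one, hff, sub_self, zero_mul]
      rw [hgdef, ← mul_assoc, this, zero_mul]
    have hgI : g ∈ I := I.mul_mem_right _ _ hcI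
    refine ⟨f + g - g * f, ?_, idem_aux_left f g hff hgg hfg, ?_⟩
    · exact I.sub_mem (I.add_mem hfI hgI) (I.mul_mem_right _ _ hgI)
    · intro i
      refine Fin.lastCases ?_ ?_ i
      · have : g * (b - f * b) = b - f * b := by
          have : c = b - f * b := by rw [hc, sub_mul, one_mul]
          rw [← this, hgc]
        calc (f + g - g * f) * b = f * b + g * b - g * (f * b) := by noncomm_ring
          _ = f * b + (g * b - g * (f * b)) := by noncomm_ring
          _ = f * b + g * (b - f * b) := by rw [mul_sub]
          _ = f * b + (b - f * b) := by rw [this]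
          _ = b := by noncomm_ring
      · intro i
        have h1 : f * a i.castSucc = a i.castSucc := hfa i
        calc (f + g - g * f) * a i.castSucc
            = f * a i.castSucc + g * a i.castSucc - g * (f * a i.castSucc) := by noncomm_ring
          _ = a i.castSucc := by rw [h1]; abel

/-- Left-sided lemma: a common right identity idempotent in `I`. -/
private lemma right_unit_lem {R : Type*} [Ring R] (I : TwoSidedIdeal R) (hI : RegularIdeal I) :
    ∀ (n : ℕ) (a : Fin n → R), (∀ i, a i ∈ I) →
      ∃ f, f ∈ I ∧ f * f = f ∧ ∀ i, a i * f = a i := by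
  intro n
  induction n with
  | zero => exact fun a _ => ⟨0, I.zero_mem, by simp, fun i => i.elim0⟩
  | succ n ih =>
    intro a ha
    obtain ⟨f, hfI, hff, hfa⟩ := ih (fun i => a i.castSucc) (fun i => ha _)
    set b := a (Fin.last n) with hb
    have hcI : b * (1 - f) ∈ I := I.mul_mem_right _ _ (ha (Fin.last n))
    obtain ⟨y, hy⟩ := hI _ hcI
    set c := b * (1 - f) with hc
    set g := y * c with hgdef
    have hcg : c * g = c := by rw [hgdef, ← mul_assoc, ← hy]
    have hgg : g * g = g := by
      nth_rewrite 1 [hgdef]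
      rw [mul_assoc, hcg, ← hgdef]
    have hgf : g * f = 0 := by
      have : c * f = 0 := by
        rw [hc, mul_assoc, sub_mul, one_mul, hff, sub_self, mul_zero]
      rw [hgdef, mul_assoc, this, mul_zero]
    have hgI : g ∈ I := I.mul_mem_left _ _ hcI
    refine ⟨f + g - f * g, ?_, idem_aux_right f g hff hgg hgf, ?_⟩
    · exact I.sub_mem (I.add_mem hfI hgI) (I.mul_mem_left _ _ hgI)
    · intro i
      refine Fin.lastCases ?_ ?_ i
      · have key : (b - b * f) * g = b - b * f := by
          have : c = b - b * f := by rw [hc, mul_sub, mul_one]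
          rw [← this, hcg]
        calc b * (f + g - f * g) = b * f + b * g - b * f * g := by noncomm_ring
          _ = b * f + (b * g - b * f * g) := by noncomm_ring
          _ = b * f + (b - b * f) * g := by rw [sub_mul]
          _ = b * f + (b - b * f) := by rw [key]
          _ = b := by noncomm_ring
      · intro i
        have h1 : a i.castSucc * f = a i.castSucc := hfa i
        calc a i.castSucc * (f + g - f * g)
            = a i.castSucc * f + a i.castSucc * g - a i.castSucc * f * g := by noncomm_ring
          _ = a i.castSucc := by rw [h1]; abel

theorem stmt15 {R : Type*} [Ring R] (I : TwoSidedIdeal R) (hI : RegularIdeal I)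
    (m : ℕ) (x : Fin m → R) (hx : ∀ i, x i ∈ I) :
    ∃ e ∈ I, IsIdempotentElem e ∧ ∀ i, ∃ r : R, x i = e * r * e := by
  obtain ⟨f, hfI, hff, hfx⟩ := left_unit_lem I hI m x hx
  -- apply right lemma to the family `Fin.snoc x f`
  obtain ⟨e, heI, hee, hae⟩ := right_unit_lem I hI (m+1) (Fin.snoc x f)
    (fun i => by
      refine Fin.lastCases ?_ ?_ i
      · simpa using hfI
      · intro j; simpa using hx j)
  have hfe : f * e = f := by simpa using hae (Fin.last m)
  have hxe : ∀ i, x i * e = x i := fun i => by simpa using hae i.castSucc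
  set E := e + f - e * f with hE
  have hEE : E * E = E := by
    have h1 : ∀ z : R, e * (e * z) = e * z := fun z => by rw [← mul_assoc, hee]
    have h2 : ∀ z : R, f * (e * z) = f * z := fun z => by rw [← mul_assoc, hfe]
    have h3 : ∀ z : R, f * (f * z) = f * z := fun z => by rw [← mul_assoc, hff]
    simp [hE, mul_add, add_mul, sub_mul, mul_sub, mul_assoc, hee, hfe, hff, h1, h2, h3]
  have hEx : ∀ i, E * x i = x i := by
    intro i
    calc E * x i = e * x i + f * x i - e * (f * x i) := by rw [hE]; noncomm_ring
      _ = x i := by rw [hfx i]; abel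
  have hxE : ∀ i, x i * E = x i := by
    intro i
    calc x i * E = x i * e + x i * f - x i * e * f := by rw [hE]; noncomm_ring
      _ = x i * e + x i * f - x i * f := by rw [hxe i]
      _ = x i := by rw [hxe i]; abel
  refine ⟨E, ?_, hEE, fun i => ⟨x i, by rw [hEx i, hxE i]⟩⟩
  exact I.sub_mem (I.add_mem heI hfI) (I.mul_mem_left _ _ hfI)
end

section
/- Let I be a regular ideal of a ring R. Then I is square stable if and only if the corner ring eRe is strongly regular for every idempotent e ∈ I. -/
lemma aux_unit {R : Type*} [Ring R] (g w w' : R) (hg : g*g = g) (hww' : w*w' = g)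
    (hwg : w*g = w) (hgw' : g*w' = w') : (w*w + 1 - g)*(w'*w' + 1 - g) = 1 := by
  linear_combination (norm := noncomm_ring) w*hww'*w' + hwg*w' + hww' - w*hwg - hgw'*w' + hg

lemma corner_decomp {R : Type*} [Ring R] (g : R) (hg : g*g = g)
    (H : ∀ s : R, s = g*s*g → ∃ t : R, t = g*t*g ∧ s = s*s*t)
    (a : R) (ha : a = g*a*g) :
    ∃ e₀ U U' : R, e₀*e₀ = e₀ ∧ e₀*a = a ∧ a*e₀ = a ∧ e₀*U = a*a ∧ U*U' = 1 ∧ U'*U = 1 := by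
  have hga : g*a = a := by linear_combination (norm := noncomm_ring) g*ha - ha + hg*(a*g)
  have hag : a*g = a := by linear_combination (norm := noncomm_ring) ha*g - ha + (g*a)*hg
  have hred : ∀ s : R, g*s = s → s*g = s → s*s = 0 → s = 0 := by
    intro s h1 h2 h0
    obtain ⟨t', -, h⟩ := H s (by linear_combination (norm := noncomm_ring) -h2 - h1*g)
    rw [h0, zero_mul] at h
    exact h
  obtain ⟨t, htS, hat0⟩ := H a ha
  have hat : a*a*t = a := hat0.symm
  have hgt : g*t = t := by linear_combination (norm := noncomm_ring) g*htS - htS + hg*(t*g)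
  have htg : t*g = t := by linear_combination (norm := noncomm_ring) htS*g - htS + (g*t)*hg
  have hae : a*(a*t) = a := by linear_combination (norm := noncomm_ring) hat
  have hsq : ∀ r : R, g*r = r → r*g = r → a*(a*r) = 0 → a*r = 0 := by
    intro r h1 h2 h0
    have hp : a*(r*a) = 0 := hred (a*(r*a))
      (by linear_combination (norm := noncomm_ring) hga*(r*a))
      (by linear_combination (norm := noncomm_ring) (a*r)*hag)
      (by linear_combination (norm := noncomm_ring) (a*r)*h0*a)
    have hq : (a*r)*(a*r) = 0 := by linear_combination (norm := noncomm_ring) hp*r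
    exact hred (a*r) (by linear_combination (norm := noncomm_ring) hga*r)
      (by linear_combination (norm := noncomm_ring) a*h2) hq
  have haux : a*(t - t*(a*t)) = 0 := hsq (t - t*(a*t))
    (by linear_combination (norm := noncomm_ring) hgt - hgt*(a*t))
    (by linear_combination (norm := noncomm_ring) htg - (t*a)*htg)
    (by linear_combination (norm := noncomm_ring) -hat*(a*t))
  have hee : (a*t)*(a*t) = a*t := by linear_combination (norm := noncomm_ring) -haux
  have hge : g*(a*t) = a*t := by linear_combination (norm := noncomm_ring) hga*t
  have heg : (a*t)*g = a*t := by linear_combination (norm := noncomm_ring) a*htg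
  have hcentral : ∀ q : R, g*q = q → q*g = q → q*q = q →
      ∀ s : R, g*s = s → s*g = s → q*s = s*q := by
    intro q h1 h2 hq s hs1 hs2
    have r1 : q*(s*(g - q)) = 0 := hred _
      (by linear_combination (norm := noncomm_ring) h1*(s*(g-q)))
      (by linear_combination (norm := noncomm_ring) (q*s)*hg - (q*s)*h2)
      (by linear_combination (norm := noncomm_ring) (q*s)*h1*(s*(g - q)) - (q*s)*hq*(s*(g-q)))
    have r2 : ((g - q)*s)*q = 0 := hred _
      (by linear_combination (norm := noncomm_ring) hg*(s*q) - h1*(s*q))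
      (by linear_combination (norm := noncomm_ring) ((g-q)*s)*h2)
      (by linear_combination (norm := noncomm_ring) ((g-q)*s)*h2*(s*q) - ((g-q)*s)*hq*(s*q))
    have e1 : q*s = q*(s*q) := by linear_combination (norm := noncomm_ring) r1 - q*hs2
    have e2 : s*q = q*(s*q) := by linear_combination (norm := noncomm_ring) r2 - hs1*q
    exact e1.trans e2.symm
  have hea : (a*t)*a = a := by
    have h := hcentral (a*t) hge heg hee a hga hag
    linear_combination (norm := noncomm_ring) h + hae
  have het : (a*t)*t = t*(a*t) := hcentral (a*t) hge heg hee t hgt htg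
  have hff : (t*a)*(t*a) = t*a := by linear_combination (norm := noncomm_ring) t*hea
  have hgf : g*(t*a) = t*a := by linear_combination (norm := noncomm_ring) hgt*a
  have hfg : (t*a)*g = t*a := by linear_combination (norm := noncomm_ring) t*hag
  have hft : (t*a)*t = t*(t*a) := hcentral (t*a) hgf hfg hff t hgt htg
  have hfe : (t*a)*(a*t) = t*a := by linear_combination (norm := noncomm_ring) t*hat
  have hef : (a*t)*(t*a) = a*t := by linear_combination (norm := noncomm_ring) -a*hft + hea*t
  have hqcomm : (a*t)*(t*a) = (t*a)*(a*t) := hcentral (a*t) hge heg hee (t*a) hgf hfg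
  have hta : t*a = a*t := by
    calc t*a = (t*a)*(a*t) := hfe.symm
    _ = (a*t)*(t*a) := hqcomm.symm
    _ = a*t := hef
  -- units
  have u1 : a*(t*(a*t)) = a*t := by linear_combination (norm := noncomm_ring) hea*t
  have u2 : a*(g - a*t) = 0 := by linear_combination (norm := noncomm_ring) hag - hae
  have u3 : (g - a*t)*(t*(a*t)) = 0 := by
    linear_combination (norm := noncomm_ring) hgt*(a*t) - het*(a*t) - t*hee
  have u4 : (g - a*t)*(g - a*t) = g - a*t := by
    linear_combination (norm := noncomm_ring) hg - hge - heg + hee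
  have hww' : (a + (g - a*t))*(t*(a*t) + (g - a*t)) = g := by
    linear_combination (norm := noncomm_ring) u1 + u2 + u3 + u4
  have v1 : (t*(a*t))*a = a*t := by linear_combination (norm := noncomm_ring) t*hea + hta
  have v2 : (t*(a*t))*(g - a*t) = 0 := by linear_combination (norm := noncomm_ring) t*heg - t*hee
  have v3 : (g - a*t)*a = 0 := by linear_combination (norm := noncomm_ring) hga - hea
  have hw'w : (t*(a*t) + (g - a*t))*(a + (g - a*t)) = g := by
    linear_combination (norm := noncomm_ring) v1 + v2 + v3 + u4
  have hwg : (a + (g - a*t))*g = a + (g - a*t) := by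
    linear_combination (norm := noncomm_ring) hag + hg - heg
  have hgw : g*(a + (g - a*t)) = a + (g - a*t) := by
    linear_combination (norm := noncomm_ring) hga + hg - hge
  have hw'g : (t*(a*t) + (g - a*t))*g = t*(a*t) + (g - a*t) := by
    linear_combination (norm := noncomm_ring) t*heg + hg - heg
  have hgw' : g*(t*(a*t) + (g - a*t)) = t*(a*t) + (g - a*t) := by
    linear_combination (norm := noncomm_ring) hgt*(a*t) + hg - hge
  have hUU' := aux_unit g (a + (g - a*t)) (t*(a*t) + (g - a*t)) hg hww' hwg hgw'
  have hU'U := aux_unit g (t*(a*t) + (g - a*t)) (a + (g - a*t)) hg hw'w hw'g hgw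
  have he₀w : (a*t)*(a + (g - a*t)) = a := by
    linear_combination (norm := noncomm_ring) hea + heg - hee
  have haw : a*(a + (g - a*t)) = a*a := by linear_combination (norm := noncomm_ring) hag - hae
  have hX : (a*t)*((a + (g - a*t))*(a + (g - a*t))) = a*a := by
    linear_combination (norm := noncomm_ring) he₀w*(a + (g - a*t)) + haw
  have he₀U : (a*t)*((a + (g - a*t))*(a + (g - a*t)) + 1 - g) = a*a := by
    linear_combination (norm := noncomm_ring) hX - heg
  exact ⟨a*t, (a + (g - a*t))*(a + (g - a*t)) + 1 - g,
    (t*(a*t) + (g - a*t))*(t*(a*t) + (g - a*t)) + 1 - g,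
    hee, hea, hae, he₀U, hUU', hU'U⟩

theorem stmt16 {R : Type*} [Ring R] (I : TwoSidedIdeal R) (hI : RegularIdeal I) :
    SquareStable I ↔
      ∀ e ∈ I, IsIdempotentElem e →
        ∀ a : R, a = e * a * e → ∃ b : R, b = e * b * e ∧ a = a ^ 2 * b := by
  constructor
  · -- forward
    intro hSS e heI he a hae
    have hee : e*e = e := he
    have haI : a ∈ I := by
      rw [hae]; exact I.mul_mem_right _ _ (I.mul_mem_right _ _ heI)
    have hea : e*a = a := by
      linear_combination (norm := noncomm_ring) e*hae - hae + hee*(a*e)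
    have hae2 : a*e = a := by
      linear_combination (norm := noncomm_ring) hae*e - hae + (e*a)*hee
    obtain ⟨x₀, hx₀⟩ := hI a haI
    have haxa : a*(e*x₀*e)*a = a := by
      linear_combination (norm := noncomm_ring) hae2*(x₀*(e*a)) + (a*x₀)*hea - hx₀
    obtain ⟨y, hu⟩ := hSS a haI (1 - a*(e*x₀*e)) ⟨e*x₀*e, 1, by noncomm_ring⟩
    obtain ⟨u, huv⟩ := hu
    have key : (a*(e*x₀*e))*(u : R) = a*a := by
      rw [huv]
      linear_combination (norm := noncomm_ring) haxa*a - haxa*((e*x₀*e)*y)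
    have hax : a*(e*x₀*e) = a*a*(↑u⁻¹ : R) := (Units.eq_mul_inv_iff_mul_eq u).mpr key
    refine ⟨e*((↑u⁻¹ : R)*a)*e, ?_, ?_⟩
    · linear_combination (norm := noncomm_ring)
        -hee*(((↑u⁻¹ : R)*a)*(e*e)) - (e*((↑u⁻¹ : R)*a))*hee
    · have ha2e : a*a*e = a*a := by linear_combination (norm := noncomm_ring) a*hae2
      linear_combination (norm := noncomm_ring)
        -ha2e*((↑u⁻¹ : R)*(a*e)) + hax*(a*e) - haxa*e - hae2
  · -- backward
    intro h a haI b hxy'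
    obtain ⟨x, y, hxy⟩ := hxy'
    obtain ⟨z, hz⟩ := hI a haI
    have he : (a*z)*(a*z) = a*z := by linear_combination (norm := noncomm_ring) -hz*z
    have heI : a*z ∈ I := I.mul_mem_right _ _ haI
    have hea' : (a*z)*a = a := by linear_combination (norm := noncomm_ring) -hz
    have hcI : a - a*(a*z) ∈ I := I.sub_mem haI (I.mul_mem_left _ _ heI)
    obtain ⟨w₀, hw⟩ := hI _ hcI
    have hfc : (w₀*(a - a*(a*z)))*(w₀*(a - a*(a*z))) = w₀*(a - a*(a*z)) := by
      linear_combination (norm := noncomm_ring) -w₀*hw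
    have hce : (a - a*(a*z))*(a*z) = 0 := by
      linear_combination (norm := noncomm_ring) a*hz*z
    have hfe' : (w₀*(a - a*(a*z)))*(a*z) = 0 := by
      linear_combination (norm := noncomm_ring) w₀*hce
    have hcF : (a - a*(a*z))*(w₀*(a - a*(a*z))) = a - a*(a*z) := by
      linear_combination (norm := noncomm_ring) -hw
    obtain ⟨g, hgdef⟩ : ∃ g : R, g = a*z + w₀*(a - a*(a*z)) - (a*z)*(w₀*(a - a*(a*z))) :=
      ⟨_, rfl⟩
    have hgI : g ∈ I := by
      rw [hgdef]
      exact I.sub_mem (I.add_mem heI (I.mul_mem_left _ _ hcI))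
        (I.mul_mem_left _ _ (I.mul_mem_left _ _ hcI))
    have hgg : g*g = g := by
      rw [hgdef]
      linear_combination (norm := noncomm_ring) he - he*(w₀*(a - a*(a*z))) + hfe' + hfc
        - hfe'*(w₀*(a - a*(a*z))) - (a*z)*hfe' - (a*z)*hfc + (a*z)*hfe'*(w₀*(a - a*(a*z)))
    have hXE : g*(a*z) = a*z := by
      rw [hgdef]
      linear_combination (norm := noncomm_ring) he + hfe' - (a*z)*hfe'
    have hga : g*a = a := by
      linear_combination (norm := noncomm_ring) -g*hea' + hXE*a + hea'
    have hEX : (a*z)*g = a*z := by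
      rw [hgdef]
      linear_combination (norm := noncomm_ring) he - he*(w₀*(a - a*(a*z)))
    have hcX : (a - a*(a*z))*g = a - a*(a*z) := by
      rw [hgdef]
      linear_combination (norm := noncomm_ring) hce + hcF - hce*(w₀*(a - a*(a*z)))
    have hag : a*g = a := by
      linear_combination (norm := noncomm_ring) a*hEX + hcX
    have hgag : a = g*a*g := by rw [hga, hag]
    obtain ⟨e₀, U, U', hE, hEa, haE, hEU, hUU', hU'U⟩ :=
      corner_decomp g hgg
        (fun s hs => by
          obtain ⟨t, ht1, ht2⟩ := h g hgI hgg s hs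
          exact ⟨t, ht1, by linear_combination (norm := noncomm_ring) ht2⟩)
        a hgag
    have h1e : (1 - e₀)*(b*y) = 1 - e₀ := by
      linear_combination (norm := noncomm_ring) (1 - e₀)*hxy + hEa*x
    have h2e : (1 - e₀)*(b*(y*(1 - e₀))) = 1 - e₀ := by
      linear_combination (norm := noncomm_ring) h1e*(1 - e₀) + hE
    have hke : (b*(y*(1 - e₀)))*e₀ = 0 := by
      linear_combination (norm := noncomm_ring) -(b*y)*hE
    have hv : (1 + e₀*(b*(y*(1 - e₀))))*(1 - e₀*(b*(y*(1 - e₀)))) = 1 := by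
      linear_combination (norm := noncomm_ring) -e₀*hke*(b*(y*(1 - e₀)))
    have hv' : (1 - e₀*(b*(y*(1 - e₀))))*(1 + e₀*(b*(y*(1 - e₀)))) = 1 := by
      linear_combination (norm := noncomm_ring) -e₀*hke*(b*(y*(1 - e₀)))
    have maineq : a^2 + b*(y*((1 - e₀)*U)) = (1 + e₀*(b*(y*(1 - e₀))))*U := by
      linear_combination (norm := noncomm_ring) h2e*U - hEU
    refine ⟨y*((1 - e₀)*U), ⟨⟨a^2 + b*(y*((1 - e₀)*U)),
      U'*(1 - e₀*(b*(y*(1 - e₀)))), ?_, ?_⟩, rfl⟩⟩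
    · rw [maineq]
      linear_combination (norm := noncomm_ring)
        (1 + e₀*(b*(y*(1 - e₀))))*hUU'*(1 - e₀*(b*(y*(1 - e₀)))) + hv
    · rw [maineq]
      linear_combination (norm := noncomm_ring) U'*hv'*U + hU'U
end

section
/- Let I be a regular ideal of a ring R. Then I is square stable if and only if I is reduced, i.e., x ∈ I and x² = 0 imply x = 0. -/
private lemma central_of_idem {R : Type*} [Ring R] (I : TwoSidedIdeal R)
    (hred : ∀ x ∈ I, x ^ 2 = 0 → x = 0) {e : R} (he : e ∈ I) (hi : e * e = e) :
    ∀ r : R, e * r = r * e := by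
  intro r
  have h1 : e * r - e * r * e = 0 := by
    apply hred _ (I.sub_mem (I.mul_mem_right e r he) (I.mul_mem_right _ e (I.mul_mem_right e r he)))
    have hrep : e * r - e * r * e = e * (r - r * e) := by rw [mul_sub, mul_assoc]
    have hXe : e * (r - r * e) * e = 0 := by
      have : (r - r * e) * e = 0 := by rw [sub_mul, mul_assoc r e e, hi, sub_self]
      rw [mul_assoc, this, mul_zero]
    rw [pow_two, hrep, ← mul_assoc, hXe, zero_mul]
  have h2 : r * e - e * r * e = 0 := by
    apply hred _ (I.sub_mem (I.mul_mem_left r e he) (I.mul_mem_right _ e (I.mul_mem_right e r he)))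
    have hrep : r * e - e * r * e = (r - e * r) * e := by rw [sub_mul]
    have heX : e * ((r - e * r) * e) = 0 := by
      have : e * (r - e * r) = 0 := by rw [mul_sub, ← mul_assoc, hi, sub_self]
      rw [← mul_assoc, this, zero_mul]
    rw [pow_two, hrep, mul_assoc, heX, mul_zero]
  rw [sub_eq_zero] at h1 h2
  exact h1.trans h2.symm

theorem stmt17 {R : Type*} [Ring R] (I : TwoSidedIdeal R) (hI : RegularIdeal I) :
    SquareStable I ↔ ∀ x ∈ I, x ^ 2 = 0 → x = 0 := by
  constructor
  · intro hss x hx hx2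
    obtain ⟨s, hs⟩ := hI x hx
    obtain ⟨y', hy'⟩ := hss x hx (1 - x * s) ⟨s, 1, by noncomm_ring⟩
    rw [hx2, zero_add] at hy'
    obtain ⟨u, hu⟩ := hy'
    have hxs0 : x * s * (1 - x * s) = 0 := by
      rw [mul_sub, mul_one, mul_assoc, ← mul_assoc s x s, ← mul_assoc x (s * x) s,
        ← mul_assoc x s x, ← hs, sub_self]
    have hxs : x * s = 0 := by
      have h1 : (1 - x * s) * y' * ↑u⁻¹ = 1 := by rw [← hu]; exact u.mul_inv
      calc x * s = x * s * ((1 - x * s) * y' * ↑u⁻¹) := by rw [h1, mul_one]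
      _ = 0 := by rw [← mul_assoc, ← mul_assoc, hxs0, zero_mul, zero_mul]
    rw [hs, hxs, zero_mul]
  · intro hred a ha b hxyex
    obtain ⟨x, y, hxy⟩ := hxyex
    obtain ⟨s, hs⟩ := hI a ha
    obtain ⟨e, hed⟩ : ∃ e, a * s = e := ⟨_, rfl⟩
    obtain ⟨f, hfd⟩ : ∃ f, s * a = f := ⟨_, rfl⟩
    have heI : e ∈ I := hed ▸ I.mul_mem_right a s ha
    have hfI : f ∈ I := hfd ▸ I.mul_mem_left s a ha
    have hea : e * a = a := by rw [← hed]; exact hs.symm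
    have hee : e * e = e := by rw [← hed, ← mul_assoc, ← hs]
    have hec := central_of_idem I hred heI hee
    have hae : a * e = a := by rw [← hec a, hea]
    have haf : a * f = a := by rw [← hfd, ← mul_assoc, ← hs]
    have hff : f * f = f := by
      rw [← hfd, mul_assoc, ← mul_assoc a s a, ← hs]
    have hfc := central_of_idem I hred hfI hff
    have hfa : f * a = a := by rw [hfc a, haf]
    have hsaa : s * (a * a) = a := by rw [← mul_assoc, hfd, hfa]
    have h1 : a * a * (s * s) = e := by
      rw [show a * a * (s * s) = a * (a * s) * s by noncomm_ring, hed, hae, hed]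
    have h2 : s * s * (a * a) = f := by
      rw [show s * s * (a * a) = s * (s * (a * a)) by noncomm_ring, hsaa, hfd]
    have hfe : f * e = e := by rw [← hed, ← mul_assoc, hfa, hed]
    have hfe' : f * e = f := by
      rw [show f * e = s * (a * e) by rw [← hfd, mul_assoc], hae, hfd]
    have hef : f = e := hfe'.symm.trans hfe
    refine ⟨(1 - e) * y, ?_⟩
    have hbcomm : b * (1 - e) = (1 - e) * b := by
      rw [mul_sub, sub_mul, mul_one, one_mul, hec b]
    have hb : b * ((1 - e) * y) = (1 - e) * (b * y) := by
      rw [← mul_assoc, hbcomm, mul_assoc]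
    have hbe : (1 - e) * (b * y) = 1 - e := by
      have h3 : (1 - e) * (a * x) = 0 := by
        rw [← mul_assoc, sub_mul, one_mul, hea, sub_self, zero_mul]
      have h4 := congrArg (fun t => (1 - e) * t) hxy
      simp only [mul_add, mul_one] at h4
      rw [h3, zero_add] at h4
      exact h4
    rw [hb, hbe]
    have haae : a * a * e = a * a := by rw [mul_assoc, hae]
    have heaa : e * (a * a) = a * a := by rw [hec (a * a), haae]
    have hese : e * (s * s * e) = s * s * e := by
      rw [hec (s * s * e), mul_assoc, hee]
    have hA : a * a * (s * s * e) = e := by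
      rw [← mul_assoc, h1, hee]
    have hB : s * s * e * (a * a) = e := by
      rw [mul_assoc, heaa, h2, hef]
    have t3 : (1 - e) * (1 - e) = 1 - e := by
      rw [sub_mul, one_mul, mul_sub, mul_one, hee, sub_self, sub_zero]
    have huv : (a ^ 2 + (1 - e)) * (s * s * e + (1 - e)) = 1 := by
      have expand : (a * a + (1 - e)) * (s * s * e + (1 - e)) =
          a * a * (s * s * e) + a * a * (1 - e) + (1 - e) * (s * s * e) + (1 - e) * (1 - e) := by
        noncomm_ring
      have t1 : a * a * (1 - e) = 0 := by rw [mul_sub, mul_one, haae, sub_self]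
      have t2 : (1 - e) * (s * s * e) = 0 := by rw [sub_mul, one_mul, hese, sub_self]
      rw [pow_two, expand, hA, t1, t2, t3]
      abel
    have hvu : (s * s * e + (1 - e)) * (a ^ 2 + (1 - e)) = 1 := by
      have expand : (s * s * e + (1 - e)) * (a * a + (1 - e)) =
          s * s * e * (a * a) + s * s * e * (1 - e) + (1 - e) * (a * a) + (1 - e) * (1 - e) := by
        noncomm_ring
      have t1 : s * s * e * (1 - e) = 0 := by
        rw [mul_sub, mul_one, mul_assoc (s * s) e e, hee, sub_self]
      have t2 : (1 - e) * (a * a) = 0 := by rw [sub_mul, one_mul, heaa, sub_self]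
      rw [pow_two, expand, hB, t1, t2, t3]
      abel
    exact ⟨⟨a ^ 2 + (1 - e), s * s * e + (1 - e), huv, hvu⟩, rfl⟩
end

section
/- Let I be a regular ideal of a ring R. Then I is square stable if and only if whenever aR + bR = R with a ∈ 1 + I and b ∈ R, there exists y ∈ R such that a² + by is a unit of R. -/
section Aux

variable {R : Type*} [Ring R]

/-- In a square stable regular ideal, every element `w` satisfies `w = w * w * s`. -/
private lemma aux_sq (I : TwoSidedIdeal R) (hI : RegularIdeal I) (hSS : SquareStable I)
    (w : R) (hw : w ∈ I) : ∃ s : R, w = w * w * s := by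
  obtain ⟨z, hz⟩ := hI w hw
  obtain ⟨Y, hY⟩ := hSS w hw (1 - w * z) ⟨z, 1, by noncomm_ring⟩
  obtain ⟨u, hu⟩ := hY
  have h1 : (w * z) * (u : R) = w * w := by
    rw [hu, pow_two]
    calc (w * z) * (w * w + (1 - w * z) * Y)
        = (w * z * w) * w + (w * z) * Y - ((w * z * w) * z) * Y := by noncomm_ring
      _ = w * w + (w * z) * Y - (w * z) * Y := by rw [← hz]
      _ = w * w := by noncomm_ring
  refine ⟨(↑u⁻¹ : R) * w, ?_⟩
  calc w = w * z * w := hz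
    _ = (w * z) * ((u : R) * (↑u⁻¹ : R)) * w := by rw [Units.mul_inv, mul_one]
    _ = ((w * z) * (u : R)) * ((↑u⁻¹ : R) * w) := by noncomm_ring
    _ = (w * w) * ((↑u⁻¹ : R) * w) := by rw [h1]

/-- A square stable regular ideal contains no nonzero square-zero elements. -/
private lemma aux_nil (I : TwoSidedIdeal R) (hI : RegularIdeal I) (hSS : SquareStable I)
    (n : R) (hn : n ∈ I) (h2 : n * n = 0) : n = 0 := by
  obtain ⟨s, hs⟩ := aux_sq I hI hSS n hn
  rw [hs, h2, zero_mul]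

/-- Idempotents of a square stable regular ideal are central. -/
private lemma aux_cent (I : TwoSidedIdeal R) (hI : RegularIdeal I) (hSS : SquareStable I)
    (e : R) (he : e ∈ I) (hee : e * e = e) : ∀ r : R, e * r = r * e := by
  intro r
  have k1 : (1 - e) * e = 0 := by rw [sub_mul, one_mul, hee, sub_self]
  have k2 : e * (1 - e) = 0 := by rw [mul_sub, mul_one, hee, sub_self]
  have m1 : (e * r) * (1 - e) = 0 := by
    apply aux_nil I hI hSS
    · have : (e * r) * (1 - e) = e * r - e * r * e := by noncomm_ring
      rw [this]
      exact I.sub_mem (I.mul_mem_right _ _ he) (I.mul_mem_right _ _ (I.mul_mem_right _ _ he))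
    · calc ((e * r) * (1 - e)) * ((e * r) * (1 - e))
          = (e * r) * (((1 - e) * e) * (r * (1 - e))) := by noncomm_ring
        _ = 0 := by rw [k1, zero_mul, mul_zero]
  have m2 : (1 - e) * (r * e) = 0 := by
    apply aux_nil I hI hSS
    · have : (1 - e) * (r * e) = r * e - e * (r * e) := by noncomm_ring
      rw [this]
      exact I.sub_mem (I.mul_mem_left _ _ he) (I.mul_mem_left _ _ (I.mul_mem_left _ _ he))
    · calc ((1 - e) * (r * e)) * ((1 - e) * (r * e))
          = (1 - e) * ((r * (e * (1 - e))) * (r * e)) := by noncomm_ring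
        _ = 0 := by rw [k2, mul_zero, zero_mul, mul_zero]
  -- from m1 : e*r = e*r*e ; from m2 : r*e = e*(r*e)
  have h1 : e * r = (e * r) * e := by
    have := sub_eq_zero.mpr m1.symm
    calc e * r = (e * r) * (1 - e) + (e * r) * e := by noncomm_ring
      _ = 0 + (e * r) * e := by rw [m1]
      _ = (e * r) * e := by rw [zero_add]
  have h2 : r * e = e * (r * e) := by
    calc r * e = (1 - e) * (r * e) + e * (r * e) := by noncomm_ring
      _ = 0 + e * (r * e) := by rw [m2]
      _ = e * (r * e) := by rw [zero_add]
  calc e * r = (e * r) * e := h1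
    _ = e * (r * e) := by rw [mul_assoc]
    _ = r * e := h2.symm

end Aux

theorem stmt18 {R : Type*} [Ring R] (I : TwoSidedIdeal R) (hI : RegularIdeal I) :
    SquareStable I ↔
      ∀ a b : R, a - 1 ∈ I → (∃ x y : R, a * x + b * y = 1) →
        ∃ y : R, IsUnit (a ^ 2 + b * y) := by
  constructor
  · -- forward direction
    intro hSS a b ha hab
    obtain ⟨x, y, hxy⟩ := hab
    obtain ⟨z, hz⟩ := hI (a - 1) ha
    obtain ⟨e, hedef⟩ : ∃ e : R, e = (a - 1) * z := ⟨_, rfl⟩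
    have heI : e ∈ I := by rw [hedef]; exact I.mul_mem_right _ _ ha
    have hee : e * e = e := by
      calc e * e = ((a - 1) * z * (a - 1)) * z := by rw [hedef]; noncomm_ring
        _ = (a - 1) * z := by rw [← hz]
        _ = e := hedef.symm
    have hcent : ∀ r : R, e * r = r * e := aux_cent I hI hSS e heI hee
    have hei : e * (a - 1) = a - 1 := by
      calc e * (a - 1) = (a - 1) * z * (a - 1) := by rw [hedef]
        _ = a - 1 := hz.symm
    have hcI : e * a ∈ I := I.mul_mem_right _ _ heI
    have hcomax : (e * a) * x + (e * (b * y) + (1 - e)) * 1 = 1 := by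
      have h2 : e * (a * x) + e * (b * y) = e := by
        rw [← mul_add, hxy, mul_one]
      calc (e * a) * x + (e * (b * y) + (1 - e)) * 1
          = (e * (a * x) + e * (b * y)) + (1 - e) := by noncomm_ring
        _ = e + (1 - e) := by rw [h2]
        _ = 1 := by noncomm_ring
    obtain ⟨Y, hY⟩ := hSS (e * a) hcI (e * (b * y) + (1 - e)) ⟨x, 1, hcomax⟩
    obtain ⟨u, hu⟩ := hY
    -- the element e * u + (1 - e) is a unit since e is central
    have hcomm : ∀ v : R, (e * v) * e = e * v := by
      intro v
      calc (e * v) * e = e * (v * e) := by rw [mul_assoc]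
        _ = e * (e * v) := by rw [← hcent v]
        _ = (e * e) * v := by rw [← mul_assoc]
        _ = e * v := by rw [hee]
  -- key multiplication lemma
    have key : ∀ v v' : R, v * v' = 1 → (e * v + (1 - e)) * (e * v' + (1 - e)) = 1 := by
      intro v v' hvv
      have t1 : (e * v) * (e * v') = e := by
        calc (e * v) * (e * v') = ((e * v) * e) * v' := by noncomm_ring
          _ = (e * v) * v' := by rw [hcomm v]
          _ = e * (v * v') := by rw [mul_assoc]
          _ = e := by rw [hvv, mul_one]
      have t2 : (e * v) * (1 - e) = 0 := by
        calc (e * v) * (1 - e) = e * v - (e * v) * e := by noncomm_ring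
          _ = e * v - e * v := by rw [hcomm v]
          _ = 0 := by rw [sub_self]
      have t3 : (1 - e) * (e * v') = 0 := by
        calc (1 - e) * (e * v') = ((1 - e) * e) * v' := by rw [mul_assoc]
          _ = 0 := by rw [sub_mul, one_mul, hee, sub_self, zero_mul]
      calc (e * v + (1 - e)) * (e * v' + (1 - e))
          = (e * v) * (e * v') + (e * v) * (1 - e) + (1 - e) * (e * v')
              + (1 - e - (e - e * e)) := by noncomm_ring
        _ = e + 0 + 0 + (1 - e - (e - e * e)) := by rw [t1, t2, t3]
        _ = e + 0 + 0 + (1 - e - (e - e)) := by rw [hee]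
        _ = 1 := by noncomm_ring
    have hVunit : IsUnit (e * (u : R) + (1 - e)) :=
      ⟨⟨e * (u : R) + (1 - e), e * (↑u⁻¹ : R) + (1 - e),
        key _ _ (Units.mul_inv u), key _ _ (Units.inv_mul u)⟩, rfl⟩
    refine ⟨y * (e * Y), ?_⟩
    have hea : e * a = a - 1 + e := by
      have : e * a = e * (a - 1) + e := by noncomm_ring
      rw [this, hei]
    have hga : (1 - e) * a = 1 - e := by
      calc (1 - e) * a = a - e * a := by noncomm_ring
        _ = a - (a - 1 + e) := by rw [hea]
        _ = 1 - e := by noncomm_ring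
    have hsq : e * ((e * a) * (e * a)) + (1 - e) = a * a := by
      have s1 : e * ((e * a) * (e * a)) = e * (a * a) := by
        calc e * ((e * a) * (e * a)) = (e * e) * ((a * e) * a) := by noncomm_ring
          _ = (e * e) * ((e * a) * a) := by rw [← hcent a]
          _ = ((e * e) * e) * (a * a) := by noncomm_ring
          _ = e * (a * a) := by rw [hee, hee]
      have s2 : (1 - e) * (a * a) = 1 - e := by
        rw [← mul_assoc, hga, hga]
      calc e * ((e * a) * (e * a)) + (1 - e)
          = e * (a * a) + (1 - e) * (a * a) := by rw [s1, s2]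
        _ = a * a := by noncomm_ring
    have hfin : e * (u : R) + (1 - e) = a ^ 2 + b * (y * (e * Y)) := by
      rw [hu, pow_two, pow_two]
      have expand : e * ((e * a) * (e * a) + (e * (b * y) + (1 - e)) * Y) + (1 - e)
          = (e * ((e * a) * (e * a)) + (1 - e)) + ((e * e) * ((b * y) * Y)
              + (e - e * e) * Y) := by noncomm_ring
      rw [expand, hsq, hee, sub_self, zero_mul, add_zero]
      have : e * ((b * y) * Y) = b * (y * (e * Y)) := by
        calc e * ((b * y) * Y) = (e * (b * y)) * Y := by rw [← mul_assoc]
          _ = ((b * y) * e) * Y := by rw [hcent (b * y)]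
          _ = b * (y * (e * Y)) := by noncomm_ring
      rw [this]
    exact hfin ▸ hVunit
  · -- backward direction
    intro hcond a ha b hab
    obtain ⟨x, y, hxy⟩ := hab
    have hABI : a * (b * y) ∈ I := I.mul_mem_right _ _ ha
    obtain ⟨w, hw⟩ := hI (a * (b * y)) hABI
    -- hw : a*(b*y) = a*(b*y)*w*(a*(b*y))
    set n : R := 1 - w * (a * (b * y)) with hn
    have hAn : a * (b * y) * n = 0 := by
      rw [hn]
      calc a * (b * y) * (1 - w * (a * (b * y)))
          = a * (b * y) - a * (b * y) * w * (a * (b * y)) := by noncomm_ring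
        _ = 0 := by rw [← hw, sub_self]
    set a' : R := a + (b * y) * n with ha'
    have h1 : a' - 1 ∈ I := by
      have heq : a' - 1 = a - a * x - (b * y) * (w * (a * (b * y))) := by
        rw [ha', hn]
        calc a + (b * y) * (1 - w * (a * (b * y))) - 1
            = (a * x + b * y) + (a - a * x - (b * y) * (w * (a * (b * y)))) - 1 := by
              noncomm_ring
          _ = a - a * x - (b * y) * (w * (a * (b * y))) := by rw [hxy]; noncomm_ring
      rw [heq]
      exact I.sub_mem (I.sub_mem ha (I.mul_mem_right _ _ ha))
        (I.mul_mem_left _ _ (I.mul_mem_left _ _ hABI))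
    have hcx : a' * x + (b * y) * (1 - n * x) = 1 := by
      rw [ha']
      calc (a + (b * y) * n) * x + (b * y) * (1 - n * x) = a * x + b * y := by noncomm_ring
        _ = 1 := hxy
    obtain ⟨Y, hY⟩ := hcond a' (b * y) h1 ⟨x, 1 - n * x, hcx⟩
    refine ⟨y * (n * a' + Y), ?_⟩
    have hfin : a' ^ 2 + (b * y) * Y = a ^ 2 + b * (y * (n * a' + Y)) := by
      rw [pow_two, pow_two, ha']
      calc (a + (b * y) * n) * (a + (b * y) * n) + (b * y) * Y
          = a * a + a * (b * y) * n
              + b * (y * (n * (a + (b * y) * n) + Y)) := by noncomm_ring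
        _ = a * a + 0 + b * (y * (n * (a + (b * y) * n) + Y)) := by rw [hAn]
        _ = a * a + b * (y * (n * (a + (b * y) * n) + Y)) := by rw [add_zero]
    exact hfin ▸ hY
end

section
/- Let I be a regular ideal of a ring R. Then the following are equivalent: (1) I is square stable; (2) every element of I is strongly regular; (3) every element of 1 + I is strongly regular. -/
section Helpers
variable {R : Type*} [Ring R] {I : TwoSidedIdeal R}

/-- In a "reduced" ideal, idempotents of the ideal are central. -/
lemma red_central (Red : ∀ a ∈ I, a * a = 0 → a = 0) {e : R} (he : e ∈ I)
    (hee : e * e = e) (r : R) : e * r = r * e := by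
  have ht : e * r - e * r * e = 0 := by
    apply Red _ (I.sub_mem (I.mul_mem_right e r he) (I.mul_mem_right _ e (I.mul_mem_right e r he)))
    have h2 : (e * r - e * r * e) * e = 0 := by
      calc (e * r - e * r * e) * e = e*r*e - (e*r)*(e*e) := by noncomm_ring
        _ = 0 := by rw [hee]; noncomm_ring
    calc (e * r - e * r * e) * (e * r - e * r * e)
        = ((e * r - e * r * e) * e) * (r - r * e) := by noncomm_ring
      _ = 0 := by rw [h2, zero_mul]
  have hs : r * e - e * r * e = 0 := by
    apply Red _ (I.sub_mem (I.mul_mem_left r e he) (I.mul_mem_right _ e (I.mul_mem_right e r he)))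
    have h2 : e * (r * e - e * r * e) = 0 := by
      calc e * (r * e - e * r * e) = e*r*e - (e*e)*(r*e) := by noncomm_ring
        _ = 0 := by rw [hee]; noncomm_ring
    calc (r * e - e * r * e) * (r * e - e * r * e)
        = (r - e*r) * (e * (r * e - e * r * e)) := by noncomm_ring
      _ = 0 := by rw [h2, mul_zero]
  rw [sub_eq_zero.mp ht]
  exact (sub_eq_zero.mp hs).symm

/-- Master lemma: in a regular reduced ideal, each element has a commuting
inner inverse whose associated idempotent is central. -/
lemma master (hI : RegularIdeal I) (Red : ∀ a ∈ I, a * a = 0 → a = 0) {a : R} (ha : a ∈ I) :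
    ∃ z e : R, a = a * z * a ∧ e = a * z ∧ e = z * a ∧ e * e = e ∧
      (∀ r, e * r = r * e) ∧ e * a = a ∧ a * e = a := by
  obtain ⟨z, hz⟩ := hI a ha
  have hee : (a*z) * (a*z) = a*z := by rw [← mul_assoc, ← hz]
  have heI : a*z ∈ I := I.mul_mem_right a z ha
  have hc := red_central Red heI hee
  have hea : (a*z) * a = a := hz.symm
  have hae : a * (a*z) = a := by rw [← hc a]; exact hz.symm
  have hff : (z*a) * (z*a) = z*a := by rw [mul_assoc, ← mul_assoc a z a, ← hz]
  have hfI : z*a ∈ I := I.mul_mem_left z a ha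
  have hfc := red_central Red hfI hff
  have haf : a * (z*a) = a := by rw [← mul_assoc, ← hz]
  have hef : a*z = z*a := by
    have h1 : a*z = (a*z)*(z*a) := by
      calc a*z = (a*(z*a))*z := by rw [haf]
        _ = a*((z*a)*z) := by noncomm_ring
        _ = a*(z*(z*a)) := by rw [hfc z]
        _ = (a*z)*(z*a) := by noncomm_ring
    have h2 : z*a = (a*z)*(z*a) := by
      calc z*a = z*((a*z)*a) := by rw [hea]
        _ = (z*(a*z))*a := by noncomm_ring
        _ = ((a*z)*z)*a := by rw [← hc z]
        _ = (a*z)*(z*a) := by noncomm_ring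
    rw [h1, ← h2]
  exact ⟨z, a*z, hz, rfl, hef, hee, hc, hea, hae⟩

lemma sreg_of_red (hI : RegularIdeal I) (Red : ∀ a ∈ I, a * a = 0 → a = 0) :
    ∀ a ∈ I, IsStronglyRegularElem a := by
  intro a ha
  obtain ⟨z, e, hz, he1, he2, hee, hc, hea, hae⟩ := master hI Red ha
  constructor
  · exact ⟨z, by rw [pow_two, mul_assoc, ← he1, hae]⟩
  · exact ⟨z, by rw [pow_two, ← mul_assoc, ← he2, hea]⟩

lemma red_of_sreg (h2 : ∀ a ∈ I, IsStronglyRegularElem a) :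
    ∀ a ∈ I, a * a = 0 → a = 0 := by
  intro a ha haa
  obtain ⟨⟨x, hx⟩, -⟩ := h2 a ha
  rw [hx, pow_two, haa, zero_mul]

lemma red_of_sq (hI : RegularIdeal I) (h1 : SquareStable I) :
    ∀ a ∈ I, a * a = 0 → a = 0 := by
  intro a ha haa
  obtain ⟨z, hz⟩ := hI a ha
  obtain ⟨y, hu⟩ := h1 a ha (1 - a*z) ⟨z, 1, by noncomm_ring⟩
  obtain ⟨u, hu'⟩ := hu
  have hee : (a*z)*(a*z) = a*z := by rw [← mul_assoc, ← hz]
  have key : (a*z) * (a^2 + (1 - a*z)*y) = 0 := by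
    have k1 : (a*z)*(a^2) = 0 := by
      calc (a*z)*a^2 = ((a*z)*a)*a := by rw [pow_two]; noncomm_ring
        _ = a*a := by rw [← hz]
        _ = 0 := haa
    have k2 : (a*z)*((1-a*z)*y) = 0 := by
      calc (a*z)*((1-a*z)*y) = ((a*z) - (a*z)*(a*z))*y := by noncomm_ring
        _ = 0 := by rw [hee, sub_self, zero_mul]
    calc (a*z)*(a^2 + (1-a*z)*y) = (a*z)*a^2 + (a*z)*((1-a*z)*y) := by rw [mul_add]
      _ = 0 := by rw [k1, k2, add_zero]
  have haz : a*z = 0 := by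
    have h0 : (a*z) * (u : R) = 0 := by rw [hu']; exact key
    calc a*z = ((a*z) * u) * (↑u⁻¹ : R) := by rw [mul_assoc, Units.mul_inv, mul_one]
      _ = 0 := by rw [h0, zero_mul]
  calc a = a*z*a := hz
    _ = 0 := by rw [haz, zero_mul]

lemma core_of_p3 (h3 : ∀ a : R, a - 1 ∈ I → IsStronglyRegularElem a)
    {E F B : R} (hE : E ∈ I) (hF : F ∈ I) (hB : B ∈ I)
    (hEE : E*E = E) (hFF : F*F = F) (hEB : E*B = B) (hBF : B*F = B)
    (hBE : B*E = 0) (hFB : F*B = 0) (hFE : F*E = 0) (hBB : B*B = 0) :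
    B = E*F := by
  have hmem : (1 - E - F + B) - 1 ∈ I := by
    have h : (1 - E - F + B) - 1 = B - (E + F) := by noncomm_ring
    rw [h]; exact I.sub_mem hB (I.add_mem hE hF)
  have hm2 : (1 - E - F + B)*(1 - E - F + B) = 1 - E - F + E*F := by
    have expand : (1 - E - F + B)*(1 - E - F + B) =
        1 - E - F + B - E + E*E + E*F - E*B - F + F*E + F*F - F*B
          + B - B*E - B*F + B*B := by noncomm_ring
    rw [expand, hEE, hEB, hFE, hFF, hFB, hBE, hBF, hBB]
    noncomm_ring
  have hEFE : (E*F)*E = 0 := by rw [mul_assoc, hFE, mul_zero]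
  have hEFF : (E*F)*F = E*F := by rw [mul_assoc, hFF]
  have hEFB : (E*F)*B = 0 := by rw [mul_assoc, hFB, mul_zero]
  have hpm : (1 - E - F + E*F)*(1 - E - F + B) = 1 - E - F + E*F := by
    have expand : (1 - E - F + E*F)*(1 - E - F + B) =
        1 - E - F + B - E + E*E + E*F - E*B - F + F*E + F*F - F*B
          + E*F - (E*F)*E - (E*F)*F + (E*F)*B := by noncomm_ring
    rw [expand, hEE, hEB, hFE, hFF, hFB, hEFE, hEFF, hEFB]
    noncomm_ring
  have hpp : (1 - E - F + E*F)*(1 - E - F + E*F) = 1 - E - F + E*F := by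
    calc (1 - E - F + E*F)*(1 - E - F + E*F)
        = (1 - E - F + E*F)*((1 - E - F + B)*(1 - E - F + B)) := by rw [hm2]
      _ = ((1 - E - F + E*F)*(1 - E - F + B))*(1 - E - F + B) := by rw [mul_assoc]
      _ = 1 - E - F + E*F := by rw [hpm, hpm]
  obtain ⟨⟨g, hg⟩, -⟩ := h3 _ hmem
  have h1 : (1 - E - F + B) = (1 - E - F + E*F)*g := by
    rw [hg, pow_two, hm2]
  have h2 : (1 - E - F + E*F)*(1 - E - F + B) = (1 - E - F + B) := by
    rw [h1, ← mul_assoc, hpp]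
  have h3' : (1 - E - F) + B = (1 - E - F) + E*F := h2.symm.trans hpm
  exact add_left_cancel h3'

lemma red_of_p3 (hI : RegularIdeal I)
    (h3 : ∀ a : R, a - 1 ∈ I → IsStronglyRegularElem a) :
    ∀ a ∈ I, a * a = 0 → a = 0 := by
  intro b hb hbb
  obtain ⟨z, hz⟩ := hI b hb
  have hE : b*z ∈ I := I.mul_mem_right b z hb
  have hF : z*b ∈ I := I.mul_mem_left z b hb
  have hEE : (b*z)*(b*z) = b*z := by rw [← mul_assoc, ← hz]
  have hFF : (z*b)*(z*b) = z*b := by rw [mul_assoc, ← mul_assoc b z b, ← hz]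
  have hEB : (b*z)*b = b := hz.symm
  have hBF : b*(z*b) = b := by rw [← mul_assoc, ← hz]
  have hBE : b*(b*z) = 0 := by rw [← mul_assoc, hbb, zero_mul]
  have hFB : (z*b)*b = 0 := by rw [mul_assoc, hbb, mul_zero]
  have hFE : (z*b)*(b*z) = 0 := by rw [mul_assoc, ← mul_assoc b b z, hbb, zero_mul, mul_zero]
  have h1 : b = (b*z)*(z*b) := core_of_p3 h3 hE hF hb hEE hFF hEB hBF hBE hFB hFE hbb
  have h2 : b = (b*z)*(z*b + b) := by
    apply core_of_p3 h3 hE (I.add_mem hF hb) hb hEE _ hEB _ hBE _ _ hbb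
    · rw [add_mul, mul_add, mul_add, hFF, hFB, hBF, hbb]; abel
    · rw [mul_add, hBF, hbb, add_zero]
    · rw [add_mul, hFB, hbb, add_zero]
    · rw [add_mul, hFE, hBE, add_zero]
  have h0 : (b*z)*(z*b) = 0 := by
    have h2' := h2
    rw [mul_add, hEB] at h2'
    exact right_eq_add.mp h2'
  rw [h1, h0]

lemma sq_of_sreg (hI : RegularIdeal I) (h2 : ∀ a ∈ I, IsStronglyRegularElem a) :
    SquareStable I := by
  have Red := red_of_sreg h2
  intro a ha b hab
  obtain ⟨x, y, hxy⟩ := hab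
  obtain ⟨z, e, hz, he1, he2, hee, hc, hea, hae⟩ := master hI Red ha
  refine ⟨(1-e)*y, ?_⟩
  have h1ea : (1-e)*a = 0 := by rw [sub_mul, one_mul, hea, sub_self]
  have hby : b*((1-e)*y) = 1 - e := by
    have hby' : b*y = 1 - a*x := by rw [← hxy]; noncomm_ring
    calc b*((1-e)*y) = (b*(1-e))*y := by rw [mul_assoc]
      _ = ((1-e)*b)*y := by
          rw [show b*(1-e) = (1-e)*b from by rw [mul_sub, sub_mul, mul_one, one_mul, hc b]]
      _ = (1-e)*(b*y) := by rw [mul_assoc]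
      _ = (1-e)*(1 - a*x) := by rw [hby']
      _ = (1-e) - ((1-e)*a)*x := by noncomm_ring
      _ = 1 - e := by rw [h1ea, zero_mul, sub_zero]
  rw [hby]
  have haz2 : a*a*z = a := by rw [mul_assoc, ← he1, hae]
  have hza2 : z*(a*a) = a := by rw [← mul_assoc, ← he2, hea]
  have hea2 : e*(a*a) = a*a := by rw [← mul_assoc, hea]
  have hae2 : (a*a)*e = a*a := by rw [mul_assoc, hae]
  have h1e : (1-e)*e = 0 := by rw [sub_mul, one_mul, hee, sub_self]
  have h11 : (1-e)*(1-e) = 1-e := by rw [mul_sub, mul_one, h1e, sub_zero]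
  have c1 : (a*a)*(z*z*e) = e := by
    calc (a*a)*(z*z*e) = ((a*a*z)*z)*e := by noncomm_ring
      _ = (a*z)*e := by rw [haz2]
      _ = e*e := by rw [← he1]
      _ = e := hee
  have c2 : (a*a)*(1-e) = 0 := by rw [mul_sub, mul_one, hae2, sub_self]
  have c3 : (1-e)*(z*z*e) = 0 := by
    have h : e*(z*z*e) = z*z*e := by rw [hc (z*z*e), mul_assoc (z*z) e e, hee]
    rw [sub_mul, one_mul, h, sub_self]
  have d1 : (z*z*e)*(a*a) = e := by
    calc (z*z*e)*(a*a) = (z*z)*(e*(a*a)) := by noncomm_ring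
      _ = (z*z)*(a*a) := by rw [hea2]
      _ = z*(z*(a*a)) := by noncomm_ring
      _ = z*a := by rw [hza2]
      _ = e := he2.symm
  have d2 : (z*z*e)*(1-e) = 0 := by
    rw [mul_sub, mul_one, mul_assoc (z*z) e e, hee, sub_self]
  have d3 : (1-e)*(a*a) = 0 := by rw [sub_mul, one_mul, hea2, sub_self]
  refine ⟨⟨a^2 + (1-e), z*z*e + (1-e), ?_, ?_⟩, rfl⟩
  · calc (a^2 + (1-e)) * (z*z*e + (1-e))
        = (a*a)*(z*z*e) + (a*a)*(1-e) + ((1-e)*(z*z*e) + (1-e)*(1-e)) := by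
          rw [pow_two]; noncomm_ring
      _ = e + 0 + (0 + (1-e)) := by rw [c1, c2, c3, h11]
      _ = 1 := by noncomm_ring
  · calc (z*z*e + (1-e)) * (a^2 + (1-e))
        = (z*z*e)*(a*a) + (z*z*e)*(1-e) + ((1-e)*(a*a) + (1-e)*(1-e)) := by
          rw [pow_two]; noncomm_ring
      _ = e + 0 + (0 + (1-e)) := by rw [d1, d2, d3, h11]
      _ = 1 := by noncomm_ring

lemma p3_of_p2 (hI : RegularIdeal I) (h2 : ∀ a ∈ I, IsStronglyRegularElem a) :
    ∀ a : R, a - 1 ∈ I → IsStronglyRegularElem a := by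
  intro a ha
  have Red := red_of_sreg h2
  obtain ⟨z, e, hz, he1, he2, hee, hc, hec, hce⟩ := master hI Red ha
  have heI : e ∈ I := by rw [he1]; exact I.mul_mem_right _ z ha
  obtain ⟨⟨p, hp⟩, ⟨q, hq⟩⟩ := h2 (a*e) (I.mul_mem_left a e heI)
  have hXe : (a*e)*e = a*e := by rw [mul_assoc, hee]
  have heX : e*(a*e) = a*e := by rw [hc (a*e)]; exact hXe
  have hsplit : a = a*e + (1-e) := by
    calc a = ((a-1)*e) + 1 := by rw [hce]; noncomm_ring
      _ = a*e + (1-e) := by noncomm_ring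
  have hcomm1e : ∀ r : R, (1-e)*r = r*(1-e) := fun r => by
    rw [sub_mul, mul_sub, one_mul, mul_one, hc r]
  have h1e : (1-e)*e = 0 := by rw [sub_mul, one_mul, hee, sub_self]
  have h11 : (1-e)*(1-e) = 1-e := by rw [mul_sub, mul_one, h1e, sub_zero]
  have hX1 : (a*e)*(1-e) = 0 := by rw [mul_sub, mul_one, hXe, sub_self]
  have h1X : (1-e)*(a*e) = 0 := by rw [hcomm1e (a*e)]; exact hX1
  have ha2 : a^2 = (a*e)^2 + (1-e) := by
    calc a^2 = (a*e + (1-e))*(a*e + (1-e)) := by rw [pow_two, ← hsplit]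
      _ = (a*e)*(a*e) + (a*e)*(1-e) + ((1-e)*(a*e) + (1-e)*(1-e)) := by noncomm_ring
      _ = (a*e)^2 + (1-e) := by rw [hX1, h1X, h11, pow_two]; noncomm_ring
  constructor
  · refine ⟨p*e + (1-e), ?_⟩
    have g1 : (a*e)^2*(p*e) = a*e := by
      calc (a*e)^2*(p*e) = ((a*e)^2*p)*e := by noncomm_ring
        _ = (a*e)*e := by rw [← hp]
        _ = a*e := hXe
    have g2 : (a*e)^2*(1-e) = 0 := by
      rw [mul_sub, mul_one, show (a*e)^2*e = (a*e)^2 from by rw [pow_two, mul_assoc, hXe],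
        sub_self]
    have g3 : (1-e)*(p*e) = 0 := by
      rw [hcomm1e (p*e), mul_sub, mul_one, mul_assoc, hee, sub_self]
    rw [ha2]
    calc a = a*e + 0 + (0 + (1-e)) := by rw [add_zero, zero_add]; exact hsplit
      _ = (a*e)^2*(p*e) + (a*e)^2*(1-e) + ((1-e)*(p*e) + (1-e)*(1-e)) := by
          rw [g1, g2, g3, h11]
      _ = ((a*e)^2 + (1-e)) * (p*e + (1-e)) := by noncomm_ring
  · refine ⟨e*q + (1-e), ?_⟩
    have k1 : (e*q)*(a*e)^2 = a*e := by
      calc (e*q)*(a*e)^2 = e*(q*(a*e)^2) := by noncomm_ring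
        _ = e*(a*e) := by rw [← hq]
        _ = a*e := heX
    have k2 : (e*q)*(1-e) = 0 := by
      calc (e*q)*(1-e) = q*(e*(1-e)) := by rw [hc q]; noncomm_ring
        _ = 0 := by rw [mul_sub, mul_one, hee, sub_self, mul_zero]
    have k3 : (1-e)*(a*e)^2 = 0 := by rw [pow_two, ← mul_assoc, h1X, zero_mul]
    rw [ha2]
    calc a = a*e + 0 + (0 + (1-e)) := by rw [add_zero, zero_add]; exact hsplit
      _ = (e*q)*(a*e)^2 + (e*q)*(1-e) + ((1-e)*(a*e)^2 + (1-e)*(1-e)) := by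
          rw [k1, k2, k3, h11]
      _ = (e*q + (1-e)) * ((a*e)^2 + (1-e)) := by noncomm_ring

end Helpers

theorem stmt19 {R : Type*} [Ring R] (I : TwoSidedIdeal R) (hI : RegularIdeal I) :
    (SquareStable I ↔ ∀ a ∈ I, IsStronglyRegularElem a) ∧
    ((∀ a ∈ I, IsStronglyRegularElem a) ↔ ∀ a : R, a - 1 ∈ I → IsStronglyRegularElem a) := by
  refine ⟨⟨fun h1 => sreg_of_red hI (red_of_sq hI h1), fun h2 => sq_of_sreg hI h2⟩,
    ⟨fun h2 => p3_of_p2 hI h2, fun h3 => sreg_of_red hI (red_of_p3 hI h3)⟩⟩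
end
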